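/- arXiv:2207.08043 — 11 statements merged into one kernel-verified Lean document; each statement's English description precedes it below -/
import Mathlib

section
/- Let n ≥ 1 and let x_1 ≤ x_2 ≤ … ≤ x_n be points in [0,1]. For x ∈ [0,1], let y_1 ≤ … ≤ y_{n+1} denote the nondecreasing rearrangement of {x_1,…,x_n,x}. Then the function x ↦ (n+1)²·W₂²((1/(n+1))∑_{k=1}^{n+1} δ_{y_k}, dx) − F(x) is constant on [0,1], where F(x) = (n+1)x² − x − 2∑_{k=1}^{n} max{x, x_k}. Consequently, a point x ∈ [0,1] minimizes the squared Wasserstein distance of the augmented empirical measure to Lebesgue measure on [0,1] if and only if it minimizes the Kritzinger functional F. -/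
/-- The squared Wasserstein-2 distance between the empirical measure of the
(sorted) points `a 0 ≤ a 1 ≤ … ≤ a (m-1)` and Lebesgue measure on `[0,1]`,
via the formula `∑_{i=1}^m ∫_{(i-1)/m}^{i/m} (x - a_i)^2 dx`. -/
noncomputable def W2sq (m : ℕ) (a : Fin m → ℝ) : ℝ :=
  ∑ i : Fin m, ∫ t in ((i : ℕ) : ℝ) / m..(((i : ℕ) : ℝ) + 1) / m, (t - a i) ^ 2

/-- `y` is the nondecreasing rearrangement of the multiset `s`. -/
def IsSortedRearrangement {m : ℕ} (y : Fin m → ℝ) (s : Multiset ℝ) : Prop :=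
  Monotone y ∧ (↑(List.ofFn y) : Multiset ℝ) = s

lemma msum_ofFn {m : ℕ} (f : Fin m → ℝ) (g : ℝ → ℝ) :
    ((↑(List.ofFn f) : Multiset ℝ).map g).sum = ∑ i, g (f i) := by
  rw [Multiset.map_coe, Multiset.sum_coe, List.map_ofFn, List.sum_ofFn]
  rfl

lemma doubleMax {m : ℕ} (y : Fin m → ℝ) :
    (∑ i, ∑ j, y (max i j)) = ∑ i, (2 * (i.val : ℝ) + 1) * y i := by
  induction m with
  | zero => simp
  | succ m ih =>
    rw [Fin.sum_univ_castSucc (f := fun i => ∑ j, y (max i j)),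
        Fin.sum_univ_castSucc (f := fun i => (2 * (i.val : ℝ) + 1) * y i)]
    have key : ∀ i : Fin m, (∑ j : Fin (m+1), y (max i.castSucc j))
        = (∑ j : Fin m, (y ∘ Fin.castSucc) (max i j)) + y (Fin.last m) := by
      intro i
      rw [Fin.sum_univ_castSucc (f := fun j => y (max i.castSucc j))]
      have e2 : max i.castSucc (Fin.last m) = Fin.last m := max_eq_right (Fin.le_last _)
      rw [e2]
      refine congrArg (· + y (Fin.last m)) (Finset.sum_congr rfl fun j _ => ?_)
      simp only [Function.comp]
      rw [Fin.strictMono_castSucc.monotone.map_max]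
    have key2 : (∑ j : Fin (m+1), y (max (Fin.last m) j)) = ((m : ℝ) + 1) * y (Fin.last m) := by
      rw [Finset.sum_congr rfl (fun j _ => by rw [max_eq_left (Fin.le_last _)])]
      simp [mul_comm]
    rw [Finset.sum_congr rfl (fun i _ => key i), Finset.sum_add_distrib, ih (y ∘ Fin.castSucc),
        key2, Finset.sum_const, Finset.card_univ, Fintype.card_fin]
    simp only [Function.comp, Fin.coe_castSucc, Fin.val_last, nsmul_eq_mul]
    ring

lemma doubleMax' {m : ℕ} (y : Fin m → ℝ) (hy : Monotone y) :
    (∑ i, ∑ j, max (y i) (y j)) = ∑ i, (2 * (i.val : ℝ) + 1) * y i := by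
  rw [← doubleMax y]
  exact Finset.sum_congr rfl fun i _ => Finset.sum_congr rfl fun j _ => (hy.map_max).symm

noncomputable def Dsum (s : Multiset ℝ) : ℝ :=
  (s.map (fun a => (s.map (fun b => max a b)).sum)).sum

lemma Dsum_cons (x : ℝ) (s : Multiset ℝ) :
    Dsum (x ::ₘ s) = x + 2 * (s.map (fun b => max x b)).sum + Dsum s := by
  simp only [Dsum, Multiset.map_cons, Multiset.sum_cons, max_self]
  rw [Multiset.sum_map_add]
  have h2 : (s.map (fun a => max a x)).sum = (s.map (fun b => max x b)).sum := by
    congr 1; exact Multiset.map_congr rfl fun a _ => max_comm a x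
  rw [h2]
  ring

lemma Dsum_ofFn {m : ℕ} (y : Fin m → ℝ) :
    Dsum ↑(List.ofFn y) = ∑ i, ∑ j, max (y i) (y j) := by
  rw [Dsum, msum_ofFn]
  exact Finset.sum_congr rfl fun i _ => msum_ofFn y (fun b => max (y i) b)

lemma integral_sq (u v c : ℝ) : (∫ t in u..v, (t - c)^2) = ((v-c)^3 - (u-c)^3)/3 := by
  rw [intervalIntegral.integral_comp_sub_right (fun t => t^2) c, integral_pow]
  norm_num

lemma W2sq_formula (m : ℕ) (hm : m ≠ 0) (a : Fin m → ℝ) :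
    (m:ℝ)^2 * W2sq m a
      = (m:ℝ)^2/3 - (∑ i, (2*(i.val:ℝ)+1) * a i) + m * ∑ i, a i ^ 2 := by
  have hm' : (m:ℝ) ≠ 0 := Nat.cast_ne_zero.mpr hm
  unfold W2sq
  rw [Finset.mul_sum]
  have per : ∀ i ∈ Finset.univ, (m:ℝ)^2 * ∫ t in ((i : ℕ) : ℝ) / m..(((i : ℕ) : ℝ) + 1) / m, (t - a i)^2
      = (((i.val:ℝ)+1)^3 - (i.val:ℝ)^3)/(3*m) - ((2*(i.val:ℝ)+1) * a i - (m:ℝ) * a i ^2) := by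
    intro i _
    rw [integral_sq]
    field_simp
    ring
  rw [Finset.sum_congr rfl per, Finset.sum_sub_distrib, Finset.sum_sub_distrib, ← Finset.sum_div,
      ← Finset.mul_sum]
  have tel : (∑ i : Fin m, (((i.val:ℝ)+1)^3 - (i.val:ℝ)^3)) = (m:ℝ)^3 := by
    rw [Fin.sum_univ_eq_sum_range (fun k => ((k:ℝ)+1)^3 - (k:ℝ)^3)]
    have e : ∀ k ∈ Finset.range m, ((k:ℝ)+1)^3 - (k:ℝ)^3
        = (fun j : ℕ => ((j:ℝ))^3) (k+1) - (fun j : ℕ => ((j:ℝ))^3) k := by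
      intro k _; push_cast; ring
    rw [Finset.sum_congr rfl e, Finset.sum_range_sub (fun j : ℕ => ((j:ℝ))^3)]
    norm_num
  rw [tel]
  field_simp
  ring

lemma exists_sorted (m : ℕ) (s : Multiset ℝ) (hs : Multiset.card s = m) :
    ∃ y : Fin m → ℝ, IsSortedRearrangement y s := by
  set l := s.sort (· ≤ ·) with hl_def
  have hl : l.length = m := by rw [hl_def, Multiset.length_sort, hs]
  refine ⟨fun i => l.get (Fin.cast hl.symm i), ?_⟩
  have hofn : List.ofFn (fun i : Fin m => l.get (Fin.cast hl.symm i)) = l :=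
    (List.ofFn_congr hl l.get).symm.trans (List.ofFn_get l)
  constructor
  · rw [← List.sortedLE_ofFn_iff, hofn, List.sortedLE_iff_pairwise]
    exact s.pairwise_sort _
  · rw [hofn]
    exact s.sort_eq _

lemma main_identity (n : ℕ) (xs : Fin n → ℝ) (hmono : Monotone xs)
    (x : ℝ) (y : Fin (n+1) → ℝ)
    (hy : IsSortedRearrangement y (x ::ₘ (↑(List.ofFn xs) : Multiset ℝ))) :
    ((n:ℝ)+1)^2 * W2sq (n+1) y - (((n:ℝ)+1) * x^2 - x - 2 * ∑ k, max x (xs k))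
    = ((n:ℝ)+1)^2/3 + ((n:ℝ)+1) * (∑ k, xs k ^ 2) - ∑ k, (2*(k.val:ℝ)+1) * xs k := by
  obtain ⟨hmy, hms⟩ := hy
  have hsum_sq : (∑ i, (y i)^2) = x^2 + ∑ k, (xs k)^2 := by
    have h := congrArg (fun s : Multiset ℝ => (s.map (fun t : ℝ => t^2)).sum) hms
    simp only [Multiset.map_cons, Multiset.sum_cons] at h
    rw [msum_ofFn, msum_ofFn] at h
    exact h
  have hD : (∑ i, (2*(i.val:ℝ)+1) * y i)
      = x + 2 * (∑ k, max x (xs k)) + ∑ k, (2*(k.val:ℝ)+1) * xs k := by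
    have h1 : Dsum ↑(List.ofFn y) = Dsum (x ::ₘ (↑(List.ofFn xs) : Multiset ℝ)) := by rw [hms]
    rw [Dsum_ofFn, doubleMax' y hmy, Dsum_cons, Dsum_ofFn, doubleMax' xs hmono,
        msum_ofFn] at h1
    exact h1
  have hW := W2sq_formula (n+1) (by omega) y
  have hcast : ((n+1 : ℕ):ℝ) = (n:ℝ)+1 := by push_cast; ring
  rw [hcast] at hW
  rw [hW, hsum_sq, hD]
  ring

theorem stmt_0 (n : ℕ) (hn : 1 ≤ n) (xs : Fin n → ℝ) (hmono : Monotone xs)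
    (hmem : ∀ k, xs k ∈ Set.Icc (0 : ℝ) 1) :
    (∃ C : ℝ, ∀ x ∈ Set.Icc (0 : ℝ) 1, ∀ y : Fin (n + 1) → ℝ,
      IsSortedRearrangement y (x ::ₘ (↑(List.ofFn xs) : Multiset ℝ)) →
      ((n : ℝ) + 1) ^ 2 * W2sq (n + 1) y
        - (((n : ℝ) + 1) * x ^ 2 - x - 2 * ∑ k, max x (xs k)) = C) ∧
    (∀ xstar ∈ Set.Icc (0 : ℝ) 1,
      ((∀ ystar : Fin (n + 1) → ℝ,
          IsSortedRearrangement ystar (xstar ::ₘ (↑(List.ofFn xs) : Multiset ℝ)) →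
          ∀ x ∈ Set.Icc (0 : ℝ) 1, ∀ y : Fin (n + 1) → ℝ,
          IsSortedRearrangement y (x ::ₘ (↑(List.ofFn xs) : Multiset ℝ)) →
          W2sq (n + 1) ystar ≤ W2sq (n + 1) y)
        ↔
        (∀ x ∈ Set.Icc (0 : ℝ) 1,
          (((n : ℝ) + 1) * xstar ^ 2 - xstar - 2 * ∑ k, max xstar (xs k)) ≤
          (((n : ℝ) + 1) * x ^ 2 - x - 2 * ∑ k, max x (xs k))))) := by
  have hm2 : (0:ℝ) < ((n:ℝ)+1)^2 := by positivity
  have hcard : ∀ x : ℝ, Multiset.card (x ::ₘ (↑(List.ofFn xs) : Multiset ℝ)) = n + 1 := by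
    intro x; simp
  constructor
  · exact ⟨_, fun x _ y hy => main_identity n xs hmono x y hy⟩
  · intro xstar hxstar
    constructor
    · intro h x hx
      obtain ⟨ys, hys⟩ := exists_sorted (n+1) _ (hcard xstar)
      obtain ⟨yx, hyx⟩ := exists_sorted (n+1) _ (hcard x)
      have hle := h ys hys x hx yx hyx
      have e1 := main_identity n xs hmono xstar ys hys
      have e2 := main_identity n xs hmono x yx hyx
      nlinarith [mul_le_mul_of_nonneg_left hle (le_of_lt hm2)]
    · intro h ys hys x hx y hy
      have e1 := main_identity n xs hmono xstar ys hys
      have e2 := main_identity n xs hmono x y hy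
      have hF := h x hx
      have hmul : ((n:ℝ)+1)^2 * W2sq (n+1) ys ≤ ((n:ℝ)+1)^2 * W2sq (n+1) y := by linarith
      exact le_of_mul_le_mul_left hmul hm2
end

section
/- For each n ≥ 1 there is a constant c_n ∈ ℝ, independent of the point configuration, such that for every choice of points 0 ≤ x_1 ≤ x_2 ≤ … ≤ x_n ≤ 1 one has ∫₀¹ |#{1 ≤ k ≤ n : x_k ≤ x} − n·x|² dx − n²·W₂²((1/n)∑_{k=1}^{n} δ_{x_k}, dx) = c_n. In particular, a configuration minimizes the L²-discrepancy if and only if it minimizes the Wasserstein distance to Lebesgue measure. -/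
/-- The L²-discrepancy `∫₀¹ |#{k : x_k ≤ x} − n·x|² dx` of points `x_1,…,x_n`. -/
noncomputable def L2Disc (n : ℕ) (xs : Fin n → ℝ) : ℝ :=
  ∫ x in (0:ℝ)..1,
    (((Finset.univ.filter (fun k => xs k ≤ x)).card : ℝ) - (n : ℝ) * x) ^ 2

lemma card_filter_val_lt (n j : ℕ) (h : j ≤ n) :
    (Finset.univ.filter (fun k : Fin n => (k : ℕ) < j)).card = j := by
  induction j with
  | zero => simp
  | succ j ih =>
    have hj : j < n := h
    have hins : (Finset.univ.filter (fun k : Fin n => (k : ℕ) < j + 1))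
        = insert (⟨j, hj⟩ : Fin n) (Finset.univ.filter (fun k : Fin n => (k : ℕ) < j)) := by
      ext k
      simp [Nat.lt_succ_iff_lt_or_eq, Fin.ext_iff, or_comm]; omega
    rw [hins, Finset.card_insert_of_notMem (by simp), ih (le_of_lt hj)]

lemma cube_integral (c d e : ℝ) :
    ∫ x in c..d, (x - e) ^ 2 = ((d - e) ^ 3 - (c - e) ^ 3) / 3 := by
  rw [intervalIntegral.integral_comp_sub_right (fun s => s ^ 2) e, integral_pow]
  norm_num

lemma key (n : ℕ) (hn : 1 ≤ n) (xs : Fin n → ℝ) (hm : Monotone xs)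
    (hx : ∀ k, xs k ∈ Set.Icc (0 : ℝ) 1) :
    L2Disc n xs = (n : ℝ) ^ 2 * W2sq n xs := by
  have hn0 : (n : ℝ) ≠ 0 := by positivity
  -- partition points
  set a : ℕ → ℝ := fun j => if j = 0 then 0 else if h : j ≤ n then xs ⟨j - 1, by omega⟩ else 1
    with ha
  have ha0 : a 0 = 0 := by simp [ha]
  have han1 : a (n + 1) = 1 := by
    simp only [ha, Nat.succ_ne_zero, if_false]
    rw [dif_neg (by omega)]
  have hamid : ∀ j : ℕ, 1 ≤ j → (hj : j ≤ n) → a j = xs ⟨j - 1, by omega⟩ := by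
    intro j h1 hj
    simp only [ha]
    rw [if_neg (by omega), dif_pos hj]
  have hasucc : ∀ j : ℕ, (hj : j < n) → a (j + 1) = xs ⟨j, hj⟩ := by
    intro j hj
    rw [hamid (j + 1) (by omega) (by omega)]
    congr 1
  have hstep : ∀ j : ℕ, j ≤ n → a j ≤ a (j + 1) := by
    intro j hj
    rcases Nat.eq_or_lt_of_le hj with h | h
    · subst h
      rw [han1]
      have h0 : 1 ≤ j := by omega
      rw [hamid j h0 le_rfl]; exact (hx _).2
    · rw [hasucc j h]
      rcases Nat.eq_zero_or_pos j with h0 | h0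
      · subst h0; rw [ha0]; exact (hx _).1
      · rw [hamid j h0 (le_of_lt h)]
        exact hm (by simp only [Fin.mk_le_mk, Fin.le_def]; omega)
  -- counting on open subintervals
  have hcount : ∀ j : ℕ, j ≤ n → ∀ x : ℝ, x ∈ Set.Ioo (a j) (a (j + 1)) →
      (Finset.univ.filter (fun k => xs k ≤ x)).card = j := by
    intro j hj x hxmem
    have hfil : (Finset.univ.filter (fun k => xs k ≤ x))
        = (Finset.univ.filter (fun k : Fin n => (k : ℕ) < j)) := by
      ext k
      simp only [Finset.mem_filter, Finset.mem_univ, true_and]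
      constructor
      · intro hk
        by_contra hlt
        push_neg at hlt
        have hjn : j < n := lt_of_le_of_lt hlt k.isLt
        have : x < xs k := by
          calc x < a (j + 1) := hxmem.2
          _ = xs ⟨j, hjn⟩ := hasucc j hjn
          _ ≤ xs k := hm (by simp only [Fin.mk_le_mk, Fin.le_def]; omega)
        linarith
      · intro hk
        have h1 : 1 ≤ j := by omega
        have : xs k ≤ a j := by
          rw [hamid j h1 hj]
          exact hm (by simp only [Fin.mk_le_mk, Fin.le_def]; omega)
        linarith [hxmem.1]
    rw [hfil, card_filter_val_lt n j hj]
  set F : ℝ → ℝ := fun x =>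
    (((Finset.univ.filter (fun k => xs k ≤ x)).card : ℝ) - (n : ℝ) * x) ^ 2 with hF
  -- a.e. equality with the polynomial on each piece
  have hae : ∀ j : ℕ, j ≤ n → ∀ᵐ x : ℝ, x ∈ Set.Ioc (a j) (a (j + 1)) →
      F x = ((j : ℝ) - (n : ℝ) * x) ^ 2 := by
    intro j hj
    have h1 : ∀ᵐ x : ℝ, x ∉ ({a (j + 1)} : Set ℝ) :=
      MeasureTheory.measure_eq_zero_iff_ae_notMem.mp (MeasureTheory.measure_singleton _)
    filter_upwards [h1] with x hx1 hx2
    have : x ∈ Set.Ioo (a j) (a (j + 1)) := by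
      refine ⟨hx2.1, lt_of_le_of_ne hx2.2 ?_⟩
      simpa using hx1
    rw [hF]
    simp only
    rw [hcount j hj x this]
  -- integrability of F on each piece
  have hint : ∀ j : ℕ, j < n + 1 → IntervalIntegrable F MeasureTheory.volume (a j) (a (j + 1)) := by
    intro j hj
    have hj' : j ≤ n := by omega
    rw [intervalIntegrable_iff, Set.uIoc_of_le (hstep j hj')]
    have hG : MeasureTheory.IntegrableOn (fun x : ℝ => ((j : ℝ) - (n : ℝ) * x) ^ 2)
        (Set.Ioc (a j) (a (j + 1))) MeasureTheory.volume := by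
      apply Continuous.integrableOn_Ioc
      continuity
    have haeq : ∀ᵐ x ∂(MeasureTheory.volume.restrict (Set.Ioc (a j) (a (j + 1)))),
        F x = ((j : ℝ) - (n : ℝ) * x) ^ 2 :=
      (MeasureTheory.ae_restrict_iff' measurableSet_Ioc).2 (hae j hj')
    exact hG.congr (Filter.EventuallyEq.symm haeq)
  -- decompose the discrepancy integral
  have hsplit : L2Disc n xs = ∑ j ∈ Finset.range (n + 1), ∫ x in a j..a (j + 1), F x := by
    rw [L2Disc, intervalIntegral.sum_integral_adjacent_intervals hint, ha0, han1]
  have hpiece : ∀ j : ℕ, j ≤ n →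
      (∫ x in a j..a (j + 1), F x)
        = (n : ℝ) ^ 2 * (((a (j + 1) - (j : ℝ) / n) ^ 3 - (a j - (j : ℝ) / n) ^ 3) / 3) := by
    intro j hj
    have h1 : (∫ x in a j..a (j + 1), F x)
        = ∫ x in a j..a (j + 1), ((j : ℝ) - (n : ℝ) * x) ^ 2 := by
      apply intervalIntegral.integral_congr_ae
      rw [Set.uIoc_of_le (hstep j hj)]
      exact hae j hj
    have h2 : ∀ x : ℝ, ((j : ℝ) - (n : ℝ) * x) ^ 2 = (n : ℝ) ^ 2 * (x - (j : ℝ) / n) ^ 2 := by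
      intro x; field_simp; ring
    rw [h1]
    simp_rw [h2]
    rw [intervalIntegral.integral_const_mul, cube_integral]
  rw [hsplit, Finset.sum_congr rfl (fun j hj => hpiece j (Nat.lt_succ_iff.mp (Finset.mem_range.mp hj)))]
  -- compute W2sq
  have hW : W2sq n xs = ∑ i : Fin n,
      (((((i : ℕ) : ℝ) + 1) / n - xs i) ^ 3 - (((i : ℕ) : ℝ) / n - xs i) ^ 3) / 3 := by
    rw [W2sq]
    exact Finset.sum_congr rfl fun i _ => cube_integral _ _ _
  rw [hW, Finset.mul_sum]
  -- telescoping rearrangement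
  have hsub : ∀ j ∈ Finset.range (n + 1),
      (n : ℝ) ^ 2 * (((a (j + 1) - (j : ℝ) / n) ^ 3 - (a j - (j : ℝ) / n) ^ 3) / 3)
        = (n : ℝ) ^ 2 * ((a (j + 1) - (j : ℝ) / n) ^ 3) / 3
          - (n : ℝ) ^ 2 * ((a j - (j : ℝ) / n) ^ 3) / 3 := by
    intro j _; ring
  rw [Finset.sum_congr rfl hsub, Finset.sum_sub_distrib, Finset.sum_range_succ,
    Finset.sum_range_succ']
  rw [han1, ha0]
  have hz1 : (n : ℝ) ^ 2 * ((1 - (n : ℝ) / n) ^ 3) / 3 = 0 := by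
    rw [div_self hn0]; ring
  have hz2 : (n : ℝ) ^ 2 * ((0 - ((0 : ℕ) : ℝ) / n) ^ 3) / 3 = 0 := by
    norm_num
  rw [hz1, hz2, add_zero, add_zero, ← Finset.sum_sub_distrib]
  rw [← Fin.sum_univ_eq_sum_range (fun j =>
    (n : ℝ) ^ 2 * ((a (j + 1) - (j : ℝ) / n) ^ 3) / 3
      - (n : ℝ) ^ 2 * ((a (j + 1) - ((j + 1 : ℕ) : ℝ) / n) ^ 3) / 3)]
  refine Finset.sum_congr rfl fun i _ => ?_
  rw [hasucc i i.isLt]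
  push_cast
  ring

theorem stmt_3 (n : ℕ) (hn : 1 ≤ n) :
    ∃ c : ℝ,
      (∀ xs : Fin n → ℝ, Monotone xs → (∀ k, xs k ∈ Set.Icc (0 : ℝ) 1) →
        L2Disc n xs - (n : ℝ) ^ 2 * W2sq n xs = c) ∧
      (∀ xs : Fin n → ℝ, Monotone xs → (∀ k, xs k ∈ Set.Icc (0 : ℝ) 1) →
        ((∀ ys : Fin n → ℝ, Monotone ys → (∀ k, ys k ∈ Set.Icc (0 : ℝ) 1) →
            L2Disc n xs ≤ L2Disc n ys)
          ↔
        (∀ ys : Fin n → ℝ, Monotone ys → (∀ k, ys k ∈ Set.Icc (0 : ℝ) 1) →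
            W2sq n xs ≤ W2sq n ys))) := by
  have hn2 : (0 : ℝ) < (n : ℝ) ^ 2 := by positivity
  refine ⟨0, fun xs hmo hmem => by rw [key n hn xs hmo hmem]; ring, ?_⟩
  intro xs hmo hmem
  constructor
  · intro h ys hys hysm
    have := h ys hys hysm
    rw [key n hn xs hmo hmem, key n hn ys hys hysm] at this
    exact le_of_mul_le_mul_left this hn2
  · intro h ys hys hysm
    rw [key n hn xs hmo hmem, key n hn ys hys hysm]
    exact mul_le_mul_of_nonneg_left (h ys hys hysm) (le_of_lt hn2)
end

section
/- Let n ≥ 1, let 0 ≤ x_1 ≤ x_2 ≤ … ≤ x_n ≤ 1, and let F(x) = (n+1)x² − x − 2∑_{k=1}^{n} max{x, x_k}. If x* ∈ [0,1] is a global minimizer of F on [0,1], then x* is different from each of x_1,…,x_n, and x* = (2m+1)/(2n+2) for some integer m ≥ 0. -/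
theorem stmt_4 (n : ℕ) (hn : 1 ≤ n) (xs : Fin n → ℝ) (hmono : Monotone xs)
    (hmem : ∀ k, xs k ∈ Set.Icc (0 : ℝ) 1)
    (xstar : ℝ) (hxstar : xstar ∈ Set.Icc (0 : ℝ) 1)
    (hmin : ∀ x ∈ Set.Icc (0 : ℝ) 1,
      ((n : ℝ) + 1) * xstar ^ 2 - xstar - 2 * ∑ k, max xstar (xs k)
        ≤ ((n : ℝ) + 1) * x ^ 2 - x - 2 * ∑ k, max x (xs k)) :
    (∀ k, xstar ≠ xs k) ∧
      ∃ m : ℕ, xstar = (2 * (m : ℝ) + 1) / (2 * (n : ℝ) + 2) := by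
  obtain ⟨hx0, hx1⟩ := hxstar
  classical
  set A : Finset (Fin n) := Finset.univ.filter (fun k => xs k ≤ xstar) with hA
  set B : Finset (Fin n) := Finset.univ.filter (fun k => xs k < xstar) with hB
  have hnpos : (0:ℝ) < (n:ℝ) + 1 := by positivity
  -- generic sum computation
  have sumdiff : ∀ (x : ℝ) (S : Finset (Fin n)),
      (∀ k ∈ S, max x (xs k) = x ∧ max xstar (xs k) = xstar) →
      (∀ k ∉ S, max x (xs k) = xs k ∧ max xstar (xs k) = xs k) →
      (∑ k, max x (xs k)) = (∑ k, max xstar (xs k)) + S.card * (x - xstar) := by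
    intro x S h1 h2
    have key : ∀ k : Fin n,
        max x (xs k) = max xstar (xs k) + (if k ∈ S then x - xstar else 0) := by
      intro k
      by_cases hk : k ∈ S
      · simp only [hk, if_true, (h1 k hk).1, (h1 k hk).2]; ring
      · simp only [hk, if_false, (h2 k hk).1, (h2 k hk).2, add_zero]
    rw [Finset.sum_congr rfl (fun k _ => key k), Finset.sum_add_distrib]
    congr 1
    rw [Finset.sum_ite_mem, Finset.univ_inter, Finset.sum_const, nsmul_eq_mul]
  have hcardA : (A.card : ℝ) ≤ n := by
    have : A.card ≤ n := le_trans (Finset.card_le_univ A) (by simp)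
    exact_mod_cast this
  -- right inequality
  have hR : 2*(A.card:ℝ) + 1 ≤ 2*((n:ℝ)+1) * xstar := by
    by_contra hcon
    push_neg at hcon
    set c : ℝ := (2*(A.card:ℝ)+1)/(2*((n:ℝ)+1)) with hcdef
    have h2c : 2*((n:ℝ)+1) * c = 2*(A.card:ℝ)+1 := by
      rw [hcdef]; field_simp
    have hxc : xstar < c := by
      rw [hcdef, lt_div_iff₀ (by positivity)]
      nlinarith
    have hc1 : c < 1 := by
      rw [hcdef, div_lt_one (by positivity)]
      linarith
    set S : Finset (Fin n) := Finset.univ.filter (fun k => ¬ xs k ≤ xstar) with hS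
    set x : ℝ := if h : S.Nonempty then min c (S.inf' h xs) else c with hxdef
    have hxgt : xstar < x := by
      rw [hxdef]; split_ifs with h
      · refine lt_min hxc ?_
        rw [Finset.lt_inf'_iff]
        intro k hk
        have : ¬ xs k ≤ xstar := by simpa [hS] using hk
        exact lt_of_not_ge this
      · exact hxc
    have hxc' : x ≤ c := by
      rw [hxdef]; split_ifs with h
      · exact min_le_left _ _
      · exact le_rfl
    have hx01 : x ∈ Set.Icc (0:ℝ) 1 :=
      ⟨le_of_lt (lt_of_le_of_lt hx0 hxgt), le_of_lt (lt_of_le_of_lt hxc' hc1)⟩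
    have hsum : (∑ k, max x (xs k)) = (∑ k, max xstar (xs k)) + A.card * (x - xstar) := by
      apply sumdiff
      · intro k hk
        have hk' : xs k ≤ xstar := by simpa [hA] using hk
        exact ⟨max_eq_left (hk'.trans hxgt.le), max_eq_left hk'⟩
      · intro k hk
        have hk' : ¬ xs k ≤ xstar := by simpa [hA] using hk
        have hne : S.Nonempty := ⟨k, by simp [hS]; exact lt_of_not_ge hk'⟩
        have hxle : x ≤ xs k := by
          rw [hxdef, dif_pos hne]
          exact (min_le_right _ _).trans (Finset.inf'_le _ (by simp [hS]; exact lt_of_not_ge hk'))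
        exact ⟨max_eq_right hxle, max_eq_right (le_of_lt (lt_of_not_ge hk'))⟩
    have hm := hmin x hx01
    rw [hsum] at hm
    have hb : ((n:ℝ)+1)*(x+xstar) < 2*(A.card:ℝ)+1 := by
      nlinarith [mul_nonneg hnpos.le (sub_nonneg.2 hxc'), mul_pos hnpos (sub_pos.2 hxc)]
    nlinarith [mul_pos (sub_pos.2 hxgt) (sub_pos.2 hb)]
  -- left inequality
  have hL : 2*((n:ℝ)+1) * xstar ≤ 2*(B.card:ℝ) + 1 := by
    by_contra hcon
    push_neg at hcon
    set c : ℝ := (2*(B.card:ℝ)+1)/(2*((n:ℝ)+1)) with hcdef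
    have h2c : 2*((n:ℝ)+1) * c = 2*(B.card:ℝ)+1 := by
      rw [hcdef]; field_simp
    have hxc : c < xstar := by
      rw [hcdef, div_lt_iff₀ (by positivity)]
      nlinarith
    have hc0 : 0 < c := by
      rw [hcdef]; positivity
    set x : ℝ := if h : B.Nonempty then max c (B.sup' h xs) else c with hxdef
    have hxlt : x < xstar := by
      rw [hxdef]; split_ifs with h
      · refine max_lt hxc ?_
        rw [Finset.sup'_lt_iff]
        intro k hk
        simpa [hB] using hk
      · exact hxc
    have hxc' : c ≤ x := by
      rw [hxdef]; split_ifs with h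
      · exact le_max_left _ _
      · exact le_rfl
    have hx01 : x ∈ Set.Icc (0:ℝ) 1 :=
      ⟨le_of_lt (lt_of_lt_of_le hc0 hxc'), le_of_lt (lt_of_lt_of_le hxlt hx1)⟩
    have hsum : (∑ k, max x (xs k)) = (∑ k, max xstar (xs k)) + B.card * (x - xstar) := by
      apply sumdiff
      · intro k hk
        have hk' : xs k < xstar := by simpa [hB] using hk
        have hne : B.Nonempty := ⟨k, hk⟩
        have hxge : xs k ≤ x := by
          rw [hxdef, dif_pos hne]
          exact le_trans (Finset.le_sup' xs hk) (le_max_right _ _)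
        exact ⟨max_eq_left hxge, max_eq_left hk'.le⟩
      · intro k hk
        have hk' : xstar ≤ xs k := by
          have : ¬ xs k < xstar := by simpa [hB] using hk
          exact le_of_not_gt this
        exact ⟨max_eq_right (le_of_lt (lt_of_lt_of_le hxlt hk')), max_eq_right hk'⟩
    have hm := hmin x hx01
    rw [hsum] at hm
    have hb : 2*(B.card:ℝ)+1 < ((n:ℝ)+1)*(x+xstar) := by
      nlinarith [mul_nonneg hnpos.le (sub_nonneg.2 hxc'), mul_pos hnpos (sub_pos.2 hxc)]
    nlinarith [mul_pos (sub_pos.2 hxlt) (sub_pos.2 hb)]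
  -- combine
  have hBA : B ⊆ A := by
    intro k hk
    have : xs k < xstar := by simpa [hB] using hk
    simp [hA, this.le]
  have hij : B.card ≤ A.card := Finset.card_le_card hBA
  have hji : A.card ≤ B.card := by
    have : (A.card : ℝ) ≤ B.card := by linarith
    exact_mod_cast this
  have hAB : B = A := Finset.eq_of_subset_of_card_le hBA hji
  constructor
  · intro k heq
    have hkA : k ∈ A := by simp [hA, ← heq]
    have hkB : k ∈ B := hAB ▸ hkA
    have : xs k < xstar := by simpa [hB] using hkB
    exact absurd heq (by linarith)
  · refine ⟨A.card, ?_⟩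
    have hEq : 2*((n:ℝ)+1) * xstar = 2*(A.card:ℝ) + 1 := by
      have : (B.card : ℝ) = A.card := by rw [hAB]
      linarith
    rw [eq_div_iff (by positivity)]
    linarith
end

section
/- Let n ≥ 1, let 0 ≤ x_1 ≤ x_2 ≤ … ≤ x_n ≤ 1, let x ∈ [0,1], and let y_1 ≤ y_2 ≤ … ≤ y_{n+1} denote the nondecreasing rearrangement of the multiset {x_1,…,x_n,x}. Then ∑_{k=1}^{n+1} y_k·(2k−1) − ∑_{k=1}^{n} x_k·(2k−1) = x + 2∑_{k=1}^{n} max{x, x_k}. -/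
/-- Double sum of pairwise maxima over a multiset. -/
noncomputable def maxSum (s : Multiset ℝ) : ℝ :=
  (s.map (fun a => (s.map (fun b => max a b)).sum)).sum

lemma maxSum_ofFn {m : ℕ} (f : Fin m → ℝ) :
    maxSum (↑(List.ofFn f)) = ∑ i : Fin m, ∑ j : Fin m, max (f i) (f j) := by
  simp only [maxSum, Multiset.map_coe, Multiset.sum_coe, List.map_ofFn,
    List.sum_ofFn, Function.comp_def]

lemma maxSum_cons (a : ℝ) (s : Multiset ℝ) :
    maxSum (a ::ₘ s) = max a a + (s.map (fun b => max a b)).sum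
      + (s.map (fun b => max b a)).sum + maxSum s := by
  simp [maxSum, Multiset.sum_map_add]
  ring

lemma sum_max_monotone : ∀ (m : ℕ) (f : Fin m → ℝ), Monotone f →
    ∑ i : Fin m, ∑ j : Fin m, max (f i) (f j)
      = ∑ k : Fin m, f k * (2 * ((k : ℕ) : ℝ) + 1) := by
  intro m
  induction m with
  | zero => intro f _; simp
  | succ m ih =>
    intro f hf
    have hle : ∀ j : Fin (m+1), f j ≤ f (Fin.last m) := fun j => hf (Fin.le_last j)
    rw [Fin.sum_univ_castSucc (f := fun i => ∑ j : Fin (m+1), max (f i) (f j))]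
    have inner1 : ∀ i : Fin m, ∑ j : Fin (m+1), max (f i.castSucc) (f j)
        = (∑ j : Fin m, max (f i.castSucc) (f j.castSucc)) + f (Fin.last m) := by
      intro i
      rw [Fin.sum_univ_castSucc]
      congr 1
      exact max_eq_right (hle _)
    have inner2 : ∑ j : Fin (m+1), max (f (Fin.last m)) (f j)
        = ((m : ℝ) + 1) * f (Fin.last m) := by
      have h : ∀ j : Fin (m+1), max (f (Fin.last m)) (f j) = f (Fin.last m) :=
        fun j => max_eq_left (hle j)
      simp_rw [h]
      simp [Finset.sum_const, nsmul_eq_mul]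
    simp_rw [inner1, inner2]
    rw [Finset.sum_add_distrib]
    rw [ih (fun i => f i.castSucc) (hf.comp Fin.strictMono_castSucc.monotone)]
    rw [Fin.sum_univ_castSucc (f := fun k : Fin (m+1) => f k * (2 * ((k : ℕ) : ℝ) + 1))]
    simp [Fin.coe_castSucc, Fin.val_last, Finset.sum_const, nsmul_eq_mul]
    push_cast
    ring

theorem stmt_6 (n : ℕ) (hn : 1 ≤ n) (xs : Fin n → ℝ) (hmono : Monotone xs)
    (hmem : ∀ k, xs k ∈ Set.Icc (0 : ℝ) 1)
    (x : ℝ) (hx : x ∈ Set.Icc (0 : ℝ) 1)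
    (y : Fin (n + 1) → ℝ)
    (hy : IsSortedRearrangement y (x ::ₘ (↑(List.ofFn xs) : Multiset ℝ))) :
    (∑ k : Fin (n + 1), y k * (2 * ((k : ℕ) : ℝ) + 1))
        - ∑ k : Fin n, xs k * (2 * ((k : ℕ) : ℝ) + 1)
      = x + 2 * ∑ k, max x (xs k) := by
  obtain ⟨hymono, hyms⟩ := hy
  have h1 : maxSum (↑(List.ofFn y)) = ∑ k : Fin (n+1), y k * (2 * ((k : ℕ) : ℝ) + 1) := by
    rw [maxSum_ofFn]; exact sum_max_monotone _ y hymono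
  have h2 : maxSum (↑(List.ofFn xs)) = ∑ k : Fin n, xs k * (2 * ((k : ℕ) : ℝ) + 1) := by
    rw [maxSum_ofFn]; exact sum_max_monotone _ xs hmono
  have h3 : maxSum (x ::ₘ (↑(List.ofFn xs) : Multiset ℝ))
      = x + 2 * (∑ k, max x (xs k)) + maxSum (↑(List.ofFn xs)) := by
    rw [maxSum_cons]
    have hA : ((↑(List.ofFn xs) : Multiset ℝ).map (fun b => max x b)).sum
        = ∑ k, max x (xs k) := by
      simp only [Multiset.map_coe, Multiset.sum_coe, List.map_ofFn,
        List.sum_ofFn, Function.comp_def]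
    have hB : ((↑(List.ofFn xs) : Multiset ℝ).map (fun b => max b x)).sum
        = ∑ k, max x (xs k) := by
      simp only [Multiset.map_coe, Multiset.sum_coe, List.map_ofFn,
        List.sum_ofFn, Function.comp_def, max_comm]
    rw [hA, hB, max_self]
    ring
  rw [← h1, ← h2, hyms, h3]
  ring
end

section
/- Let n ≥ 1, let x_1,…,x_n ∈ [0,1], write f_n(x) = #{1 ≤ k ≤ n : x_k ≤ x}, and let z ∈ [0,1]. Define f_{n+1}(x) = f_n(x) + 1_{[z,1]}(x) (the counting function after adding the point z). Then ∫₀¹ (f_{n+1}(x) − (n+1)x)² dx = ∫₀¹ (f_n(x) − nx)² dx − 2∫₀^z (f_n(x) − nx)·x dx + 2∫_z¹ (f_n(x) − nx)·(1−x) dx + (z³ + (1−z)³)/3. -/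
open MeasureTheory intervalIntegral

/-- The counting function `f_n(x) = #{1 ≤ k ≤ n : x_k ≤ x}`. -/
noncomputable def countFn (n : ℕ) (xs : Fin n → ℝ) (x : ℝ) : ℕ :=
  (Finset.univ.filter (fun k => xs k ≤ x)).card

lemma measurable_countFn (n : ℕ) (xs : Fin n → ℝ) :
    Measurable (fun x => ((countFn n xs x : ℕ) : ℝ)) := by
  have : (fun x : ℝ => ((countFn n xs x : ℕ) : ℝ))
      = fun x => ∑ k : Fin n, (if xs k ≤ x then (1:ℝ) else 0) := by
    funext x
    rw [countFn, Finset.card_filter]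
    push_cast
    rfl
  rw [this]
  refine Finset.measurable_sum _ fun k _ => ?_
  exact Measurable.ite measurableSet_Ici measurable_const measurable_const

lemma countFn_le (n : ℕ) (xs : Fin n → ℝ) (x : ℝ) : (countFn n xs x : ℝ) ≤ n := by
  have := Finset.card_filter_le (Finset.univ : Finset (Fin n)) (fun k => xs k ≤ x)
  have h2 : countFn n xs x ≤ n := by simpa [countFn] using this
  exact_mod_cast h2

lemma ii_of_bdd {f : ℝ → ℝ} (hf : Measurable f) {C : ℝ} {a b : ℝ}
    (h : ∀ x ∈ Set.uIoc a b, |f x| ≤ C) :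
    IntervalIntegrable f MeasureTheory.volume a b := by
  rw [intervalIntegrable_iff]
  refine Integrable.mono' (g := fun _ => C)
    (integrableOn_const ?_) hf.aestronglyMeasurable.restrict ?_
  · rw [Set.uIoc]; exact measure_Ioc_lt_top.ne
  · exact (ae_restrict_mem measurableSet_uIoc).mono fun x hx => by
      simpa using h x hx

theorem stmt_7 (n : ℕ) (hn : 1 ≤ n) (xs : Fin n → ℝ)
    (hmem : ∀ k, xs k ∈ Set.Icc (0 : ℝ) 1)
    (z : ℝ) (hz : z ∈ Set.Icc (0 : ℝ) 1) :
    (∫ x in (0:ℝ)..1,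
        ((countFn n xs x : ℝ) + (if z ≤ x then (1:ℝ) else 0) - ((n : ℝ) + 1) * x) ^ 2)
      = (∫ x in (0:ℝ)..1, ((countFn n xs x : ℝ) - (n : ℝ) * x) ^ 2)
        - 2 * (∫ x in (0:ℝ)..z, ((countFn n xs x : ℝ) - (n : ℝ) * x) * x)
        + 2 * (∫ x in z..1, ((countFn n xs x : ℝ) - (n : ℝ) * x) * (1 - x))
        + (z ^ 3 + (1 - z) ^ 3) / 3 := by
  obtain ⟨hz0, hz1⟩ := hz
  have hF0 : ∀ x : ℝ, (0:ℝ) ≤ (countFn n xs x : ℝ) := fun x => Nat.cast_nonneg _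
  have hFn : ∀ x : ℝ, (countFn n xs x : ℝ) ≤ n := countFn_le n xs
  have measF : Measurable (fun x : ℝ => ((countFn n xs x : ℕ) : ℝ)) :=
    measurable_countFn n xs
  have measInd : Measurable (fun x : ℝ => if z ≤ x then (1:ℝ) else 0) :=
    Measurable.ite measurableSet_Ici measurable_const measurable_const
  set C0 : ℝ := (n:ℝ)^2 + 4*n + 4 with hC0
  -- generic integrability helper
  have key_ii : ∀ (f : ℝ → ℝ), Measurable f →
      (∀ x : ℝ, 0 ≤ x → x ≤ 1 → |f x| ≤ C0) →
      ∀ a b : ℝ, 0 ≤ a → a ≤ 1 → 0 ≤ b → b ≤ 1 →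
      IntervalIntegrable f MeasureTheory.volume a b := by
    intro f mf bf a b ha0 ha1 hb0 hb1
    apply ii_of_bdd mf
    intro x hx
    obtain ⟨h1, h2⟩ := hx
    exact bf x (le_of_lt (lt_of_le_of_lt (le_inf ha0 hb0) h1))
      (le_trans h2 (sup_le ha1 hb1))
  have hindval : ∀ x : ℝ, (if z ≤ x then (1:ℝ) else 0) = 0 ∨
      (if z ≤ x then (1:ℝ) else 0) = 1 := by
    intro x; by_cases h : z ≤ x <;> simp [h]
  have hC0nn : (0:ℝ) ≤ C0 := by rw [hC0]; positivity
  have hg : ∀ x : ℝ, 0 ≤ x → x ≤ 1 → |(countFn n xs x : ℝ) - (n:ℝ)*x| ≤ n := by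
    intro x hx0 hx1
    have h1 := hF0 x; have h2 := hFn x
    have hn0 : (0:ℝ) ≤ n := Nat.cast_nonneg n
    have hnx : (n:ℝ)*x ≤ n := by nlinarith
    have hnx0 : 0 ≤ (n:ℝ)*x := by positivity
    rw [abs_le]; constructor <;> linarith
  have hi1 : ∀ x : ℝ, 0 ≤ x → x ≤ 1 → |(if z ≤ x then (1:ℝ) else 0) - x| ≤ 1 := by
    intro x hx0 hx1
    rcases hindval x with h | h <;> rw [h, abs_le] <;> constructor <;> linarith
  -- integrability of the three pieces
  have iiA : ∀ a b : ℝ, 0 ≤ a → a ≤ 1 → 0 ≤ b → b ≤ 1 →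
      IntervalIntegrable (fun x => ((countFn n xs x : ℝ) - (n:ℝ)*x)^2)
        MeasureTheory.volume a b := by
    refine fun a b => key_ii (fun x => ((countFn n xs x : ℝ) - (n:ℝ)*x)^2)
      ((measF.sub (measurable_const.mul measurable_id)).pow measurable_const) ?_ a b
    intro x hx0 hx1
    have h := abs_le.1 (hg x hx0 hx1)
    have hn0 : (0:ℝ) ≤ n := Nat.cast_nonneg n
    rw [abs_le, hC0]
    constructor <;> nlinarith [sq_nonneg ((countFn n xs x : ℝ) - (n:ℝ)*x)]
  have iiB : ∀ a b : ℝ, 0 ≤ a → a ≤ 1 → 0 ≤ b → b ≤ 1 →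
      IntervalIntegrable (fun x => 2*(((countFn n xs x : ℝ) - (n:ℝ)*x) *
        ((if z ≤ x then (1:ℝ) else 0) - x))) MeasureTheory.volume a b := by
    refine fun a b => key_ii (fun x => 2*(((countFn n xs x : ℝ) - (n:ℝ)*x) *
        ((if z ≤ x then (1:ℝ) else 0) - x)))
      (measurable_const.mul ((measF.sub
      (measurable_const.mul measurable_id)).mul (measInd.sub measurable_id))) ?_ a b
    intro x hx0 hx1
    have h := hg x hx0 hx1
    have h2 := hi1 x hx0 hx1
    have hn0 : (0:ℝ) ≤ n := Nat.cast_nonneg n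
    calc |2*(((countFn n xs x : ℝ) - (n:ℝ)*x) * ((if z ≤ x then (1:ℝ) else 0) - x))|
        = 2*(|(countFn n xs x : ℝ) - (n:ℝ)*x| * |(if z ≤ x then (1:ℝ) else 0) - x|) := by
          rw [abs_mul, abs_mul]; norm_num
      _ ≤ 2*((n:ℝ)*1) := by gcongr <;> exact abs_nonneg _
      _ ≤ C0 := by rw [hC0]; nlinarith
  have iiC : ∀ a b : ℝ, 0 ≤ a → a ≤ 1 → 0 ≤ b → b ≤ 1 →
      IntervalIntegrable (fun x => ((if z ≤ x then (1:ℝ) else 0) - x)^2)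
        MeasureTheory.volume a b := by
    refine fun a b => key_ii (fun x => ((if z ≤ x then (1:ℝ) else 0) - x)^2)
      ((measInd.sub measurable_id).pow measurable_const) ?_ a b
    intro x hx0 hx1
    have h2 := abs_le.1 (hi1 x hx0 hx1)
    have hn0 : (0:ℝ) ≤ n := Nat.cast_nonneg n
    rw [abs_le, hC0]
    constructor <;> nlinarith [sq_nonneg ((if z ≤ x then (1:ℝ) else 0) - x)]
  -- step 1: expand the square
  have e1 : (∫ x in (0:ℝ)..1,
        ((countFn n xs x : ℝ) + (if z ≤ x then (1:ℝ) else 0) - ((n : ℝ) + 1) * x) ^ 2)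
      = (∫ x in (0:ℝ)..1, ((countFn n xs x : ℝ) - (n:ℝ)*x)^2)
        + ((∫ x in (0:ℝ)..1, 2*(((countFn n xs x : ℝ) - (n:ℝ)*x) *
            ((if z ≤ x then (1:ℝ) else 0) - x)))
          + (∫ x in (0:ℝ)..1, ((if z ≤ x then (1:ℝ) else 0) - x)^2)) := by
    rw [← integral_add ((iiB 0 1 le_rfl zero_le_one zero_le_one le_rfl) )
        (iiC 0 1 le_rfl zero_le_one zero_le_one le_rfl),
      ← integral_add (iiA 0 1 le_rfl zero_le_one zero_le_one le_rfl)
        (((iiB 0 1 le_rfl zero_le_one zero_le_one le_rfl)).add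
          (iiC 0 1 le_rfl zero_le_one zero_le_one le_rfl))]
    exact integral_congr fun x _ => by ring
  -- a.e. tool
  have aene : ∀ᵐ x : ℝ ∂MeasureTheory.volume, x ≠ z := by
    refine ae_iff.2 ?_
    have : {a : ℝ | ¬a ≠ z} = {z} := by ext a; simp
    rw [this]
    exact measure_singleton z
  -- splitting B
  have e2 : (∫ x in (0:ℝ)..1, 2*(((countFn n xs x : ℝ) - (n:ℝ)*x) *
        ((if z ≤ x then (1:ℝ) else 0) - x)))
      = (∫ x in (0:ℝ)..z, 2*(((countFn n xs x : ℝ) - (n:ℝ)*x) *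
          ((if z ≤ x then (1:ℝ) else 0) - x)))
        + (∫ x in z..1, 2*(((countFn n xs x : ℝ) - (n:ℝ)*x) *
          ((if z ≤ x then (1:ℝ) else 0) - x))) :=
    (integral_add_adjacent_intervals (iiB 0 z le_rfl zero_le_one hz0 hz1)
      (iiB z 1 hz0 hz1 zero_le_one le_rfl)).symm
  have e5 : (∫ x in (0:ℝ)..1, ((if z ≤ x then (1:ℝ) else 0) - x)^2)
      = (∫ x in (0:ℝ)..z, ((if z ≤ x then (1:ℝ) else 0) - x)^2)
        + (∫ x in z..1, ((if z ≤ x then (1:ℝ) else 0) - x)^2) :=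
    (integral_add_adjacent_intervals (iiC 0 z le_rfl zero_le_one hz0 hz1)
      (iiC z 1 hz0 hz1 zero_le_one le_rfl)).symm
  -- identify pieces
  have e3 : (∫ x in (0:ℝ)..z, 2*(((countFn n xs x : ℝ) - (n:ℝ)*x) *
        ((if z ≤ x then (1:ℝ) else 0) - x)))
      = -2 * (∫ x in (0:ℝ)..z, ((countFn n xs x : ℝ) - (n:ℝ)*x) * x) := by
    rw [← intervalIntegral.integral_const_mul]
    refine integral_congr_ae (aene.mono fun x hx hmem => ?_)
    rw [Set.uIoc_of_le hz0] at hmem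
    have hlt : x < z := lt_of_le_of_ne hmem.2 hx
    rw [if_neg (not_le.2 hlt)]
    ring
  have e4 : (∫ x in z..1, 2*(((countFn n xs x : ℝ) - (n:ℝ)*x) *
        ((if z ≤ x then (1:ℝ) else 0) - x)))
      = 2 * (∫ x in z..1, ((countFn n xs x : ℝ) - (n:ℝ)*x) * (1 - x)) := by
    rw [← intervalIntegral.integral_const_mul]
    refine integral_congr fun x hx => ?_
    rw [Set.uIcc_of_le hz1] at hx
    rw [if_pos hx.1]
  have e6 : (∫ x in (0:ℝ)..z, ((if z ≤ x then (1:ℝ) else 0) - x)^2) = z^3/3 := by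
    have : (∫ x in (0:ℝ)..z, ((if z ≤ x then (1:ℝ) else 0) - x)^2)
        = ∫ x in (0:ℝ)..z, x^2 := by
      refine integral_congr_ae (aene.mono fun x hx hmem => ?_)
      rw [Set.uIoc_of_le hz0] at hmem
      have hlt : x < z := lt_of_le_of_ne hmem.2 hx
      rw [if_neg (not_le.2 hlt)]
      ring
    rw [this, integral_pow]
    norm_num
  have e7 : (∫ x in z..1, ((if z ≤ x then (1:ℝ) else 0) - x)^2) = (1-z)^3/3 := by
    have h1 : (∫ x in z..1, ((if z ≤ x then (1:ℝ) else 0) - x)^2)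
        = ∫ x in z..1, (1 - x)^2 := by
      refine integral_congr fun x hx => ?_
      rw [Set.uIcc_of_le hz1] at hx
      rw [if_pos hx.1]
    have h2 : (∫ x in z..1, (1 - x)^2) = ∫ x in (1-(1:ℝ))..(1-z), x^2 :=
      integral_comp_sub_left (fun x => x^2) 1
    rw [h1, h2]
    norm_num [integral_pow]
  rw [e1, e2, e5, e3, e4, e6, e7]
  ring
end

section
/- Let g : [0,1] → ℝ be continuous. Then max over z ∈ [0,1] of the quantity ∫₀^z g(x)·x dx − ∫_z¹ g(x)·(1−x) dx is nonnegative, i.e. there exists z ∈ [0,1] with ∫₀^z g(x)·x dx − ∫_z¹ g(x)·(1−x) dx ≥ 0. -/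
open MeasureTheory intervalIntegral Set

theorem stmt_8 (g : ℝ → ℝ) (hg : ContinuousOn g (Set.Icc (0 : ℝ) 1)) :
    ∃ z ∈ Set.Icc (0 : ℝ) 1,
      0 ≤ (∫ x in (0:ℝ)..z, g x * x) - ∫ x in z..1, g x * (1 - x) := by
  -- extend g continuously to ℝ
  set f : ℝ → ℝ := Set.IccExtend zero_le_one ((Set.Icc (0:ℝ) 1).restrict g) with hf
  have hfc : Continuous f := (continuousOn_iff_continuous_restrict.1 hg).Icc_extend'
  have hfg : ∀ x ∈ Set.Icc (0:ℝ) 1, f x = g x := fun x hx => by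
    simp [hf, Set.IccExtend_of_mem _ _ hx]; rfl
  -- primitive
  set G : ℝ → ℝ := fun z => ∫ t in (0:ℝ)..z, f t with hGdef
  have hGderiv : ∀ z : ℝ, HasDerivAt G (f z) z := fun z =>
    (hfc.integral_hasStrictDerivAt 0 z).hasDerivAt
  have hGc : Continuous G :=
    continuous_iff_continuousAt.2 fun z => (hGderiv z).continuousAt
  -- key identity: for all z, ∫₀^z f x x − ∫_z^1 f x (1−x) = G z − ∫₀¹ G
  have key : ∀ z : ℝ,
      (∫ x in (0:ℝ)..z, f x * x) - (∫ x in z..1, f x * (1 - x))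
        = G z - ∫ t in (0:ℝ)..1, G t := by
    intro z
    have h1 : ∫ x in (0:ℝ)..z, G x * 1
        = G z * z - G 0 * 0 - ∫ x in (0:ℝ)..z, f x * x := by
      apply intervalIntegral.integral_mul_deriv_eq_deriv_mul
      · exact fun x _ => hGderiv x
      · exact fun x _ => hasDerivAt_id x
      · exact (hfc.intervalIntegrable 0 z)
      · exact intervalIntegrable_const
    have h2 : ∫ x in z..(1:ℝ), G x * (-1)
        = G 1 * (1 - 1) - G z * (1 - z) - ∫ x in z..(1:ℝ), f x * (1 - x) := by
      apply intervalIntegral.integral_mul_deriv_eq_deriv_mul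
      · exact fun x _ => hGderiv x
      · intro x _
        simpa using ((hasDerivAt_id x).const_sub 1)
      · exact (hfc.intervalIntegrable z 1)
      · exact intervalIntegrable_const
    have hG0 : G 0 = 0 := by simp [hGdef]
    have hsplit : (∫ t in (0:ℝ)..z, G t) + (∫ t in z..(1:ℝ), G t)
        = ∫ t in (0:ℝ)..1, G t :=
      integral_add_adjacent_intervals (hGc.intervalIntegrable 0 z)
        (hGc.intervalIntegrable z 1)
    have h2' : ∫ x in z..(1:ℝ), G x * (-1) = - ∫ x in z..(1:ℝ), G x := by
      simp [intervalIntegral.integral_neg]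
    have h1' : ∫ x in (0:ℝ)..z, G x * 1 = ∫ x in (0:ℝ)..z, G x := by simp
    rw [h1'] at h1
    rw [h2'] at h2
    have e1 : (∫ x in (0:ℝ)..z, f x * x) = G z * z - ∫ x in (0:ℝ)..z, G x := by
      rw [hG0] at h1; linarith
    have e2 : (∫ x in z..(1:ℝ), f x * (1 - x))
        = (∫ x in z..(1:ℝ), G x) - G z * (1 - z) := by linarith
    rw [e1, e2]
    nlinarith [hsplit]
  -- pick a maximum point of G on [0,1]
  obtain ⟨z, hz, hmax⟩ := isCompact_Icc.exists_isMaxOn (Set.nonempty_Icc.2 zero_le_one)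
    (hGc.continuousOn : ContinuousOn G (Set.Icc (0:ℝ) 1))
  refine ⟨z, hz, ?_⟩
  have hint : (∫ t in (0:ℝ)..1, G t) ≤ G z := by
    calc (∫ t in (0:ℝ)..1, G t) ≤ ∫ _ in (0:ℝ)..1, G z := by
          apply intervalIntegral.integral_mono_on zero_le_one
            (hGc.intervalIntegrable 0 1) intervalIntegrable_const
          intro x hx; exact hmax hx
      _ = G z := by simp
  have congr1 : (∫ x in (0:ℝ)..z, g x * x) = ∫ x in (0:ℝ)..z, f x * x := by
    apply intervalIntegral.integral_congr
    intro x hx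
    rw [Set.uIcc_of_le hz.1] at hx
    simp only []; rw [hfg x ⟨hx.1, le_trans hx.2 hz.2⟩]
  have congr2 : (∫ x in z..(1:ℝ), g x * (1 - x)) = ∫ x in z..(1:ℝ), f x * (1 - x) := by
    apply intervalIntegral.integral_congr
    intro x hx
    rw [Set.uIcc_of_le hz.2] at hx
    simp only []; rw [hfg x ⟨le_trans hz.1 hx.1, hx.2⟩]
  rw [congr1, congr2, key z]
  linarith
end

section
/- Let g : [0,1] → ℝ be continuous with g not identically zero. Then max over z ∈ [0,1] of ∫₀^z g(x)·x dx − ∫_z¹ g(x)·(1−x) dx is at least (1/16)·(1/‖g‖²_{L²[0,1]})·(max over x ∈ [0,1] of |∫₀^x g(y) dy|)³, where ‖g‖²_{L²[0,1]} = ∫₀¹ g(x)² dx. -/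
open Set intervalIntegral MeasureTheory

-- positivity of integral of nonneg continuous function positive somewhere in [0,1]
lemma aux_pos (h : ℝ → ℝ) (hc : Continuous h) (hnn : ∀ t, 0 ≤ h t)
    (x : ℝ) (hx : x ∈ Set.Icc (0:ℝ) 1) (hpos : 0 < h x) :
    0 < ∫ t in (0:ℝ)..1, h t := by
  obtain ⟨hx0, hx1⟩ := hx
  obtain ⟨δ, hδ, hball⟩ := Metric.continuousAt_iff.mp hc.continuousAt (h x / 2) (by linarith)
  set c := max (x - δ/2) 0 with hc'
  set d := min (x + δ/2) 1 with hd'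
  have hcd : c < d := by
    apply max_lt <;> apply lt_min <;> linarith
  have hc0 : 0 ≤ c := le_max_right _ _
  have hd1 : d ≤ 1 := min_le_right _ _
  have hmid : ∀ t ∈ Set.Icc c d, h x / 2 ≤ h t := by
    intro t ⟨h1, h2⟩
    have h3 : x - δ/2 ≤ t := le_trans (le_max_left _ _) h1
    have h4 : t ≤ x + δ/2 := le_trans h2 (min_le_left _ _)
    have : dist t x < δ := by rw [Real.dist_eq]; rw [abs_lt]; constructor <;> linarith
    have := hball this
    rw [Real.dist_eq, abs_lt] at this
    linarith [this.1]
  have i1 : (0:ℝ) ≤ ∫ t in (0:ℝ)..c, h t :=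
    intervalIntegral.integral_nonneg hc0 (fun t _ => hnn t)
  have i3 : (0:ℝ) ≤ ∫ t in d..1, h t :=
    intervalIntegral.integral_nonneg hd1 (fun t _ => hnn t)
  have i2 : (d - c) * (h x / 2) ≤ ∫ t in c..d, h t := by
    calc (d - c) * (h x / 2) = ∫ _ in c..d, h x / 2 := by
          rw [intervalIntegral.integral_const]; simp [smul_eq_mul]
      _ ≤ ∫ t in c..d, h t := by
          apply intervalIntegral.integral_mono_on hcd.le
            (intervalIntegrable_const) (hc.intervalIntegrable _ _) hmid
  have hsplit : (∫ t in (0:ℝ)..1, h t) =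
      (∫ t in (0:ℝ)..c, h t) + (∫ t in c..d, h t) + (∫ t in d..1, h t) := by
    rw [intervalIntegral.integral_add_adjacent_intervals (hc.intervalIntegrable _ _)
      (hc.intervalIntegrable _ _),
      intervalIntegral.integral_add_adjacent_intervals (hc.intervalIntegrable _ _)
      (hc.intervalIntegrable _ _)]
  have : 0 < (d - c) * (h x / 2) := by
    apply mul_pos (by linarith) (by linarith)
  rw [hsplit]; linarith

-- Cauchy-Schwarz: (∫_a^b g)^2 ≤ (b-a) * ∫_0^1 g^2 for 0 ≤ a ≤ b ≤ 1
lemma aux_cs (g : ℝ → ℝ) (hg : Continuous g) (a b : ℝ) (ha : 0 ≤ a) (hab : a ≤ b)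
    (hb : b ≤ 1) :
    (∫ t in a..b, g t) ^ 2 ≤ (b - a) * ∫ t in (0:ℝ)..1, (g t) ^ 2 := by
  set I := ∫ t in a..b, g t with hI
  set d := b - a with hdd
  have hd : 0 ≤ d := by linarith
  have hgi : ∀ c e : ℝ, IntervalIntegrable g volume c e := fun c e => hg.intervalIntegrable c e
  have hg2i : ∀ c e : ℝ, IntervalIntegrable (fun t => g t ^ 2) volume c e :=
    fun c e => (hg.pow 2).intervalIntegrable c e
  -- expand ∫ (d*g - I)^2
  have hexp : ∫ t in a..b, (d * g t - I) ^ 2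
      = d ^ 2 * (∫ t in a..b, g t ^ 2) - d * I ^ 2 := by
    have : ∀ t, (d * g t - I) ^ 2 = d ^ 2 * g t ^ 2 - (2 * d * I) * g t + I ^ 2 := by
      intro t; ring
    simp_rw [this]
    rw [intervalIntegral.integral_add (((hg2i a b).const_mul _).sub ((hgi a b).const_mul _))
      intervalIntegrable_const,
      intervalIntegral.integral_sub ((hg2i a b).const_mul _) ((hgi a b).const_mul _),
      intervalIntegral.integral_const_mul, intervalIntegral.integral_const_mul,
      intervalIntegral.integral_const, smul_eq_mul, ← hI]
    ring
  have hnn : 0 ≤ ∫ t in a..b, (d * g t - I) ^ 2 :=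
    intervalIntegral.integral_nonneg hab (fun t _ => sq_nonneg _)
  have h1 : d * I ^ 2 ≤ d ^ 2 * ∫ t in a..b, g t ^ 2 := by
    rw [hexp] at hnn; linarith
  -- ∫_a^b g^2 ≤ ∫_0^1 g^2
  have h2 : (∫ t in a..b, g t ^ 2) ≤ ∫ t in (0:ℝ)..1, g t ^ 2 := by
    have hsplit : (∫ t in (0:ℝ)..1, g t ^ 2) =
        (∫ t in (0:ℝ)..a, g t ^ 2) + (∫ t in a..b, g t ^ 2) + (∫ t in b..1, g t ^ 2) := by
      rw [intervalIntegral.integral_add_adjacent_intervals (hg2i 0 a) (hg2i a b),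
        intervalIntegral.integral_add_adjacent_intervals (hg2i 0 b) (hg2i b 1)]
    have i1 : (0:ℝ) ≤ ∫ t in (0:ℝ)..a, g t ^ 2 :=
      intervalIntegral.integral_nonneg ha (fun t _ => sq_nonneg _)
    have i3 : (0:ℝ) ≤ ∫ t in b..1, g t ^ 2 :=
      intervalIntegral.integral_nonneg hb (fun t _ => sq_nonneg _)
    rw [hsplit]; linarith
  rcases eq_or_lt_of_le hd with heq | hlt
  · have : a = b := by simp [hdd] at heq ⊢; linarith
    subst this
    simp [hI]
    exact mul_nonneg hd (intervalIntegral.integral_nonneg zero_le_one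
      (fun t _ => sq_nonneg _))
  · have hIq : I ^ 2 ≤ d * ∫ t in a..b, g t ^ 2 := by
      nlinarith
    calc I ^ 2 ≤ d * ∫ t in a..b, g t ^ 2 := hIq
      _ ≤ d * ∫ t in (0:ℝ)..1, g t ^ 2 := by
          apply mul_le_mul_of_nonneg_left h2 hd

lemma aux_main (g : ℝ → ℝ) (hg : Continuous g)
    (hpos : 0 < ∫ t in (0:ℝ)..1, (g t) ^ 2) :
    ∃ z ∈ Set.Icc (0 : ℝ) 1, ∀ x ∈ Set.Icc (0 : ℝ) 1,
      (1 / 16) * (1 / ∫ t in (0:ℝ)..1, (g t) ^ 2) * |∫ t in (0:ℝ)..x, g t| ^ 3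
        ≤ (∫ t in (0:ℝ)..z, g t * t) - ∫ t in z..1, g t * (1 - t) := by
  set L := ∫ t in (0:ℝ)..1, (g t) ^ 2 with hL
  set G := fun x : ℝ => ∫ t in (0:ℝ)..x, g t with hGdef
  have hgi : ∀ c e : ℝ, IntervalIntegrable g volume c e := fun c e => hg.intervalIntegrable c e
  have hGderiv : ∀ x : ℝ, HasDerivAt G (g x) x := by
    intro x
    exact intervalIntegral.integral_hasDerivAt_right (hgi 0 x)
      (hg.stronglyMeasurableAtFilter _ _) hg.continuousAt
  have hGc : Continuous G := by
    rw [continuous_iff_continuousAt]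
    exact fun x => (hGderiv x).continuousAt
  have hGi : ∀ c e : ℝ, IntervalIntegrable G volume c e := fun c e => hGc.intervalIntegrable c e
  have hG0 : G 0 = 0 := intervalIntegral.integral_same
  -- Cauchy-Schwarz for G increments
  have hcs : ∀ a b : ℝ, 0 ≤ a → a ≤ b → b ≤ 1 → (G b - G a) ^ 2 ≤ (b - a) * L := by
    intro a b ha hab hb
    have : G b - G a = ∫ t in a..b, g t := by
      have h := intervalIntegral.integral_add_adjacent_intervals (hgi 0 a) (hgi a b)
      simp only [hGdef]
      linarith
    rw [this]
    exact aux_cs g hg a b ha hab hb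
  -- maximizers
  obtain ⟨x₀, hx₀, hx₀max⟩ := isCompact_Icc.exists_isMaxOn (Set.nonempty_Icc.2 zero_le_one)
    ((continuous_abs.comp hGc).continuousOn)
  obtain ⟨z, hz, hzmax⟩ := isCompact_Icc.exists_isMaxOn (Set.nonempty_Icc.2 zero_le_one)
    hGc.continuousOn
  set M := |G x₀| with hM
  have hMnn : 0 ≤ M := abs_nonneg _
  have hMP : ∀ y ∈ Set.Icc (0:ℝ) 1, |G y| ≤ M := fun y hy => hx₀max hy
  have hzP : ∀ y ∈ Set.Icc (0:ℝ) 1, G y ≤ G z := fun y hy => hzmax hy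
  have hMz : 0 ≤ G z := hG0 ▸ hzP 0 (by simp)
  have hMzM : G z ≤ M := le_trans (le_abs_self _) (hMP z hz)
  have hM2L : M ^ 2 ≤ L := by
    have := hcs 0 x₀ le_rfl hx₀.1 hx₀.2
    rw [hG0, sub_zero, sub_zero] at this
    have : (G x₀) ^ 2 ≤ 1 * L := le_trans this
      (mul_le_mul_of_nonneg_right hx₀.2 hpos.le)
    calc M ^ 2 = (G x₀) ^ 2 := sq_abs _
      _ ≤ 1 * L := this
      _ = L := one_mul L
  set a := M ^ 2 / (4 * L) with ha
  have hann : 0 ≤ a := div_nonneg (sq_nonneg _) (by linarith)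
  have ha1 : a ≤ 1 / 4 := by
    rw [ha, div_le_div_iff₀ (by linarith) (by norm_num)]
    linarith
  -- key bound: ∫_0^1 G ≤ G z - a * M / 2
  have hIbound : (∫ t in (0:ℝ)..1, G t) ≤ G z - a * M / 2 := by
    rcases le_or_gt 0 (G x₀) with hcase | hcase
    · -- M = G x₀ ≤ G z so M = G z essentially; bound G ≤ M/2 on [0,a]
      have hMeq : M = G x₀ := abs_of_nonneg hcase
      have hMGz : M ≤ G z := hMeq ▸ hzP x₀ hx₀
      have hsmall : ∀ t ∈ Set.Icc (0:ℝ) a, G t ≤ M / 2 := by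
        intro t ⟨ht0, hta⟩
        have h1 : (G t) ^ 2 ≤ t * L := by
          have := hcs 0 t le_rfl ht0 (by linarith)
          rwa [hG0, sub_zero, sub_zero] at this
        have h2 : t * L ≤ a * L := mul_le_mul_of_nonneg_right hta hpos.le
        have h3 : a * L = M ^ 2 / 4 := by
          rw [ha]; field_simp
        nlinarith
      have hsplit : (∫ t in (0:ℝ)..1, G t) =
          (∫ t in (0:ℝ)..a, G t) + (∫ t in a..1, G t) :=
        (intervalIntegral.integral_add_adjacent_intervals (hGi 0 a) (hGi a 1)).symm
      have i1 : (∫ t in (0:ℝ)..a, G t) ≤ a * (M / 2) := by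
        calc (∫ t in (0:ℝ)..a, G t) ≤ ∫ _ in (0:ℝ)..a, M / 2 :=
            intervalIntegral.integral_mono_on hann (hGi 0 a) intervalIntegrable_const hsmall
          _ = a * (M / 2) := by rw [intervalIntegral.integral_const]; simp [smul_eq_mul]
      have i2 : (∫ t in a..1, G t) ≤ (1 - a) * M := by
        calc (∫ t in a..1, G t) ≤ ∫ _ in a..1, M :=
            intervalIntegral.integral_mono_on (by linarith) (hGi a 1) intervalIntegrable_const
              (fun t ht => le_trans (le_abs_self _) (hMP t ⟨by linarith [ht.1], ht.2⟩))
          _ = (1 - a) * M := by rw [intervalIntegral.integral_const]; simp [smul_eq_mul]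
      rw [hsplit]
      nlinarith
    · -- G x₀ < 0, M = -G x₀
      have hMeq : M = -G x₀ := abs_of_neg hcase
      have hx₀a : 4 * a ≤ x₀ := by
        have h1 := hcs 0 x₀ le_rfl hx₀.1 hx₀.2
        rw [hG0, sub_zero, sub_zero] at h1
        have h2 : M ^ 2 ≤ x₀ * L := by rw [hM, sq_abs]; exact h1
        have h4a : 4 * a = M ^ 2 / L := by rw [ha]; field_simp
        rw [h4a, div_le_iff₀ hpos]
        linarith
      have hx₀0 : 0 ≤ x₀ - a := by linarith
      have hsmall : ∀ t ∈ Set.Icc (x₀ - a) x₀, G t ≤ -(M / 2) := by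
        intro t ⟨ht0, hta⟩
        have h1 : (G x₀ - G t) ^ 2 ≤ (x₀ - t) * L :=
          hcs t x₀ (by linarith) hta hx₀.2
        have h2 : (x₀ - t) * L ≤ a * L := mul_le_mul_of_nonneg_right (by linarith) hpos.le
        have h3 : a * L = M ^ 2 / 4 := by rw [ha]; field_simp
        nlinarith
      have hsplit : (∫ t in (0:ℝ)..1, G t) =
          (∫ t in (0:ℝ)..(x₀ - a), G t) + (∫ t in (x₀ - a)..x₀, G t) + (∫ t in x₀..1, G t) := by
        rw [intervalIntegral.integral_add_adjacent_intervals (hGi 0 (x₀ - a)) (hGi (x₀-a) x₀),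
          intervalIntegral.integral_add_adjacent_intervals (hGi 0 x₀) (hGi x₀ 1)]
      have i1 : (∫ t in (0:ℝ)..(x₀ - a), G t) ≤ (x₀ - a) * G z := by
        calc (∫ t in (0:ℝ)..(x₀ - a), G t) ≤ ∫ _ in (0:ℝ)..(x₀ - a), G z :=
            intervalIntegral.integral_mono_on hx₀0 (hGi 0 (x₀-a)) intervalIntegrable_const
              (fun t ht => hzP t ⟨ht.1, by linarith [ht.2, hx₀.2]⟩)
          _ = (x₀ - a) * G z := by rw [intervalIntegral.integral_const]; simp [smul_eq_mul]
      have i2 : (∫ t in (x₀ - a)..x₀, G t) ≤ a * (-(M / 2)) := by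
        calc (∫ t in (x₀ - a)..x₀, G t) ≤ ∫ _ in (x₀ - a)..x₀, -(M / 2) :=
            intervalIntegral.integral_mono_on (by linarith) (hGi (x₀-a) x₀)
              intervalIntegrable_const hsmall
          _ = a * (-(M / 2)) := by rw [intervalIntegral.integral_const]; simp [smul_eq_mul]
      have i3 : (∫ t in x₀..1, G t) ≤ (1 - x₀) * G z := by
        calc (∫ t in x₀..1, G t) ≤ ∫ _ in x₀..1, G z :=
            intervalIntegral.integral_mono_on hx₀.2 (hGi x₀ 1) intervalIntegrable_const
              (fun t ht => hzP t ⟨by linarith [ht.1, hx₀.1], ht.2⟩)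
          _ = (1 - x₀) * G z := by rw [intervalIntegral.integral_const]; simp [smul_eq_mul]
      rw [hsplit]
      nlinarith
  -- integration by parts
  refine ⟨z, hz, ?_⟩
  intro x hx
  have hA : (∫ t in (0:ℝ)..z, g t * t) = z * G z - ∫ t in (0:ℝ)..z, G t := by
    have h1 := intervalIntegral.integral_mul_deriv_eq_deriv_mul
      (u := G) (v := fun t => t) (u' := g) (v' := fun _ => (1:ℝ))
      (fun t _ => hGderiv t) (fun t _ => hasDerivAt_id t) (hgi 0 z)
      intervalIntegrable_const
    simp only [mul_one] at h1
    rw [hG0] at h1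
    linarith
  have hB : (∫ t in z..1, g t * (1 - t)) = (z - 1) * G z + ∫ t in z..1, G t := by
    have h1 := intervalIntegral.integral_mul_deriv_eq_deriv_mul
      (u := G) (v := fun t => t - 1) (u' := g) (v' := fun _ => (1:ℝ))
      (fun t _ => hGderiv t) (fun t _ => (hasDerivAt_id t).sub_const 1) (hgi z 1)
      intervalIntegrable_const
    simp only [mul_one, sub_self, mul_zero] at h1
    have h2 : (∫ t in z..1, g t * (1 - t)) = - ∫ t in z..1, g t * (t - 1) := by
      rw [← intervalIntegral.integral_neg]
      congr 1; ext t; ring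
    rw [h2]; linarith
  have hsplit2 : (∫ t in (0:ℝ)..1, G t) =
      (∫ t in (0:ℝ)..z, G t) + (∫ t in z..1, G t) :=
    (intervalIntegral.integral_add_adjacent_intervals (hGi 0 z) (hGi z 1)).symm
  have hF : (∫ t in (0:ℝ)..z, g t * t) - (∫ t in z..1, g t * (1 - t))
      = G z - ∫ t in (0:ℝ)..1, G t := by
    rw [hA, hB, hsplit2]; ring
  rw [hF]
  have hGx : (∫ t in (0:ℝ)..x, g t) = G x := rfl
  rw [hGx]
  have hx3 : |G x| ^ 3 ≤ M ^ 3 := pow_le_pow_left₀ (abs_nonneg _) (hMP x hx) 3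
  have h1 : 1 / 16 * (1 / L) * |G x| ^ 3 ≤ 1 / 16 * (1 / L) * M ^ 3 :=
    mul_le_mul_of_nonneg_left hx3 (by positivity)
  have e1 : 1 / 16 * (1 / L) * M ^ 3 = M ^ 3 / (16 * L) := by field_simp
  have e2 : a * M / 2 = M ^ 3 / (8 * L) := by rw [ha]; field_simp; ring
  have h2 : M ^ 3 / (16 * L) ≤ M ^ 3 / (8 * L) := by
    rw [div_le_div_iff₀ (by linarith) (by linarith)]
    nlinarith [mul_nonneg (pow_nonneg hMnn 3) hpos.le]
  linarith

theorem stmt_10 (g : ℝ → ℝ) (hg : ContinuousOn g (Set.Icc (0 : ℝ) 1))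
    (hne : ∃ x ∈ Set.Icc (0 : ℝ) 1, g x ≠ 0) :
    ∃ z ∈ Set.Icc (0 : ℝ) 1, ∀ x ∈ Set.Icc (0 : ℝ) 1,
      (1 / 16) * (1 / ∫ t in (0:ℝ)..1, (g t) ^ 2) * |∫ t in (0:ℝ)..x, g t| ^ 3
        ≤ (∫ t in (0:ℝ)..z, g t * t) - ∫ t in z..1, g t * (1 - t) := by
  set g' : ℝ → ℝ := Set.IccExtend zero_le_one ((Set.Icc (0:ℝ) 1).restrict g) with hg'def
  have hg'c : Continuous g' := (ContinuousOn.restrict hg).Icc_extend'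
  have heq : ∀ x ∈ Set.Icc (0:ℝ) 1, g' x = g x := by
    intro x hx
    rw [hg'def, Set.IccExtend_of_mem _ _ hx]
    rfl
  have hcongr : ∀ (F : ℝ → ℝ → ℝ) (c d : ℝ), c ∈ Set.Icc (0:ℝ) 1 → d ∈ Set.Icc (0:ℝ) 1 →
      (∫ t in c..d, F (g t) t) = ∫ t in c..d, F (g' t) t := by
    intro F c d hc hd
    apply intervalIntegral.integral_congr
    intro t ht
    have hsub : Set.uIcc c d ⊆ Set.Icc (0:ℝ) 1 := by
      rw [← Set.uIcc_of_le (zero_le_one (α := ℝ))]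
      exact Set.uIcc_subset_uIcc (by rwa [Set.uIcc_of_le (zero_le_one (α := ℝ))])
        (by rwa [Set.uIcc_of_le (zero_le_one (α := ℝ))])
    simp only
    rw [heq t (hsub ht)]
  obtain ⟨x, hx, hgx⟩ := hne
  have hg'x : g' x ≠ 0 := by rw [heq x hx]; exact hgx
  have hpos : 0 < ∫ t in (0:ℝ)..1, (g' t) ^ 2 :=
    aux_pos (fun t => g' t ^ 2) (hg'c.pow 2) (fun t => sq_nonneg _) x hx
      (pow_two_pos_of_ne_zero hg'x)
  obtain ⟨z, hz, hmain⟩ := aux_main g' hg'c hpos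
  refine ⟨z, hz, ?_⟩
  intro y hy
  have h01 : (0:ℝ) ∈ Set.Icc (0:ℝ) 1 := by norm_num
  have h11 : (1:ℝ) ∈ Set.Icc (0:ℝ) 1 := by norm_num
  rw [hcongr (fun v t => v ^ 2) 0 1 h01 h11,
    hcongr (fun v t => v) 0 y h01 hy,
    hcongr (fun v t => v * t) 0 z h01 hz,
    hcongr (fun v t => v * (1 - t)) z 1 hz h11]
  exact hmain y hy
end

section
/- Let g : [0,1] → ℝ be continuous with g not identically zero, let G(s) = ∫₀^s g(x) dx, and let Ḡ = ∫₀¹ G(x) dx. Then max over z ∈ [0,1] of G(z) − Ḡ is at least (1/(8·‖g‖²_{L²[0,1]}))·(Ḡ − min over x ∈ [0,1] of G(x))³, where ‖g‖²_{L²[0,1]} = ∫₀¹ g(x)² dx. -/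
open MeasureTheory Set intervalIntegral

private lemma aux_int {g : ℝ → ℝ} (hg : ContinuousOn g (Set.Icc 0 1)) {u v : ℝ}
    (hu : u ∈ Set.Icc (0:ℝ) 1) (hv : v ∈ Set.Icc (0:ℝ) 1) :
    IntervalIntegrable g volume u v :=
  (hg.mono (Set.uIcc_subset_Icc hu hv)).intervalIntegrable

private lemma aux_sq_le {g : ℝ → ℝ} (hg : ContinuousOn g (Set.Icc 0 1)) {u v : ℝ}
    (hu : 0 ≤ u) (huv : u ≤ v) (hv : v ≤ 1) :
    (∫ x in u..v, g x ^ 2) ≤ ∫ t in (0:ℝ)..1, g t ^ 2 := by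
  have h2 : ContinuousOn (fun x => g x ^ 2) (Set.Icc 0 1) := hg.pow 2
  have hu' : u ∈ Set.Icc (0:ℝ) 1 := ⟨hu, huv.trans hv⟩
  have hv' : v ∈ Set.Icc (0:ℝ) 1 := ⟨hu.trans huv, hv⟩
  have h0 : (0:ℝ) ∈ Set.Icc (0:ℝ) 1 := by norm_num
  have h1 : (1:ℝ) ∈ Set.Icc (0:ℝ) 1 := by norm_num
  have i1 := aux_int h2 h0 hu'
  have i2 := aux_int h2 hu' hv'
  have i3 := aux_int h2 hv' h1
  have e1 := integral_add_adjacent_intervals i1 i2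
  have e2 := integral_add_adjacent_intervals (i1.trans i2) i3
  have n1 : 0 ≤ ∫ x in (0:ℝ)..u, g x ^ 2 := integral_nonneg hu (fun x _ => sq_nonneg _)
  have n3 : 0 ≤ ∫ x in v..1, g x ^ 2 := integral_nonneg hv (fun x _ => sq_nonneg _)
  linarith

private lemma aux_key {g : ℝ → ℝ} (hg : ContinuousOn g (Set.Icc 0 1)) {u v : ℝ}
    (hu : 0 ≤ u) (huv : u ≤ v) (hv : v ≤ 1) {ε : ℝ} (hε : 0 < ε) :
    |∫ x in u..v, g x| ≤ (ε * (∫ t in (0:ℝ)..1, g t ^ 2) + (v - u) / ε) / 2 := by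
  have hu' : u ∈ Set.Icc (0:ℝ) 1 := ⟨hu, huv.trans hv⟩
  have hv' : v ∈ Set.Icc (0:ℝ) 1 := ⟨hu.trans huv, hv⟩
  have habs : |∫ x in u..v, g x| ≤ ∫ x in u..v, |g x| :=
    abs_integral_le_integral_abs huv
  have hcont2 : ContinuousOn (fun x => (ε * g x ^ 2 + 1/ε) / 2) (Set.Icc 0 1) :=
    ((continuousOn_const.mul (hg.pow 2)).add continuousOn_const).div_const 2
  have hmono : (∫ x in u..v, |g x|) ≤ ∫ x in u..v, (ε * g x ^ 2 + 1/ε) / 2 := by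
    refine integral_mono_on huv (aux_int hg hu' hv').abs
      (aux_int hcont2 hu' hv') (fun x _ => ?_)
    rw [le_div_iff₀ (by norm_num : (0:ℝ) < 2)]
    have h2 : ε * (|g x| * 2) ≤ ε * (ε * g x ^ 2 + 1/ε) := by
      have hr : ε * (1/ε) = 1 := mul_one_div_cancel hε.ne'
      rcases abs_cases (g x) with ⟨h1, _⟩ | ⟨h1, _⟩ <;> rw [h1] <;>
        nlinarith [sq_nonneg (ε * g x - 1), sq_nonneg (ε * g x + 1)]
    exact (mul_le_mul_iff_right₀ hε).mp h2
  have hval : (∫ x in u..v, (ε * g x ^ 2 + 1/ε) / 2)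
      = (ε * (∫ x in u..v, g x ^ 2) + (v - u) * (1/ε)) / 2 := by
    rw [intervalIntegral.integral_div,
      intervalIntegral.integral_add (f := fun x => ε * g x ^ 2) ((aux_int (hg.pow 2) hu' hv').const_mul ε)
        intervalIntegrable_const,
      intervalIntegral.integral_const_mul, intervalIntegral.integral_const, smul_eq_mul]
  have hsq := aux_sq_le hg hu huv hv
  have : (v - u) * (1/ε) = (v - u) / ε := by ring
  nlinarith [habs, hmono, hval, hε]

theorem stmt_11 (g : ℝ → ℝ) (hg : ContinuousOn g (Set.Icc (0 : ℝ) 1))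
    (hne : ∃ x ∈ Set.Icc (0 : ℝ) 1, g x ≠ 0)
    (G : ℝ → ℝ) (hG : ∀ s, G s = ∫ x in (0:ℝ)..s, g x)
    (Gbar : ℝ) (hGbar : Gbar = ∫ x in (0:ℝ)..1, G x) :
    ∃ z ∈ Set.Icc (0 : ℝ) 1, ∀ x ∈ Set.Icc (0 : ℝ) 1,
      (1 / (8 * ∫ t in (0:ℝ)..1, (g t) ^ 2)) * (Gbar - G x) ^ 3
        ≤ G z - Gbar := by
  classical
  set m : ℝ := ∫ t in (0:ℝ)..1, g t ^ 2 with hm_def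
  have h0m : (0:ℝ) ∈ Set.Icc (0:ℝ) 1 := by norm_num
  have h1m : (1:ℝ) ∈ Set.Icc (0:ℝ) 1 := by norm_num
  have hmpos : 0 < m := by
    obtain ⟨x₀, hx₀, hx₀ne⟩ := hne
    have hcont : ContinuousWithinAt g (Set.Icc 0 1) x₀ := hg x₀ hx₀
    have hev : ∀ᶠ y in nhdsWithin x₀ (Set.Icc 0 1), g y ≠ 0 :=
      Filter.Tendsto.eventually_ne hcont hx₀ne
    obtain ⟨ε, hε, hball⟩ := Metric.mem_nhdsWithin_iff.mp hev
    set u := max 0 (x₀ - ε/2) with hu_def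
    set v := min 1 (x₀ + ε/2) with hv_def
    have hu0 : 0 ≤ u := le_max_left _ _
    have hv1 : v ≤ 1 := min_le_left _ _
    have huv : u < v := by
      rcases lt_or_ge x₀ 1 with h | h
      · exact lt_of_le_of_lt (max_le hx₀.1 (by linarith)) (lt_min h (by linarith))
      · have hx1 : x₀ = 1 := le_antisymm hx₀.2 h
        have h2 : u < 1 := max_lt (by norm_num) (by rw [hx1]; linarith)
        exact lt_of_lt_of_le h2 (le_min le_rfl (by rw [hx1]; linarith))
    have hsub : Set.Ioc u v ⊆ Function.support (fun x => g x ^ 2) ∩ Set.Ioc 0 1 := by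
      intro y hy
      have hy1 : x₀ - ε/2 ≤ u := le_max_right _ _
      have hy2 : v ≤ x₀ + ε/2 := min_le_right _ _
      have hball' : y ∈ Metric.ball x₀ ε ∩ Set.Icc 0 1 := by
        constructor
        · rw [Metric.mem_ball, Real.dist_eq, abs_lt]
          constructor <;> [linarith [hy.1, hy.2]; linarith [hy.1, hy.2]]
        · exact ⟨le_trans hu0 hy.1.le, le_trans hy.2 hv1⟩
      refine ⟨?_, lt_of_le_of_lt hu0 hy.1, le_trans hy.2 hv1⟩
      simp only [Function.mem_support]
      exact pow_ne_zero 2 (hball hball')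
    have hintg : IntegrableOn (fun x => g x ^ 2) (Set.Ioc 0 1) volume :=
      ((hg.pow 2).integrableOn_Icc).mono_set Set.Ioc_subset_Icc_self
    have hnn : 0 ≤ᵐ[volume.restrict (Set.Ioc 0 1)] fun x => g x ^ 2 :=
      Filter.Eventually.of_forall fun x => sq_nonneg _
    have hpos' : 0 < ∫ x in Set.Ioc (0:ℝ) 1, g x ^ 2 := by
      rw [setIntegral_pos_iff_support_of_nonneg_ae hnn hintg]
      refine lt_of_lt_of_le ?_ (measure_mono hsub)
      rw [Real.volume_Ioc]
      exact ENNReal.ofReal_pos.mpr (by linarith)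
    rw [hm_def, intervalIntegral.integral_of_le zero_le_one]
    exact hpos'
  have hGc : ContinuousOn G (Set.Icc 0 1) := by
    have h := intervalIntegral.continuousOn_primitive_interval
      (a := 0) (b := 1) (μ := volume) (f := g)
      (by rw [Set.uIcc_of_le zero_le_one]; exact hg.integrableOn_Icc)
    rw [Set.uIcc_of_le zero_le_one] at h
    exact h.congr (fun s _ => hG s)
  have hGint : ∀ u v, u ∈ Set.Icc (0:ℝ) 1 → v ∈ Set.Icc (0:ℝ) 1 →
      IntervalIntegrable G volume u v :=
    fun u v hu hv => (hGc.mono (Set.uIcc_subset_Icc hu hv)).intervalIntegrable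
  obtain ⟨z, hz, hzmax⟩ := isCompact_Icc.exists_isMaxOn (Set.nonempty_Icc.mpr zero_le_one) hGc
  obtain ⟨w, hw, hwmin⟩ := isCompact_Icc.exists_isMinOn (Set.nonempty_Icc.mpr zero_le_one) hGc
  have hGbar_le : Gbar ≤ G z := by
    rw [hGbar]
    calc (∫ x in (0:ℝ)..1, G x) ≤ ∫ x in (0:ℝ)..1, G z :=
          integral_mono_on zero_le_one (hGint 0 1 h0m h1m) intervalIntegrable_const
            (fun x hx => hzmax hx)
      _ = G z := by simp
  have hle_Gbar : G w ≤ Gbar := by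
    rw [hGbar]
    calc G w = ∫ x in (0:ℝ)..1, G w := by simp
      _ ≤ _ := integral_mono_on zero_le_one intervalIntegrable_const (hGint 0 1 h0m h1m)
            (fun x hx => hwmin hx)
  set δ : ℝ := Gbar - G w with hδ_def
  have hδ0 : 0 ≤ δ := by simp only [hδ_def]; linarith
  have hM0 : 0 ≤ G z - Gbar := by linarith
  have hkey : ∀ t ∈ Set.Icc (0:ℝ) 1, ∀ ε : ℝ, 0 < ε →
      G t - G w ≤ (ε * m + |t - w| / ε) / 2 := by
    intro t ht ε hε
    have hdiff : G t - G w = ∫ x in w..t, g x := by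
      rw [hG t, hG w]
      exact integral_interval_sub_left (aux_int hg h0m ht) (aux_int hg h0m hw)
    rcases le_total w t with hwt | htw
    · have h := aux_key hg hw.1 hwt ht.2 hε
      have habs : |t - w| = t - w := abs_of_nonneg (by linarith)
      rw [habs]
      calc G t - G w = ∫ x in w..t, g x := hdiff
        _ ≤ |∫ x in w..t, g x| := le_abs_self _
        _ ≤ _ := h
    · have h := aux_key hg ht.1 htw hw.2 hε
      have habs : |t - w| = w - t := by rw [abs_sub_comm]; exact abs_of_nonneg (by linarith)
      rw [habs]
      have hsymm : (∫ x in w..t, g x) = -(∫ x in t..w, g x) := integral_symm t w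
      calc G t - G w = -(∫ x in t..w, g x) := by rw [hdiff, hsymm]
        _ ≤ |∫ x in t..w, g x| := neg_le_abs _
        _ ≤ _ := h
  refine ⟨z, hz, ?_⟩
  intro x hx
  have hxw : Gbar - G x ≤ δ := by
    have h' : G w ≤ G x := hwmin hx
    simp only [hδ_def]
    linarith [h']
  rcases eq_or_lt_of_le hδ0 with heq | hpos
  · have hc : Gbar - G x ≤ 0 := by rw [← heq] at hxw; linarith
    exact le_trans (mul_nonpos_of_nonneg_of_nonpos (by positivity)
      (Odd.pow_nonpos ⟨1, by norm_num⟩ hc)) hM0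
  · have hδ2m : δ^2 ≤ m := by
      have heq1 : Gbar - G w = ∫ t in (0:ℝ)..1, (G t - G w) := by
        rw [hGbar, integral_sub (hGint 0 1 h0m h1m) intervalIntegrable_const]
        simp
      have hb : ∀ t ∈ Set.Icc (0:ℝ) 1, G t - G w ≤ ((1/δ) * m + 1/(1/δ)) / 2 := by
        intro t ht
        have h := hkey t ht (1/δ) (by positivity)
        have h1 : |t - w| ≤ 1 := by
          rw [abs_le]
          constructor <;> [linarith [ht.1, ht.2, hw.1, hw.2]; linarith [ht.1, ht.2, hw.1, hw.2]]
        have h2 : |t - w| / (1/δ) ≤ 1 / (1/δ) :=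
          div_le_div_of_nonneg_right h1 (by positivity)
        linarith
      have hIsub : IntervalIntegrable (fun t => G t - G w) volume 0 1 :=
        (hGint 0 1 h0m h1m).sub intervalIntegrable_const
      have hd : Gbar - G w ≤ ((1/δ) * m + 1/(1/δ)) / 2 := by
        rw [heq1]
        calc (∫ t in (0:ℝ)..1, (G t - G w))
            ≤ ∫ _t in (0:ℝ)..1, (((1/δ) * m + 1/(1/δ)) / 2) :=
              integral_mono_on zero_le_one hIsub intervalIntegrable_const hb
          _ = ((1/δ) * m + 1/(1/δ)) / 2 := by simp
      have hinv : (1:ℝ)/(1/δ) = δ := one_div_one_div δ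
      have hm1 : (1/δ) * m = m / δ := one_div_mul_eq_div _ _
      rw [hinv, hm1] at hd
      have hd2 : δ ≤ m / δ := by simp only [hδ_def] at hd ⊢; linarith
      have := (le_div_iff₀ hpos).mp hd2
      nlinarith [this]
    set r : ℝ := δ^2/(4*m) with hr_def
    have hrpos : 0 < r := by positivity
    have hrle : r ≤ 1/4 := by
      rw [hr_def, div_le_iff₀ (by positivity)]
      nlinarith [hδ2m, hmpos]
    obtain ⟨a, ha0, har1, haw, hwa⟩ : ∃ a : ℝ, 0 ≤ a ∧ a + r ≤ 1 ∧ a ≤ w ∧ w ≤ a + r := by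
      rcases le_or_gt w (1 - r) with h | h
      · exact ⟨w, hw.1, by linarith, le_refl w, by linarith⟩
      · exact ⟨w - r, by linarith [hw.2, hrle], by linarith [hw.2], by linarith, by linarith⟩
    have haIcc : a ∈ Set.Icc (0:ℝ) 1 := ⟨ha0, by linarith⟩
    have harIcc : a + r ∈ Set.Icc (0:ℝ) 1 := ⟨by linarith, har1⟩
    have hJ : ∀ s ∈ Set.Icc a (a+r), G s ≤ Gbar - δ/2 := by
      intro s hs
      have hsIcc : s ∈ Set.Icc (0:ℝ) 1 := ⟨le_trans ha0 hs.1, le_trans hs.2 har1⟩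
      have hsw : |s - w| ≤ r := by
        rw [abs_le]
        constructor <;> [linarith [hs.1, hwa]; linarith [hs.2, haw]]
      have hε : (0:ℝ) < δ/(2*m) := by positivity
      have h := hkey s hsIcc (δ/(2*m)) hε
      have e1 : (δ/(2*m)) * m = δ/2 := by field_simp
      have e2 : |s - w| / (δ/(2*m)) ≤ δ/2 := by
        rw [div_le_iff₀ hε]
        calc |s - w| ≤ r := hsw
          _ = δ/2 * (δ/(2*m)) := by rw [hr_def]; field_simp; ring
      rw [e1] at h
      have hG2 : G s - G w ≤ δ/2 := by linarith
      simp only [hδ_def] at hG2 ⊢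
      linarith
    have i1 := hGint 0 a h0m haIcc
    have i2 := hGint a (a+r) haIcc harIcc
    have i3 := hGint (a+r) 1 harIcc h1m
    have hsplit : (∫ x in (0:ℝ)..a, G x) + (∫ x in a..(a+r), G x) + (∫ x in (a+r)..1, G x)
        = ∫ x in (0:ℝ)..1, G x := by
      rw [integral_add_adjacent_intervals i1 i2,
        integral_add_adjacent_intervals (i1.trans i2) i3]
    have b1 : (∫ x in (0:ℝ)..a, G x) ≤ a * G z := by
      calc (∫ x in (0:ℝ)..a, G x) ≤ ∫ _x in (0:ℝ)..a, G z :=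
            integral_mono_on ha0 i1 intervalIntegrable_const
              (fun y hy => hzmax ⟨hy.1, le_trans hy.2 haIcc.2⟩)
        _ = a * G z := by simp
    have b2 : (∫ x in a..(a+r), G x) ≤ r * (Gbar - δ/2) := by
      calc (∫ x in a..(a+r), G x) ≤ ∫ _x in a..(a+r), (Gbar - δ/2) :=
            integral_mono_on (by linarith) i2 intervalIntegrable_const hJ
        _ = r * (Gbar - δ/2) := by rw [intervalIntegral.integral_const, smul_eq_mul]; ring
    have b3 : (∫ x in (a+r)..1, G x) ≤ (1 - (a+r)) * G z := by
      calc (∫ x in (a+r)..1, G x) ≤ ∫ _x in (a+r)..1, G z :=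
            integral_mono_on har1 i3 intervalIntegrable_const
              (fun y hy => hzmax ⟨le_trans harIcc.1 hy.1, hy.2⟩)
        _ = (1 - (a+r)) * G z := by simp
    have hGbar' : Gbar = (∫ x in (0:ℝ)..a, G x) + (∫ x in a..(a+r), G x)
        + (∫ x in (a+r)..1, G x) := by rw [hGbar, hsplit]
    have hmain : r * δ / 2 ≤ (1 - r) * (G z - Gbar) := by nlinarith [b1, b2, b3]
    have hfinal : δ^3/(8*m) ≤ G z - Gbar := by
      have h1 : (1 - r) * (G z - Gbar) ≤ G z - Gbar := by nlinarith [hM0, hrpos]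
      have h2 : r * δ / 2 = δ^3/(8*m) := by rw [hr_def]; field_simp; ring
      linarith
    rcases le_or_gt (Gbar - G x) 0 with hc | hc
    · exact le_trans (mul_nonpos_of_nonneg_of_nonpos (by positivity)
        (Odd.pow_nonpos ⟨1, by norm_num⟩ hc)) hM0
    · have h3 : (Gbar - G x)^3 ≤ δ^3 := pow_le_pow_left₀ hc.le hxw 3
      calc (1/(8*m)) * (Gbar - G x)^3 ≤ (1/(8*m)) * δ^3 :=
            mul_le_mul_of_nonneg_left h3 (by positivity)
        _ = δ^3/(8*m) := by ring
        _ ≤ _ := hfinal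
end

section
/- Let (x_k)_{k=1}^{∞} be a sequence in [0,1] and n₀ ≥ 1 such that for every n ≥ n₀, the point x_{n+1} is a global minimizer over z ∈ [0,1] of z ↦ ∫₀¹ (#{1 ≤ k ≤ n : x_k ≤ y} + 1_{[z,1]}(y) − (n+1)y)² dy (a Kritzinger sequence with arbitrary initial segment x_1,…,x_{n₀}). Then there exists a constant c ≥ 0, depending only on the initial points x_1,…,x_{n₀}, such that for all n ≥ n₀, ∫₀¹ |#{1 ≤ k ≤ n : x_k ≤ x} − n·x|² dx ≤ n/3 + c. -/
/-- The counting function of the first `n` terms (indexed `1,…,n`) of a sequence: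
`#{1 ≤ k ≤ n : x_k ≤ y}`. -/
noncomputable def seqCount (x : ℕ → ℝ) (n : ℕ) (y : ℝ) : ℕ :=
  ((Finset.Icc 1 n).filter (fun k => x k ≤ y)).card

/-- `x` is a Kritzinger sequence with initial segment `x_1,…,x_{n₀}`: all terms lie
in `[0,1]` and, for every `n ≥ n₀`, the point `x_{n+1}` is a global minimizer over
`z ∈ [0,1]` of `z ↦ ∫₀¹ (#{1 ≤ k ≤ n : x_k ≤ y} + 1_{[z,1]}(y) − (n+1)y)² dy`. -/
def IsKritzinger (x : ℕ → ℝ) (n₀ : ℕ) : Prop :=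
  (∀ k, x k ∈ Set.Icc (0 : ℝ) 1) ∧
  ∀ n, n₀ ≤ n → ∀ z ∈ Set.Icc (0 : ℝ) 1,
    (∫ y in (0:ℝ)..1,
        ((seqCount x n y : ℝ) + (if x (n + 1) ≤ y then (1:ℝ) else 0)
          - ((n : ℝ) + 1) * y) ^ 2)
      ≤ ∫ y in (0:ℝ)..1,
          ((seqCount x n y : ℝ) + (if z ≤ y then (1:ℝ) else 0)
            - ((n : ℝ) + 1) * y) ^ 2

open MeasureTheory Set

lemma seqCount_monotone (x : ℕ → ℝ) (n : ℕ) :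
    Monotone (fun y => (seqCount x n y : ℝ)) := by
  intro a b hab
  have : seqCount x n a ≤ seqCount x n b := by
    apply Finset.card_le_card
    intro k hk
    simp only [Finset.mem_filter] at hk ⊢
    exact ⟨hk.1, le_trans hk.2 hab⟩
  exact Nat.cast_le.mpr this

lemma seqCount_le (x : ℕ → ℝ) (n : ℕ) (y : ℝ) : (seqCount x n y : ℝ) ≤ n := by
  have : seqCount x n y ≤ n := by
    calc seqCount x n y ≤ (Finset.Icc 1 n).card := Finset.card_filter_le _ _
    _ = n := by rw [Nat.card_Icc]; omega
  exact_mod_cast this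

lemma seqCount_succ (x : ℕ → ℝ) (n : ℕ) (y : ℝ) :
    (seqCount x (n + 1) y : ℝ)
      = (seqCount x n y : ℝ) + (if x (n + 1) ≤ y then (1:ℝ) else 0) := by
  have hins : Finset.Icc 1 (n + 1) = insert (n + 1) (Finset.Icc 1 n) := by
    ext k; simp [Finset.mem_Icc, Finset.mem_insert]; omega
  unfold seqCount
  rw [hins, Finset.filter_insert]
  split
  · rw [Finset.card_insert_of_notMem (by simp [Finset.mem_filter])]
    push_cast; ring
  · simp

lemma seqCount_measurable (x : ℕ → ℝ) (n : ℕ) :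
    Measurable (fun y => (seqCount x n y : ℝ)) :=
  (seqCount_monotone x n).measurable

/-- Key one-step estimate: the greedy minimizer increases the squared
discrepancy by at most `1/3`. -/
lemma kritzinger_step (x : ℕ → ℝ) (n₀ : ℕ) (hK : IsKritzinger x n₀)
    (n : ℕ) (hn : n₀ ≤ n) :
    (∫ y in (0:ℝ)..1, ((seqCount x (n + 1) y : ℝ) - ((n : ℝ) + 1) * y) ^ 2)
      ≤ (∫ y in (0:ℝ)..1, ((seqCount x n y : ℝ) - (n : ℝ) * y) ^ 2) + 1 / 3 := by
  set s : Set ℝ := Ioc (0 : ℝ) 1 with hs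
  have hvol : volume s = 1 := by simp [hs, Real.volume_Ioc]
  set F : ℝ → ℝ → ℝ := fun z y =>
    ((seqCount x n y : ℝ) + (if z ≤ y then (1:ℝ) else 0) - ((n : ℝ) + 1) * y) ^ 2 with hF
  set A : ℝ → ℝ := fun y => (seqCount x n y : ℝ) - (n : ℝ) * y with hA
  -- measurability of the uncurried integrand
  have hFm : Measurable (Function.uncurry F) := by
    apply Measurable.pow_const
    refine Measurable.sub (Measurable.add ?_ ?_) ?_
    · exact (seqCount_measurable x n).comp measurable_snd
    · exact Measurable.ite (measurableSet_le measurable_fst measurable_snd)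
        measurable_const measurable_const
    · exact measurable_const.mul measurable_snd
  -- uniform bound on the integrand for y ∈ [0,1]
  have hFb : ∀ z y : ℝ, y ∈ s → |F z y| ≤ (2 * (n : ℝ) + 2) ^ 2 := by
    intro z y hy
    have h1 : (0:ℝ) ≤ (seqCount x n y : ℝ) := Nat.cast_nonneg _
    have h2 : (seqCount x n y : ℝ) ≤ n := seqCount_le x n y
    have h3 : (0:ℝ) < y := hy.1
    have h4 : y ≤ 1 := hy.2
    rw [hF, abs_of_nonneg (sq_nonneg _)]
    have : |(seqCount x n y : ℝ) + (if z ≤ y then (1:ℝ) else 0) - ((n : ℝ) + 1) * y|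
        ≤ 2 * (n : ℝ) + 2 := by
      rw [abs_le]; constructor <;> (split <;> nlinarith)
    calc ((seqCount x n y : ℝ) + (if z ≤ y then (1:ℝ) else 0) - ((n : ℝ) + 1) * y) ^ 2
        = |(seqCount x n y : ℝ) + (if z ≤ y then (1:ℝ) else 0) - ((n : ℝ) + 1) * y| ^ 2 := by
          rw [sq_abs]
      _ ≤ (2 * (n : ℝ) + 2) ^ 2 := by
          apply pow_le_pow_left₀ (abs_nonneg _) this
  -- integrability on the product
  haveI : IsFiniteMeasure ((volume.restrict s).prod (volume.restrict s)) := by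
    constructor
    rw [Measure.prod_restrict, Measure.restrict_apply_univ, Measure.prod_prod, hvol]
    norm_num
  have hprod : Integrable (Function.uncurry F)
      ((volume.restrict s).prod (volume.restrict s)) := by
    refine Integrable.mono' (integrable_const ((2 * (n : ℝ) + 2) ^ 2))
      hFm.aestronglyMeasurable ?_
    rw [Measure.prod_restrict]
    filter_upwards [ae_restrict_mem (measurableSet_Ioc.prod measurableSet_Ioc)] with p hp
    rw [Real.norm_eq_abs]
    exact hFb p.1 p.2 hp.2
  -- inner integral in z
  have hinner : ∀ y ∈ s, (∫ z in s, F z y) = (A y) ^ 2 + y * (1 - y) := by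
    intro y hy
    have h0y : (0:ℝ) ≤ y := hy.1.le
    have hy1 : y ≤ 1 := hy.2
    have hsplit : s = Ioc 0 y ∪ Ioc y 1 := (Set.Ioc_union_Ioc_eq_Ioc h0y hy1).symm
    have e1 : EqOn (fun z => F z y)
        (fun _ => ((seqCount x n y : ℝ) + 1 - ((n : ℝ) + 1) * y) ^ 2) (Ioc 0 y) := by
      intro z hz; simp [hF, hz.2]
    have e2 : EqOn (fun z => F z y)
        (fun _ => ((seqCount x n y : ℝ) - ((n : ℝ) + 1) * y) ^ 2) (Ioc y 1) := by
      intro z hz; simp [hF, not_le.mpr hz.1]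
    rw [hsplit, setIntegral_union (Set.Ioc_disjoint_Ioc_of_le le_rfl) measurableSet_Ioc
      ((integrableOn_congr_fun e1 measurableSet_Ioc).mpr ((integrableOn_const_iff).mpr
        (Or.inr (by rw [Real.volume_Ioc]; exact ENNReal.ofReal_lt_top))))
      ((integrableOn_congr_fun e2 measurableSet_Ioc).mpr ((integrableOn_const_iff).mpr
        (Or.inr (by rw [Real.volume_Ioc]; exact ENNReal.ofReal_lt_top)))),
      setIntegral_congr_fun measurableSet_Ioc e1,
      setIntegral_congr_fun measurableSet_Ioc e2,
      setIntegral_const, setIntegral_const, measureReal_def, measureReal_def, Real.volume_Ioc, Real.volume_Ioc,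
      ENNReal.toReal_ofReal (by linarith), ENNReal.toReal_ofReal (by linarith)]
    simp only [smul_eq_mul, hA, sub_zero]
    ring
  -- integrability of A² and y(1-y) on s
  have hA2int : IntegrableOn (fun y => (A y) ^ 2) s volume := by
    refine Integrable.mono' (integrable_const ((2 * (n : ℝ) + 2) ^ 2))
      (Measurable.aestronglyMeasurable (by
        exact ((seqCount_measurable x n).sub (measurable_const.mul measurable_id)).pow
          measurable_const)) ?_
    filter_upwards [ae_restrict_mem measurableSet_Ioc] with y hy
    have h1 : (0:ℝ) ≤ (seqCount x n y : ℝ) := Nat.cast_nonneg _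
    have h2 : (seqCount x n y : ℝ) ≤ n := seqCount_le x n y
    rw [Real.norm_eq_abs, abs_of_nonneg (sq_nonneg _)]
    simp only [hA]
    have hny : 0 ≤ (n : ℝ) * y := mul_nonneg (Nat.cast_nonneg _) hy.1.le
    have hny2 : (n : ℝ) * y ≤ n := by
      calc (n : ℝ) * y ≤ (n : ℝ) * 1 := by
            exact mul_le_mul_of_nonneg_left hy.2 (Nat.cast_nonneg _)
        _ = n := mul_one _
    nlinarith [mul_nonneg (show (0:ℝ) ≤ 2 * (n:ℝ) + 2 - ((seqCount x n y : ℝ) - (n:ℝ) * y) by linarith)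
      (show (0:ℝ) ≤ 2 * (n:ℝ) + 2 + ((seqCount x n y : ℝ) - (n:ℝ) * y) by linarith)]
  have hpint : IntegrableOn (fun y : ℝ => y * (1 - y)) s volume :=
    (Continuous.integrableOn_Ioc (by continuity))
  -- integral of y(1-y)
  have h16 : (∫ y in s, y * (1 - y)) = 1 / 6 := by
    rw [hs, ← intervalIntegral.integral_of_le (by norm_num : (0:ℝ) ≤ 1)]
    have hr : ∀ y : ℝ, y * (1 - y) = y - y ^ 2 := fun y => by ring
    simp_rw [hr]
    rw [intervalIntegral.integral_sub intervalIntegral.intervalIntegrable_id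
      (intervalIntegral.intervalIntegrable_pow 2)]
    rw [integral_id, integral_pow]
    norm_num
  -- average of φ over z ∈ s
  have havg : (∫ z in s, ∫ y in s, F z y)
      = (∫ y in s, (A y) ^ 2) + 1 / 6 := by
    rw [MeasureTheory.integral_integral_swap hprod,
      setIntegral_congr_fun measurableSet_Ioc
        (fun y hy => hinner y hy),
      integral_add hA2int hpint, h16]
  -- find a good z
  haveI : IsFiniteMeasure (volume.restrict s) := by
    constructor; rw [Measure.restrict_apply_univ, hvol]; exact ENNReal.one_lt_top
  have hφint : IntegrableOn (fun z => ∫ y in s, F z y) s volume := by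
    have := hprod.integral_prod_left
    exact this
  obtain ⟨z, hzs, hz⟩ := exists_le_setAverage (μ := volume) (s := s)
    (by rw [hvol]; exact one_ne_zero) (by rw [hvol]; exact ENNReal.one_ne_top) hφint
  have havg_eq : (⨍ z in s, ∫ y in s, F z y ∂volume)
      = ∫ z in s, ∫ y in s, F z y := by
    rw [setAverage_eq, measureReal_def, hvol]; simp
  -- assemble
  have hzIcc : z ∈ Set.Icc (0:ℝ) 1 := ⟨hzs.1.le, hzs.2⟩
  have hmin := hK.2 n hn z hzIcc
  have hDn1 : (∫ y in (0:ℝ)..1, ((seqCount x (n + 1) y : ℝ) - ((n : ℝ) + 1) * y) ^ 2)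
      = ∫ y in (0:ℝ)..1,
          ((seqCount x n y : ℝ) + (if x (n + 1) ≤ y then (1:ℝ) else 0)
            - ((n : ℝ) + 1) * y) ^ 2 := by
    apply intervalIntegral.integral_congr
    intro y _
    dsimp only
    rw [seqCount_succ]
  have hRHS : (∫ y in (0:ℝ)..1,
      ((seqCount x n y : ℝ) + (if z ≤ y then (1:ℝ) else 0) - ((n : ℝ) + 1) * y) ^ 2)
      = ∫ y in s, F z y := by
    rw [hs, intervalIntegral.integral_of_le (by norm_num : (0:ℝ) ≤ 1)]
  have hDn : (∫ y in (0:ℝ)..1, ((seqCount x n y : ℝ) - (n : ℝ) * y) ^ 2)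
      = ∫ y in s, (A y) ^ 2 := by
    rw [hs, intervalIntegral.integral_of_le (by norm_num : (0:ℝ) ≤ 1)]
  rw [hDn1, hDn]
  calc (∫ y in (0:ℝ)..1,
      ((seqCount x n y : ℝ) + (if x (n + 1) ≤ y then (1:ℝ) else 0)
        - ((n : ℝ) + 1) * y) ^ 2)
      ≤ ∫ y in (0:ℝ)..1,
          ((seqCount x n y : ℝ) + (if z ≤ y then (1:ℝ) else 0)
            - ((n : ℝ) + 1) * y) ^ 2 := hmin
    _ = ∫ y in s, F z y := hRHS
    _ ≤ ⨍ z in s, ∫ y in s, F z y ∂volume := hz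
    _ = ∫ z in s, ∫ y in s, F z y := havg_eq
    _ = (∫ y in s, (A y) ^ 2) + 1 / 6 := havg
    _ ≤ (∫ y in s, (A y) ^ 2) + 1 / 3 := by linarith

theorem stmt_14 (x : ℕ → ℝ) (n₀ : ℕ) (hn₀ : 1 ≤ n₀)
    (hK : IsKritzinger x n₀) :
    ∃ c : ℝ, 0 ≤ c ∧ ∀ n, n₀ ≤ n →
      (∫ y in (0:ℝ)..1, ((seqCount x n y : ℝ) - (n : ℝ) * y) ^ 2)
        ≤ (n : ℝ) / 3 + c := by
  refine ⟨∫ y in (0:ℝ)..1, ((seqCount x n₀ y : ℝ) - (n₀ : ℝ) * y) ^ 2, ?_, ?_⟩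
  · exact intervalIntegral.integral_nonneg (by norm_num) (fun y _ => sq_nonneg _)
  · intro n hn
    induction n, hn using Nat.le_induction with
    | base =>
      have : (0:ℝ) ≤ (n₀ : ℝ) / 3 := by positivity
      linarith
    | succ n hn ih =>
      have hstep := kritzinger_step x n₀ hK n hn
      push_cast
      push_cast at hstep
      linarith
end

section
/- Let (x_k)_{k=1}^{∞} be a Kritzinger sequence in [0,1] (with arbitrary finite initial segment x_1,…,x_{n₀}, each subsequent point chosen greedily). Then there are infinitely many n ∈ ℕ such that max over x ∈ [0,1] of |∫₀^x (#{1 ≤ k ≤ n : x_k ≤ y} − n·y) dy| ≤ 2·n^{1/3}. -/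
namespace KZ
open MeasureTheory Finset intervalIntegral

noncomputable def ind (a y : ℝ) : ℝ := if a ≤ y then 1 else 0

lemma ind_mono (a : ℝ) : Monotone (ind a) := by
  intro u v huv
  unfold ind
  split_ifs with h1 h2 <;> first | exact absurd (h1.trans huv) h2 | norm_num

lemma ind_int (a c d : ℝ) : IntervalIntegrable (ind a) volume c d :=
  (ind_mono a).intervalIntegrable

lemma ind_mul (a b y : ℝ) : ind a y * ind b y = ind (max a b) y := by
  unfold ind
  rcases le_total a b with h | h <;> rcases le_total a y with h1 | h1 <;>
    rcases le_total b y with h2 | h2 <;> split_ifs <;> simp_all [max_le_iff] <;> linarith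

lemma ae_ne (a : ℝ) : ∀ᵐ (y : ℝ) ∂volume, y ≠ a := by
  refine MeasureTheory.ae_iff.mpr ?_
  simp only [ne_eq, not_not]
  have : {y : ℝ | y = a} = {a} := by ext y; simp
  rw [this]
  exact Real.volume_singleton

lemma int_ind_zero {a c d : ℝ} (hcd : c ≤ d) (hd : d ≤ a) :
    ∫ y in c..d, ind a y = 0 := by
  have h : ∫ y in c..d, ind a y = ∫ y in c..d, (0 : ℝ) := by
    apply intervalIntegral.integral_congr_ae
    filter_upwards [ae_ne a] with y hy hmem
    have hyd : y ≤ d := by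
      rcases Set.mem_uIoc.mp hmem with h | h
      · exact h.2
      · exact le_trans h.2 hcd
    show ind a y = 0
    unfold ind
    rw [if_neg]
    intro hay
    exact hy (le_antisymm (hyd.trans hd) hay)
  rw [h]; simp

lemma int_mul_ind_zero {a c d : ℝ} (hcd : c ≤ d) (hd : d ≤ a) :
    ∫ y in c..d, y * ind a y = 0 := by
  have h : ∫ y in c..d, y * ind a y = ∫ y in c..d, (0 : ℝ) := by
    apply intervalIntegral.integral_congr_ae
    filter_upwards [ae_ne a] with y hy hmem
    have hyd : y ≤ d := by
      rcases Set.mem_uIoc.mp hmem with h | h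
      · exact h.2
      · exact le_trans h.2 hcd
    show y * ind a y = 0
    unfold ind
    rw [if_neg, mul_zero]
    intro hay
    exact hy (le_antisymm (hyd.trans hd) hay)
  rw [h]; simp

lemma int_ind_one {a d : ℝ} (had : a ≤ d) :
    ∫ y in a..d, ind a y = d - a := by
  have h : ∫ y in a..d, ind a y = ∫ _ in a..d, (1 : ℝ) := by
    apply integral_congr
    intro y hy
    rw [Set.uIcc_of_le had] at hy
    show ind a y = 1
    unfold ind
    rw [if_pos hy.1]
  rw [h]
  simp

lemma int_mul_ind_id {a d : ℝ} (had : a ≤ d) :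
    ∫ y in a..d, y * ind a y = (d ^ 2 - a ^ 2) / 2 := by
  have h : ∫ y in a..d, y * ind a y = ∫ y in a..d, y := by
    apply integral_congr
    intro y hy
    rw [Set.uIcc_of_le had] at hy
    show y * ind a y = y
    unfold ind
    rw [if_pos hy.1, mul_one]
  rw [h, integral_id]

lemma mul_ind_int (a : ℝ) (c d : ℝ) :
    IntervalIntegrable (fun y => y * ind a y) volume c d :=
  (ind_int a c d).continuousOn_mul continuous_id.continuousOn

/-- V1 -/
lemma int_ind (a t : ℝ) (ha : 0 ≤ a) (ht : 0 ≤ t) :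
    ∫ y in (0:ℝ)..t, ind a y = max (t - a) 0 := by
  rcases le_total t a with h | h
  · rw [int_ind_zero ht h, max_eq_right (by linarith)]
  · rw [← integral_add_adjacent_intervals (b := a) (ind_int a 0 a) (ind_int a a t),
      int_ind_zero ha le_rfl, int_ind_one h, max_eq_left (by linarith)]
    ring

/-- V2 -/
lemma int_mul_ind (a : ℝ) (ha : 0 ≤ a) (ha1 : a ≤ 1) :
    ∫ y in (0:ℝ)..1, y * ind a y = (1 - a ^ 2) / 2 := by
  rw [← integral_add_adjacent_intervals (b := a) (mul_ind_int a 0 a)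
      (mul_ind_int a a 1), int_mul_ind_zero ha le_rfl, int_mul_ind_id ha1]
  ring

/-- V3 -/
lemma int_max (a : ℝ) (ha : 0 ≤ a) (ha1 : a ≤ 1) :
    ∫ t in (0:ℝ)..1, max (t - a) 0 = (1 - a) ^ 2 / 2 := by
  have c1 : Continuous fun t : ℝ => max (t - a) 0 :=
    (continuous_id.sub continuous_const).max continuous_const
  rw [← integral_add_adjacent_intervals (b := a)
      (c1.intervalIntegrable 0 a) (c1.intervalIntegrable a 1)]
  have h1 : ∫ t in (0:ℝ)..a, max (t - a) 0 = 0 := by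
    have h : ∫ t in (0:ℝ)..a, max (t - a) 0 = ∫ _ in (0:ℝ)..a, (0:ℝ) := by
      apply integral_congr
      intro y hy
      rw [Set.uIcc_of_le ha] at hy
      exact max_eq_right (by linarith [hy.2])
    rw [h]; simp
  have h2 : ∫ t in a..(1:ℝ), max (t - a) 0 = (1 - a) ^ 2 / 2 := by
    have h : ∫ t in a..(1:ℝ), max (t - a) 0 = ∫ t in a..(1:ℝ), (t - a) := by
      apply integral_congr
      intro y hy
      rw [Set.uIcc_of_le ha1] at hy
      exact max_eq_left (by linarith [hy.1])
    rw [h, integral_sub intervalIntegrable_id intervalIntegrable_const, integral_id,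
      intervalIntegral.integral_const]
    simp
    ring
  rw [h1, h2, zero_add]

lemma intervalIntegrable_sum (s : Finset ℕ) (f : ℕ → ℝ → ℝ) {c d : ℝ}
    (h : ∀ i ∈ s, IntervalIntegrable (f i) volume c d) :
    IntervalIntegrable (fun y => ∑ k ∈ s, f k y) volume c d := by
  have h2 := IntervalIntegrable.sum s h
  have he : (fun y => ∑ k ∈ s, f k y) = ∑ k ∈ s, f k := by funext y; simp
  rwa [he]

lemma sum_ind_int (s : Finset ℕ) (a : ℕ → ℝ) (c d : ℝ) :
    IntervalIntegrable (fun y => ∑ k ∈ s, ind (a k) y) volume c d :=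
  intervalIntegrable_sum s _ (fun i _ => ind_int (a i) c d)

lemma master (s : Finset ℕ) (a : ℕ → ℝ) (ha : ∀ k ∈ s, a k ∈ Set.Icc (0:ℝ) 1) (c : ℝ) :
    ∫ y in (0:ℝ)..1, (∑ k ∈ s, ind (a k) y - c * y) ^ 2
      = (∑ k ∈ s, ∑ j ∈ s, (1 - max (a k) (a j))) - c * ∑ k ∈ s, (1 - (a k) ^ 2)
        + c ^ 2 / 3 := by
  have hpt : ∀ y : ℝ, (∑ k ∈ s, ind (a k) y - c * y) ^ 2
      = ((∑ k ∈ s, ∑ j ∈ s, ind (max (a k) (a j)) y)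
          - ∑ k ∈ s, 2 * c * (y * ind (a k) y)) + c ^ 2 * y ^ 2 := by
    intro y
    have h1 : (∑ k ∈ s, ind (a k) y) * (∑ j ∈ s, ind (a j) y)
        = ∑ k ∈ s, ∑ j ∈ s, ind (max (a k) (a j)) y := by
      rw [Finset.sum_mul_sum]
      exact Finset.sum_congr rfl fun k _ => Finset.sum_congr rfl fun j _ => ind_mul _ _ _
    have h2 : ∑ k ∈ s, 2 * c * (y * ind (a k) y) = 2 * c * y * ∑ k ∈ s, ind (a k) y := by
      rw [Finset.mul_sum]
      exact Finset.sum_congr rfl fun k _ => by ring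
    rw [h2, ← h1]
    ring
  have hi1 : IntervalIntegrable (fun y => ∑ k ∈ s, ∑ j ∈ s, ind (max (a k) (a j)) y)
      volume 0 1 :=
    intervalIntegrable_sum s _ (fun i _ => intervalIntegrable_sum s _ (fun j _ => ind_int _ _ _))
  have hi2 : IntervalIntegrable (fun y => ∑ k ∈ s, 2 * c * (y * ind (a k) y)) volume 0 1 :=
    intervalIntegrable_sum s _ (fun i _ => (mul_ind_int (a i) 0 1).const_mul (2 * c))
  have hi3 : IntervalIntegrable (fun y : ℝ => c ^ 2 * y ^ 2) volume 0 1 :=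
    (continuous_const.mul (continuous_pow 2)).intervalIntegrable 0 1
  have hstep : ∫ y in (0:ℝ)..1, (∑ k ∈ s, ind (a k) y - c * y) ^ 2
      = (∫ y in (0:ℝ)..1, ∑ k ∈ s, ∑ j ∈ s, ind (max (a k) (a j)) y)
        - (∫ y in (0:ℝ)..1, ∑ k ∈ s, 2 * c * (y * ind (a k) y))
        + ∫ y in (0:ℝ)..1, c ^ 2 * y ^ 2 := by
    rw [← integral_sub hi1 hi2, ← integral_add (hi1.sub hi2) hi3]
    exact integral_congr fun y _ => hpt y
  rw [hstep]
  have e1 : ∫ y in (0:ℝ)..1, ∑ k ∈ s, ∑ j ∈ s, ind (max (a k) (a j)) y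
      = ∑ k ∈ s, ∑ j ∈ s, (1 - max (a k) (a j)) := by
    rw [integral_finset_sum (fun i _ => intervalIntegrable_sum s _ (fun j _ => ind_int _ _ _))]
    refine Finset.sum_congr rfl fun k hk => ?_
    rw [integral_finset_sum (fun j _ => ind_int _ _ _)]
    refine Finset.sum_congr rfl fun j hj => ?_
    have h0 : (0:ℝ) ≤ max (a k) (a j) := le_max_of_le_left (ha k hk).1
    have h1 : max (a k) (a j) ≤ 1 := max_le (ha k hk).2 (ha j hj).2
    rw [int_ind _ 1 h0 zero_le_one, max_eq_left (by linarith)]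
  have e2 : ∫ y in (0:ℝ)..1, ∑ k ∈ s, 2 * c * (y * ind (a k) y)
      = c * ∑ k ∈ s, (1 - (a k) ^ 2) := by
    rw [integral_finset_sum (fun i _ => (mul_ind_int (a i) 0 1).const_mul (2 * c))]
    rw [Finset.mul_sum]
    refine Finset.sum_congr rfl fun k hk => ?_
    rw [intervalIntegral.integral_const_mul, int_mul_ind _ (ha k hk).1 (ha k hk).2]
    ring
  have e3 : ∫ y in (0:ℝ)..1, c ^ 2 * y ^ 2 = c ^ 2 / 3 := by
    rw [intervalIntegral.integral_const_mul, integral_pow]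
    ring
  rw [e1, e2, e3]

lemma count_cast (x : ℕ → ℝ) (n : ℕ) (y : ℝ) :
    (seqCount x n y : ℝ) = ∑ k ∈ Icc 1 n, ind (x k) y := by
  unfold seqCount ind
  rw [Finset.card_filter]
  push_cast
  rfl

noncomputable def Fint (x : ℕ → ℝ) (n : ℕ) : ℝ :=
  ∫ y in (0:ℝ)..1, ((seqCount x n y : ℝ) - n * y) ^ 2

noncomputable def Gexp (x : ℕ → ℝ) (n : ℕ) (t : ℝ) : ℝ :=
  (∑ k ∈ Icc 1 n, max (t - x k) 0) - n * t ^ 2 / 2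

noncomputable def Aval (x : ℕ → ℝ) (n : ℕ) : ℝ :=
  (∑ k ∈ Icc 1 n, (1 - x k) ^ 2 / 2) - n / 6

lemma Fval (x : ℕ → ℝ) (hx : ∀ k, x k ∈ Set.Icc (0:ℝ) 1) (n : ℕ) :
    Fint x n = (∑ k ∈ Icc 1 n, ∑ j ∈ Icc 1 n, (1 - max (x k) (x j)))
      - n * ∑ k ∈ Icc 1 n, (1 - (x k) ^ 2) + (n : ℝ) ^ 2 / 3 := by
  unfold Fint
  rw [show (∫ y in (0:ℝ)..1, ((seqCount x n y : ℝ) - n * y) ^ 2)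
      = ∫ y in (0:ℝ)..1, (∑ k ∈ Icc 1 n, ind (x k) y - (n : ℝ) * y) ^ 2 from
    integral_congr fun y _ => by rw [count_cast]]
  exact master _ _ (fun k _ => hx k) _

lemma Dint (x : ℕ → ℝ) (n : ℕ) (c d : ℝ) :
    IntervalIntegrable (fun y => (seqCount x n y : ℝ) - n * y) volume c d := by
  have h : (fun y => (seqCount x n y : ℝ) - n * y)
      = fun y => (∑ k ∈ Icc 1 n, ind (x k) y) - n * y := by
    funext y; rw [count_cast]
  rw [h]
  exact (intervalIntegrable_sum _ _ (fun i _ => ind_int _ _ _)).sub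
    ((continuous_const.mul continuous_id).intervalIntegrable c d)

lemma D2int (x : ℕ → ℝ) (n : ℕ) (c d : ℝ) :
    IntervalIntegrable (fun y => ((seqCount x n y : ℝ) - n * y) ^ 2) volume c d := by
  have h : (fun y => ((seqCount x n y : ℝ) - n * y) ^ 2)
      = fun y => ((∑ k ∈ Icc 1 n, ∑ j ∈ Icc 1 n, ind (max (x k) (x j)) y)
          - ∑ k ∈ Icc 1 n, 2 * (n : ℝ) * (y * ind (x k) y)) + (n : ℝ) ^ 2 * y ^ 2 := by
    funext y
    rw [count_cast]
    have h1 : (∑ k ∈ Icc 1 n, ind (x k) y) * (∑ j ∈ Icc 1 n, ind (x j) y)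
        = ∑ k ∈ Icc 1 n, ∑ j ∈ Icc 1 n, ind (max (x k) (x j)) y := by
      rw [Finset.sum_mul_sum]
      exact Finset.sum_congr rfl fun k _ => Finset.sum_congr rfl fun j _ => ind_mul _ _ _
    have h2 : ∑ k ∈ Icc 1 n, 2 * (n : ℝ) * (y * ind (x k) y)
        = 2 * (n : ℝ) * y * ∑ k ∈ Icc 1 n, ind (x k) y := by
      rw [Finset.mul_sum]
      exact Finset.sum_congr rfl fun k _ => by ring
    rw [h2, ← h1]
    ring
  rw [h]
  refine IntervalIntegrable.add (IntervalIntegrable.sub ?_ ?_) ?_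
  · exact intervalIntegrable_sum _ _
      (fun i _ => intervalIntegrable_sum _ _ (fun j _ => ind_int _ _ _))
  · exact intervalIntegrable_sum _ _ (fun i _ => (mul_ind_int (x i) c d).const_mul _)
  · exact (continuous_const.mul (continuous_pow 2)).intervalIntegrable c d

lemma Gval (x : ℕ → ℝ) (hx : ∀ k, x k ∈ Set.Icc (0:ℝ) 1) (n : ℕ) (t : ℝ) (ht : 0 ≤ t) :
    (∫ y in (0:ℝ)..t, ((seqCount x n y : ℝ) - n * y)) = Gexp x n t := by
  rw [show (∫ y in (0:ℝ)..t, ((seqCount x n y : ℝ) - n * y))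
      = ∫ y in (0:ℝ)..t, ((∑ k ∈ Icc 1 n, ind (x k) y) - (n : ℝ) * y) from
    integral_congr fun y _ => by rw [count_cast]]
  have hg : IntervalIntegrable (fun y : ℝ => (n : ℝ) * y) volume 0 t :=
    (continuous_const.mul continuous_id).intervalIntegrable 0 t
  rw [integral_sub (intervalIntegrable_sum _ _ (fun i _ => ind_int _ _ _)) hg]
  rw [integral_finset_sum (fun i _ => ind_int _ _ _)]
  unfold Gexp
  congr 1
  · exact Finset.sum_congr rfl fun k _ => int_ind _ _ (hx k).1 ht
  · rw [intervalIntegral.integral_const_mul, integral_id]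
    ring
lemma Gcont (x : ℕ → ℝ) (n : ℕ) : Continuous (Gexp x n) := by
  unfold Gexp
  refine Continuous.sub ?_ (by continuity)
  exact continuous_finset_sum _ fun k _ =>
    (continuous_id.sub continuous_const).max continuous_const

lemma Gexp_zero (x : ℕ → ℝ) (hx : ∀ k, x k ∈ Set.Icc (0:ℝ) 1) (n : ℕ) :
    Gexp x n 0 = 0 := by
  unfold Gexp
  have : ∀ k ∈ Icc 1 n, max (0 - x k) 0 = 0 := fun k _ =>
    max_eq_right (by linarith [(hx k).1])
  rw [Finset.sum_congr rfl this]
  simp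

lemma Gexp_nonpos (x : ℕ → ℝ) (hx : ∀ k, x k ∈ Set.Icc (0:ℝ) 1) (n : ℕ) {u : ℝ}
    (hu : u ≤ 0) : Gexp x n u ≤ 0 := by
  unfold Gexp
  have h : ∀ k ∈ Icc 1 n, max (u - x k) 0 = 0 := fun k _ =>
    max_eq_right (by linarith [(hx k).1])
  rw [Finset.sum_congr rfl h]
  simp
  positivity

lemma Aint (x : ℕ → ℝ) (hx : ∀ k, x k ∈ Set.Icc (0:ℝ) 1) (n : ℕ) :
    ∫ t in (0:ℝ)..1, Gexp x n t = Aval x n := by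
  unfold Gexp Aval
  have hmax : ∀ i : ℕ, IntervalIntegrable (fun t : ℝ => max (t - x i) 0) volume 0 1 :=
    fun i => (((continuous_id.sub continuous_const).max continuous_const).intervalIntegrable 0 1)
  have hg : IntervalIntegrable (fun t : ℝ => (n : ℝ) * t ^ 2 / 2) volume 0 1 :=
    ((continuous_const.mul (continuous_pow 2)).div_const 2).intervalIntegrable 0 1
  rw [integral_sub (intervalIntegrable_sum _ _ (fun i _ => hmax i)) hg]
  congr 1
  · rw [integral_finset_sum (fun i _ => hmax i)]
    exact Finset.sum_congr rfl fun k _ => int_max _ (hx k).1 (hx k).2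
  · rw [show (fun t : ℝ => (n : ℝ) * t ^ 2 / 2) = fun t : ℝ => ((n : ℝ)/2) * t ^ 2 from
      funext fun t => by ring]
    rw [intervalIntegral.integral_const_mul, integral_pow]
    ring

lemma step (x : ℕ → ℝ) (n₀ : ℕ) (hK : IsKritzinger x n₀) (n : ℕ) (hn : n₀ ≤ n)
    (z : ℝ) (hz : z ∈ Set.Icc (0:ℝ) 1) :
    Fint x (n+1) ≤ Fint x n + 2 * (Aval x n - Gexp x n z)
      + (z ^ 3 / 3 + (1 - z) ^ 3 / 3) := by
  obtain ⟨hx, hmin⟩ := hK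
  have h := hmin n hn z hz
  have hnm : (n+1) ∉ Icc 1 n := by simp
  have hins : Finset.Icc 1 (n+1) = insert (n+1) (Finset.Icc 1 n) :=
    (Finset.insert_Icc_right_eq_Icc_add_one (by omega)).symm
  -- LHS of h is Fint x (n+1)
  have hL : Fint x (n+1) = ∫ y in (0:ℝ)..1,
      ((seqCount x n y : ℝ) + (if x (n + 1) ≤ y then (1:ℝ) else 0)
        - ((n : ℝ) + 1) * y) ^ 2 := by
    unfold Fint
    apply integral_congr
    intro y _
    show ((seqCount x (n+1) y : ℝ) - (((n:ℕ)+1 : ℕ) : ℝ) * y) ^ 2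
      = ((seqCount x n y : ℝ) + (if x (n + 1) ≤ y then (1:ℝ) else 0) - ((n : ℝ) + 1) * y) ^ 2
    have hcnt : (seqCount x (n+1) y : ℝ)
        = (seqCount x n y : ℝ) + (if x (n + 1) ≤ y then (1:ℝ) else 0) := by
      unfold seqCount
      rw [hins, Finset.filter_insert]
      split_ifs with hcond
      · rw [Finset.card_insert_of_notMem (fun hmem => hnm (Finset.mem_of_mem_filter _ hmem))]
        push_cast; ring
      · push_cast; ring
    rw [hcnt]
    push_cast
    ring
  -- RHS of h via master
  set a' : ℕ → ℝ := Function.update x (n+1) z with ha'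
  have ha'mem : ∀ k ∈ Icc 1 (n+1), a' k ∈ Set.Icc (0:ℝ) 1 := by
    intro k _
    by_cases hk : k = n+1
    · rw [hk, ha', Function.update_self]; exact hz
    · rw [ha', Function.update_of_ne hk]; exact hx k
  have e0 : ∀ j ∈ Icc 1 n, a' j = x j := by
    intro j hj
    have : j ≠ n+1 := by simp at hj; omega
    rw [ha', Function.update_of_ne this]
  have hR : (∫ y in (0:ℝ)..1,
        ((seqCount x n y : ℝ) + (if z ≤ y then (1:ℝ) else 0) - ((n : ℝ) + 1) * y) ^ 2)
      = ∫ y in (0:ℝ)..1, (∑ k ∈ Icc 1 (n+1), ind (a' k) y - ((n:ℝ)+1) * y) ^ 2 := by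
    apply integral_congr
    intro y _
    show ((seqCount x n y : ℝ) + (if z ≤ y then (1:ℝ) else 0) - ((n : ℝ) + 1) * y) ^ 2
      = (∑ k ∈ Icc 1 (n+1), ind (a' k) y - ((n:ℝ)+1) * y) ^ 2
    have hsum : ∑ k ∈ Icc 1 (n+1), ind (a' k) y
        = (seqCount x n y : ℝ) + ind z y := by
      rw [hins, Finset.sum_insert hnm, ha', Function.update_self, count_cast]
      rw [Finset.sum_congr rfl (fun j hj => by rw [← ha', e0 j hj])]
      ring
    rw [hsum]
    unfold ind
    ring
  rw [← hL, hR, master _ _ ha'mem _] at h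
  refine le_trans h (le_of_eq ?_)
  have hptz : ∀ u : ℝ, 2 * (1 - max u z) = (1-u)^2 - 2 * max (z-u) 0 + (1 - u^2) := by
    intro u
    rcases le_total u z with h' | h'
    · rw [max_eq_right h', max_eq_left (sub_nonneg.mpr h')]
      ring
    · rw [max_eq_left h', max_eq_right (by linarith)]
      ring
  have eA : ∑ k ∈ Icc 1 (n+1), ∑ j ∈ Icc 1 (n+1), (1 - max (a' k) (a' j))
      = (1 - z) + (∑ j ∈ Icc 1 n, (1 - max (x j) z))
        + ((∑ k ∈ Icc 1 n, (1 - max (x k) z))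
          + ∑ k ∈ Icc 1 n, ∑ j ∈ Icc 1 n, (1 - max (x k) (x j))) := by
    rw [hins, Finset.sum_insert hnm]
    congr 1
    · rw [Finset.sum_insert hnm, ha', Function.update_self, max_self]
      congr 1
      refine Finset.sum_congr rfl fun j hj => ?_
      have hj' : j ≠ n+1 := by simp at hj; omega
      rw [Function.update_of_ne hj', max_comm]
    · have hinner : ∀ k ∈ Icc 1 n, ∑ j ∈ insert (n+1) (Icc 1 n), (1 - max (a' k) (a' j))
          = (1 - max (x k) z) + ∑ j ∈ Icc 1 n, (1 - max (x k) (x j)) := by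
        intro k hk
        rw [Finset.sum_insert hnm, e0 k hk, ha', Function.update_self]
        congr 1
        refine Finset.sum_congr rfl fun j hj => ?_
        have hj' : j ≠ n+1 := by simp at hj; omega
        rw [Function.update_of_ne hj']
      rw [Finset.sum_congr rfl hinner, Finset.sum_add_distrib]
  have eB : ∑ k ∈ Icc 1 (n+1), (1 - (a' k) ^ 2)
      = (1 - z ^ 2) + ∑ k ∈ Icc 1 n, (1 - (x k) ^ 2) := by
    rw [hins, Finset.sum_insert hnm, ha', Function.update_self]
    congr 1
    refine Finset.sum_congr rfl fun j hj => ?_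
    have hj' : j ≠ n+1 := by simp at hj; omega
    rw [Function.update_of_ne hj']
  have eC : 2 * ∑ k ∈ Icc 1 n, (1 - max (x k) z)
      = (∑ k ∈ Icc 1 n, (1 - x k) ^ 2) - 2 * (∑ k ∈ Icc 1 n, max (z - x k) 0)
        + ∑ k ∈ Icc 1 n, (1 - (x k) ^ 2) := by
    rw [Finset.mul_sum, Finset.sum_congr rfl (fun k _ => hptz (x k)),
      Finset.sum_add_distrib, Finset.sum_sub_distrib, ← Finset.mul_sum]
  rw [eA, eB, Fval x hx n]
  unfold Aval Gexp
  rw [← Finset.sum_div]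
  linear_combination eC

lemma F_nonneg (x : ℕ → ℝ) (n : ℕ) : 0 ≤ Fint x n :=
  integral_nonneg zero_le_one fun y _ => sq_nonneg _

lemma seg_le_F (x : ℕ → ℝ) (n : ℕ) {c d : ℝ} (hc : 0 ≤ c) (hcd : c ≤ d) (hd : d ≤ 1) :
    (∫ y in c..d, ((seqCount x n y : ℝ) - n * y) ^ 2) ≤ Fint x n := by
  have h1 : 0 ≤ ∫ y in (0:ℝ)..c, ((seqCount x n y : ℝ) - n * y) ^ 2 :=
    integral_nonneg hc fun y _ => sq_nonneg _
  have h2 : 0 ≤ ∫ y in d..(1:ℝ), ((seqCount x n y : ℝ) - n * y) ^ 2 :=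
    integral_nonneg hd fun y _ => sq_nonneg _
  have e1 := integral_add_adjacent_intervals (D2int x n 0 c) (D2int x n c d)
  have e2 := integral_add_adjacent_intervals (D2int x n 0 d) (D2int x n d 1)
  unfold Fint
  linarith [e1, e2]

lemma CS (x : ℕ → ℝ) (n : ℕ) {c d : ℝ} (hc : 0 ≤ c) (hcd : c < d) (hd : d ≤ 1) :
    (∫ y in c..d, ((seqCount x n y : ℝ) - n * y)) ^ 2 ≤ (d - c) * Fint x n := by
  set D : ℝ → ℝ := fun y => (seqCount x n y : ℝ) - n * y with hD
  set I1 : ℝ := ∫ y in c..d, D y with hI1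
  have hdc : 0 < d - c := by linarith
  set K : ℝ := I1 / (d - c) with hK
  have h0 : 0 ≤ ∫ y in c..d, (D y - K) ^ 2 :=
    integral_nonneg hcd.le fun u _ => sq_nonneg _
  have hexp : ∫ y in c..d, (D y - K) ^ 2
      = (∫ y in c..d, (D y) ^ 2) - 2 * K * I1 + K ^ 2 * (d - c) := by
    have hpt : (fun y => (D y - K) ^ 2)
        = fun y => ((D y) ^ 2 - 2 * K * D y) + K ^ 2 := by
      funext y; ring
    rw [hpt, integral_add ((D2int x n c d).sub ((Dint x n c d).const_mul (2 * K)))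
        intervalIntegrable_const,
      integral_sub (D2int x n c d) ((Dint x n c d).const_mul (2 * K)),
      intervalIntegral.integral_const_mul, intervalIntegral.integral_const]
    rw [smul_eq_mul]
    ring
  have hseg := seg_le_F x n hc hcd.le hd
  have hI : I1 ^ 2 ≤ (d - c) * ∫ y in c..d, (D y) ^ 2 := by
    rw [hexp] at h0
    have hKv : K * (d - c) = I1 := by rw [hK, div_mul_cancel₀ _ hdc.ne']
    nlinarith [h0, hKv]
  calc I1 ^ 2 ≤ (d - c) * ∫ y in c..d, (D y) ^ 2 := hI
    _ ≤ (d - c) * Fint x n := by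
        exact mul_le_mul_of_nonneg_left hseg hdc.le

lemma finish_num (S F nr w : ℝ) (hw : 0 < w) (hF : 0 ≤ F) (h5 : S ^ 2 / 4 ≤ w * F)
    (h7 : w * S ≤ 1) (h8 : 8 * nr ≤ S ^ 3) (hSpos : 0 < S) : 2 * nr ≤ F := by
  nlinarith [mul_le_mul_of_nonneg_right h7 hF, mul_le_mul_of_nonneg_left h5 hSpos.le]

lemma key (x : ℕ → ℝ) (hx : ∀ k, x k ∈ Set.Icc (0:ℝ) 1) (n : ℕ) (hn1 : 1 ≤ n)
    (M : ℝ) (hM : ∀ u ∈ Set.Icc (0:ℝ) 1, Gexp x n u ≤ M)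
    (hP : M - Aval x n ≤ 1/2)
    (t : ℝ) (ht : t ∈ Set.Icc (0:ℝ) 1)
    (hS : 2 * (n:ℝ) ^ ((1:ℝ)/3) ≤ |Gexp x n t|) :
    2 * (n:ℝ) ≤ Fint x n := by
  set S : ℝ := |Gexp x n t| with hSdef
  have hn' : (1:ℝ) ≤ (n:ℝ) := by exact_mod_cast hn1
  have hrpow1 : (1:ℝ) ≤ (n:ℝ) ^ ((1:ℝ)/3) := by
    calc (1:ℝ) = (1:ℝ) ^ ((1:ℝ)/3) := (Real.one_rpow _).symm
    _ ≤ (n:ℝ) ^ ((1:ℝ)/3) := Real.rpow_le_rpow zero_le_one hn' (by norm_num)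
  have hS2 : 2 ≤ S := le_trans (by linarith) hS
  have hSpos : 0 < S := by linarith
  have hS8 : 8 * (n:ℝ) ≤ S ^ 3 := by
    have hr : ((n:ℝ) ^ ((1:ℝ)/3)) ^ (3:ℕ) = (n:ℝ) := by
      rw [← Real.rpow_natCast ((n:ℝ) ^ ((1:ℝ)/3)) 3, ← Real.rpow_mul (Nat.cast_nonneg n)]
      norm_num
    have h2 : (2 * (n:ℝ) ^ ((1:ℝ)/3)) ^ (3:ℕ) ≤ S ^ (3:ℕ) :=
      pow_le_pow_left₀ (by positivity) hS 3
    calc 8 * (n:ℝ) = (2 * (n:ℝ) ^ ((1:ℝ)/3)) ^ (3:ℕ) := by rw [mul_pow, hr]; norm_num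
      _ ≤ S ^ 3 := h2
  have hM0 : 0 ≤ M := by
    have := hM 0 ⟨le_rfl, zero_le_one⟩
    rw [Gexp_zero x hx n] at this
    exact this
  have hMA : ∫ u in (0:ℝ)..1, (M - Gexp x n u) = M - Aval x n := by
    rw [integral_sub intervalIntegrable_const ((Gcont x n).intervalIntegrable 0 1),
      Aint x hx n, intervalIntegral.integral_const]
    rw [smul_eq_mul]; ring
  have hF0 := F_nonneg x n
  rcases abs_cases (Gexp x n t) with ⟨heq, _⟩ | ⟨heq, _⟩
  · -- rise case : Gexp x n t = S
    have hGt : Gexp x n t = S := by rw [hSdef, heq]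
    have hMS : S ≤ M := hGt ▸ hM t ht
    set T : Set ℝ := {u | u ∈ Set.Icc 0 t ∧ S/2 ≤ Gexp x n u} with hT
    have hTc : IsClosed T :=
      (isClosed_Icc).inter (isClosed_le continuous_const (Gcont x n))
    have htT : t ∈ T := ⟨⟨ht.1, le_rfl⟩, by rw [hGt]; linarith⟩
    have hbdd : BddBelow T := ⟨0, fun u hu => hu.1.1⟩
    set τ : ℝ := sInf T with hτdef
    have hτT : τ ∈ T := hTc.csInf_mem ⟨t, htT⟩ hbdd
    have hτ0 : 0 ≤ τ := hτT.1.1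
    have hτt : τ ≤ t := hτT.1.2
    have hτ1 : τ ≤ 1 := le_trans hτt ht.2
    have hGτge : S/2 ≤ Gexp x n τ := hτT.2
    have hτpos : 0 < τ := by
      rcases hτ0.lt_or_eq with h | h
      · exact h
      · exfalso
        rw [← h, Gexp_zero x hx n] at hGτge
        linarith
    have hbefore : ∀ u, u < τ → Gexp x n u ≤ S/2 := by
      intro u hu
      rcases le_or_gt u 0 with hu0 | hu0
      · linarith [Gexp_nonpos x hx n hu0]
      · by_contra hcon
        push_neg at hcon
        have huT : u ∈ T := ⟨⟨hu0.le, le_trans hu.le hτt⟩, hcon.le⟩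
        exact absurd (csInf_le hbdd huT) (not_le.mpr hu)
    have hGτle : Gexp x n τ ≤ S/2 := by
      refine le_of_tendsto (x := nhdsWithin τ (Set.Iio τ))
        ((Gcont x n).continuousAt.continuousWithinAt.tendsto) ?_
      filter_upwards [self_mem_nhdsWithin] with u hu
      exact hbefore u hu
    have hmark : ∀ u ∈ Set.Icc (0:ℝ) τ, S/2 ≤ M - Gexp x n u := by
      intro u hu
      have : Gexp x n u ≤ S/2 := by
        rcases eq_or_lt_of_le hu.2 with h | h
        · rw [h]; exact hGτle
        · exact hbefore u h
      linarith
    have hm1 : τ * (S/2) ≤ M - Aval x n := by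
      have hmono := integral_mono_on (μ := volume) hτ0 intervalIntegrable_const
        ((continuous_const.sub (Gcont x n)).intervalIntegrable 0 τ) hmark
      rw [intervalIntegral.integral_const, smul_eq_mul] at hmono
      have hsplit := integral_add_adjacent_intervals (μ := volume) (f := fun u => M - Gexp x n u)
        ((continuous_const.sub (Gcont x n)).intervalIntegrable 0 τ)
        ((continuous_const.sub (Gcont x n)).intervalIntegrable τ 1)
      have hnn : 0 ≤ ∫ u in τ..(1:ℝ), (M - Gexp x n u) :=
        integral_nonneg hτ1 fun u hu => sub_nonneg.mpr
          (hM u ⟨le_trans hτ0 hu.1, hu.2⟩)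
      rw [hMA] at hsplit
      change (τ - 0) * (S/2) ≤ ∫ u in (0:ℝ)..τ, (M - Gexp x n u) at hmono
      have : (τ - 0) * (S/2) = τ * (S/2) := by ring
      linarith [hmono, hsplit, hnn]
    have hτS : τ * S ≤ 1 := by linarith
    have hcs := CS x n (le_refl (0:ℝ)) hτpos hτ1
    rw [Gval x hx n τ hτ0] at hcs
    have h5 : S ^ 2 / 4 ≤ τ * Fint x n := by
      have : (S/2) ^ 2 ≤ (Gexp x n τ) ^ 2 := pow_le_pow_left₀ (by positivity) hGτge 2
      have h0τ : τ - 0 = τ := by ring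
      rw [h0τ] at hcs
      nlinarith [hcs, this]
    exact finish_num S (Fint x n) n τ hτpos hF0 h5 hτS hS8 hSpos
  · -- dip case : Gexp x n t = -S
    have hGt : Gexp x n t = -S := by rw [hSdef, heq]; ring
    set T : Set ℝ := {u | u ∈ Set.Icc 0 t ∧ -(S/2) ≤ Gexp x n u} with hT
    have hTc : IsClosed T :=
      (isClosed_Icc).inter (isClosed_le continuous_const (Gcont x n))
    have h0T : (0:ℝ) ∈ T := ⟨⟨le_rfl, ht.1⟩, by rw [Gexp_zero x hx n]; linarith⟩
    have hbdd : BddAbove T := ⟨t, fun u hu => hu.1.2⟩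
    set σ : ℝ := sSup T with hσdef
    have hσT : σ ∈ T := hTc.csSup_mem ⟨0, h0T⟩ hbdd
    have hσ0 : 0 ≤ σ := le_csSup hbdd h0T
    have hσt : σ ≤ t := hσT.1.2
    have hσlt : σ < t := by
      rcases eq_or_lt_of_le hσt with h | h
      · exfalso
        have := hσT.2
        rw [h, hGt] at this
        linarith
      · exact h
    have hafter : ∀ u, σ < u → u ≤ t → Gexp x n u ≤ -(S/2) := by
      intro u h1 h2
      by_contra hcon
      push_neg at hcon
      have huT : u ∈ T := ⟨⟨le_trans hσ0 h1.le, h2⟩, hcon.le⟩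
      exact absurd (le_csSup hbdd huT) (not_le.mpr h1)
    have hGσle : Gexp x n σ ≤ -(S/2) := by
      refine le_of_tendsto (x := nhdsWithin σ (Set.Ioi σ))
        ((Gcont x n).continuousAt.continuousWithinAt.tendsto) ?_
      filter_upwards [self_mem_nhdsWithin,
        mem_nhdsWithin_of_mem_nhds (Iio_mem_nhds hσlt)] with u hu1 hu2
      exact hafter u hu1 (le_of_lt hu2)
    have hmark : ∀ u ∈ Set.Icc σ t, S/2 ≤ M - Gexp x n u := by
      intro u hu
      have : Gexp x n u ≤ -(S/2) := by
        rcases eq_or_lt_of_le hu.1 with h | h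
        · rw [← h]; exact hGσle
        · exact hafter u h hu.2
      linarith
    have hm1 : (t - σ) * (S/2) ≤ M - Aval x n := by
      have hmono := integral_mono_on (μ := volume) hσt intervalIntegrable_const
        ((continuous_const.sub (Gcont x n)).intervalIntegrable σ t) hmark
      rw [intervalIntegral.integral_const, smul_eq_mul] at hmono
      have hsplit1 := integral_add_adjacent_intervals (μ := volume) (f := fun u => M - Gexp x n u)
        ((continuous_const.sub (Gcont x n)).intervalIntegrable 0 σ)
        ((continuous_const.sub (Gcont x n)).intervalIntegrable σ 1)
      have hsplit2 := integral_add_adjacent_intervals (μ := volume) (f := fun u => M - Gexp x n u)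
        ((continuous_const.sub (Gcont x n)).intervalIntegrable σ t)
        ((continuous_const.sub (Gcont x n)).intervalIntegrable t 1)
      have hnn1 : 0 ≤ ∫ u in (0:ℝ)..σ, (M - Gexp x n u) :=
        integral_nonneg hσ0 fun u hu => sub_nonneg.mpr
          (hM u ⟨hu.1, le_trans hu.2 (le_trans hσt ht.2)⟩)
      have hnn2 : 0 ≤ ∫ u in t..(1:ℝ), (M - Gexp x n u) :=
        integral_nonneg ht.2 fun u hu => sub_nonneg.mpr
          (hM u ⟨le_trans ht.1 hu.1, hu.2⟩)
      rw [hMA] at hsplit1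
      change (t - σ) * (S/2) ≤ ∫ u in σ..t, (M - Gexp x n u) at hmono
      linarith [hmono, hsplit1, hsplit2, hnn1, hnn2]
    have hτS : (t - σ) * S ≤ 1 := by linarith
    have hcs := CS x n hσ0 hσlt ht.2
    have hIval : (∫ y in σ..t, ((seqCount x n y : ℝ) - n * y))
        = Gexp x n t - Gexp x n σ := by
      rw [← integral_interval_sub_left (Dint x n 0 t) (Dint x n 0 σ),
        Gval x hx n t ht.1, Gval x hx n σ hσ0]
    have h5 : S ^ 2 / 4 ≤ (t - σ) * Fint x n := by
      have hIle : (∫ y in σ..t, ((seqCount x n y : ℝ) - n * y)) ≤ -(S/2) := by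
        rw [hIval, hGt]
        linarith [hσT.2]
      nlinarith [hcs, hIle]
    exact finish_num S (Fint x n) n (t - σ) (by linarith) hF0 h5 hτS hS8 hSpos


end KZ

open KZ in
open MeasureTheory Finset intervalIntegral in
theorem stmt_15 (x : ℕ → ℝ) (n₀ : ℕ) (hn₀ : 1 ≤ n₀)
    (hK : IsKritzinger x n₀) :
    ∀ N : ℕ, ∃ n : ℕ, N ≤ n ∧
      ∀ t ∈ Set.Icc (0 : ℝ) 1,
        |∫ y in (0:ℝ)..t, ((seqCount x n y : ℝ) - (n : ℝ) * y)|
          ≤ 2 * (n : ℝ) ^ ((1 : ℝ) / 3) := by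
  intro N
  by_contra hcon
  push_neg at hcon
  have hx := hK.1
  -- argmax selection
  have hmaxsel : ∀ n : ℕ, ∃ zm ∈ Set.Icc (0:ℝ) 1,
      ∀ u ∈ Set.Icc (0:ℝ) 1, Gexp x n u ≤ Gexp x n zm := by
    intro n
    obtain ⟨zm, hzm, hmax⟩ := isCompact_Icc.exists_isMaxOn
      (Set.nonempty_Icc.mpr zero_le_one) ((Gcont x n).continuousOn)
    exact ⟨zm, hzm, fun u hu => hmax hu⟩
  choose zm hzm hzmax using hmaxsel
  set M : ℕ → ℝ := fun n => Gexp x n (zm n) with hMdef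
  have hAleM : ∀ n, Aval x n ≤ M n := by
    intro n
    rw [← Aint x hx n]
    have hmono := intervalIntegral.integral_mono_on (μ := volume) zero_le_one
      ((Gcont x n).intervalIntegrable 0 1) intervalIntegrable_const
      (fun u hu => hzmax n u hu)
    rw [intervalIntegral.integral_const, smul_eq_mul] at hmono
    calc (∫ t in (0:ℝ)..1, Gexp x n t) ≤ (1 - 0) * M n := hmono
      _ = M n := by ring
  have hstep : ∀ n, n₀ ≤ n → Fint x (n+1) ≤ Fint x n + 1/3 - 2*(M n - Aval x n) := by
    intro n hn
    have h := step x n₀ hK n hn (zm n) (hzm n)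
    have hc : (zm n) ^ 3 / 3 + (1 - zm n) ^ 3 / 3 ≤ 1/3 := by
      obtain ⟨h0, h1⟩ := hzm n
      nlinarith
    have hGz : Gexp x n (zm n) = M n := rfl
    rw [hGz] at h
    linarith
  have hFub : ∀ n, n₀ ≤ n → Fint x n ≤ Fint x n₀ + ((n:ℝ) - (n₀:ℝ))/3 := by
    intro n hn
    induction n, hn using Nat.le_induction with
    | base => simp
    | succ m hm ih =>
      have h := hstep m hm
      have hMA := hAleM m
      push_cast
      push_cast at ih
      linarith
  obtain ⟨K0, hK0⟩ := exists_nat_ge (Fint x n₀)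
  set N₁ : ℕ := max (max N (n₀+1)) (K0+1) with hN₁
  have hN₁N : N ≤ N₁ := le_trans (le_max_left _ _) (le_max_left _ _)
  have hN₁n₀ : n₀ + 1 ≤ N₁ := le_trans (le_max_right _ _) (le_max_left _ _)
  have hN₁K : K0 + 1 ≤ N₁ := le_max_right _ _
  have hbig : ∀ n : ℕ, N₁ ≤ n → 1/2 < M n - Aval x n := by
    intro n hn
    by_contra hP
    push_neg at hP
    obtain ⟨t, ht, habs⟩ := hcon n (le_trans hN₁N hn)
    rw [Gval x hx n t ht.1] at habs
    have hn1 : 1 ≤ n := by omega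
    have hk := key x hx n hn1 (M n) (hzmax n) hP t ht habs.le
    have h1 := hFub n (by omega)
    have hcast1 : (K0:ℝ) + 1 ≤ (n:ℝ) := by exact_mod_cast le_trans hN₁K hn
    have hcast2 : (1:ℝ) ≤ (n:ℝ) := by exact_mod_cast hn1
    have hcast3 : (0:ℝ) ≤ (n₀:ℝ) := Nat.cast_nonneg _
    linarith
  have hdec : ∀ k : ℕ, Fint x (N₁ + k) ≤ Fint x N₁ - 2*(k:ℝ)/3 := by
    intro k
    induction k with
    | zero => simp
    | succ m ih =>
      have h := hstep (N₁+m) (by omega)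
      have hb := hbig (N₁+m) (by omega)
      have : N₁ + (m+1) = (N₁ + m) + 1 := by omega
      rw [this]
      push_cast
      push_cast at ih
      linarith
  obtain ⟨k, hk⟩ := exists_nat_gt ((3/2) * Fint x N₁)
  have h1 := hdec k
  have h2 := F_nonneg x (N₁ + k)
  linarith
end

section
/- Let (x_k)_{k=1}^{∞} be a Kritzinger sequence in [0,1] (with arbitrary finite initial segment x_1,…,x_{n₀}, each subsequent point chosen greedily). Then for all sufficiently large N ∈ ℕ there exists an integer n with N ≤ n ≤ 100·N such that max over x ∈ [0,1] of |∫₀^x (#{1 ≤ k ≤ n : x_k ≤ y} − n·y) dy| ≤ 2·n^{1/3}. -/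
open MeasureTheory intervalIntegral Set

namespace KritzAux

variable (x : ℕ → ℝ)

/-- real-valued counting function -/
noncomputable def KF (n : ℕ) (y : ℝ) : ℝ := (seqCount x n y : ℝ)

noncomputable def KG (n : ℕ) (y : ℝ) : ℝ := KF x n y - (n : ℝ) * y

noncomputable def KD (n : ℕ) (t : ℝ) : ℝ := ∫ y in (0:ℝ)..t, KG x n y

noncomputable def KL (n : ℕ) : ℝ := ∫ y in (0:ℝ)..1, (KG x n y) ^ 2

noncomputable def KJ (n : ℕ) : ℝ := ∫ t in (0:ℝ)..1, KD x n t

lemma KF_mono (n : ℕ) : Monotone (KF x n) := by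
  intro y y' h
  unfold KF seqCount
  have : (Finset.Icc 1 n).filter (fun k => x k ≤ y) ⊆
      (Finset.Icc 1 n).filter (fun k => x k ≤ y') := by
    apply Finset.monotone_filter_right
    intro k _ hk
    exact le_trans hk h
  exact_mod_cast Finset.card_le_card this

lemma KF_nonneg (n : ℕ) (y : ℝ) : 0 ≤ KF x n y := by unfold KF; positivity

lemma KF_le (n : ℕ) (y : ℝ) : KF x n y ≤ (n : ℝ) := by
  unfold KF seqCount
  have : ((Finset.Icc 1 n).filter (fun k => x k ≤ y)).card ≤ (Finset.Icc 1 n).card :=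
    Finset.card_filter_le _ _
  have h2 : (Finset.Icc 1 n).card = n := by simp
  exact_mod_cast h2 ▸ this

lemma KF_measurable (n : ℕ) : Measurable (KF x n) := (KF_mono x n).measurable

lemma KG_intble (n : ℕ) (a b : ℝ) : IntervalIntegrable (KG x n) volume a b := by
  have h1 : IntervalIntegrable (KF x n) volume a b := (KF_mono x n).intervalIntegrable
  have h2 : IntervalIntegrable (fun y => (n : ℝ) * y) volume a b := by
    apply Continuous.intervalIntegrable; continuity
  exact h1.sub h2

lemma KG_abs_le (n : ℕ) (y : ℝ) (hy : y ∈ Set.Icc (0:ℝ) 1) : |KG x n y| ≤ 2 * n := by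
  rcases hy with ⟨h0, h1⟩
  rw [abs_le]
  have := KF_nonneg x n y
  have := KF_le x n y
  constructor <;> unfold KG <;> nlinarith [Nat.cast_nonneg (α := ℝ) n]

lemma KG_sq_intble (n : ℕ) : IntervalIntegrable (fun y => (KG x n y)^2) volume 0 1 := by
  have hm : Measurable fun y => (KG x n y)^2 := by
    have : Measurable (KG x n) := (KF_measurable x n).sub (by fun_prop)
    fun_prop
  refine (intervalIntegrable_iff_integrableOn_Ioc_of_le (by norm_num)).2 ?_
  refine Integrable.mono' (integrable_const ((2*n:ℝ)^2)) hm.aestronglyMeasurable.restrict ?_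
  filter_upwards [ae_restrict_mem measurableSet_Ioc] with y hy
  have h := KG_abs_le x n y ⟨le_of_lt hy.1, hy.2⟩
  rw [Real.norm_eq_abs, abs_pow, sq_abs]
  nlinarith [abs_nonneg (KG x n y), sq_abs (KG x n y)]

end KritzAux

namespace KritzAux

variable (x : ℕ → ℝ)

lemma KD_zero (n : ℕ) : KD x n 0 = 0 := by unfold KD; simp

lemma KD_sub (n : ℕ) (a r : ℝ) : KD x n r - KD x n a = ∫ y in a..r, KG x n y := by
  unfold KD
  have := integral_add_adjacent_intervals (KG_intble x n 0 a) (KG_intble x n a r)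
  linarith

lemma KD_continuousOn (n : ℕ) : ContinuousOn (KD x n) (Set.Icc 0 1) := by
  have hlip : LipschitzOnWith (Real.toNNReal (2*n)) (KD x n) (Set.Icc 0 1) := by
    rw [lipschitzOnWith_iff_dist_le_mul]
    intro t ht t' ht'
    rw [Real.dist_eq, Real.dist_eq]
    have h1 : KD x n t - KD x n t' = ∫ y in t'..t, KG x n y := KD_sub x n t' t
    have h2 : ‖∫ y in t'..t, KG x n y‖ ≤ 2*n * |t - t'| := by
      apply intervalIntegral.norm_integral_le_of_norm_le_const
      intro y hy
      rcases Set.mem_uIoc.1 hy with h | h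
      · have : y ∈ Set.Icc (0:ℝ) 1 := ⟨le_trans ht'.1 (le_of_lt h.1), le_trans h.2 ht.2⟩
        simpa [Real.norm_eq_abs] using KG_abs_le x n y this
      · have : y ∈ Set.Icc (0:ℝ) 1 := ⟨le_trans ht.1 (le_of_lt h.1), le_trans h.2 ht'.2⟩
        simpa [Real.norm_eq_abs] using KG_abs_le x n y this
    rw [Real.coe_toNNReal _ (by positivity)]
    calc |KD x n t - KD x n t'| = ‖∫ y in t'..t, KG x n y‖ := by
            rw [h1, Real.norm_eq_abs]
      _ ≤ 2*n * |t - t'| := h2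
  exact hlip.continuousOn

end KritzAux

namespace KritzAux

variable (x : ℕ → ℝ)

lemma const_lin_integral (c d a b : ℝ) :
    ∫ y in a..b, (c - d * y) = (b - a) * c - d * ((b^2 - a^2)/2) := by
  rw [intervalIntegral.integral_sub (by apply Continuous.intervalIntegrable; continuity)
      (by apply Continuous.intervalIntegrable; continuity)]
  rw [intervalIntegral.integral_const, intervalIntegral.integral_const_mul, integral_id,
    smul_eq_mul]

lemma chord (n : ℕ) {a r b : ℝ} (har : a ≤ r) (hrb : r ≤ b) :
    (b - a) * KD x n r ≤ (b - r) * KD x n a + (r - a) * KD x n b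
      + (n : ℝ)/2 * (b - r) * (r - a) * (b - a) := by
  have h1 : KD x n r - KD x n a ≤ (r - a) * KF x n r - n * ((r^2 - a^2)/2) := by
    rw [KD_sub, ← const_lin_integral (KF x n r) n a r]
    apply intervalIntegral.integral_mono_on har (KG_intble x n a r)
      (by apply Continuous.intervalIntegrable; continuity)
    intro y hy
    have := KF_mono x n hy.2
    unfold KG; linarith
  have h2 : (b - r) * KF x n r - n * ((b^2 - r^2)/2) ≤ KD x n b - KD x n r := by
    rw [KD_sub, ← const_lin_integral (KF x n r) n r b]
    apply intervalIntegral.integral_mono_on hrb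
      (by apply Continuous.intervalIntegrable; continuity) (KG_intble x n r b)
    intro y hy
    have := KF_mono x n hy.1
    unfold KG; linarith
  nlinarith [mul_le_mul_of_nonneg_left h1 (by linarith : (0:ℝ) ≤ b - r),
    mul_le_mul_of_nonneg_left h2 (by linarith : (0:ℝ) ≤ r - a)]

end KritzAux

namespace KritzAux

lemma seqCount_succ (x : ℕ → ℝ) (n : ℕ) (y : ℝ) :
    (seqCount x (n+1) y : ℝ) = (seqCount x n y : ℝ) + (if x (n+1) ≤ y then (1:ℝ) else 0) := by
  unfold seqCount
  have h : Finset.Icc 1 (n+1) = insert (n+1) (Finset.Icc 1 n) := by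
    rw [← Finset.insert_Icc_right_eq_Icc_add_one (by omega)]
  rw [h, Finset.filter_insert]
  by_cases hx : x (n+1) ≤ y
  · rw [if_pos hx, if_pos hx, Finset.card_insert_of_notMem (by simp)]
    push_cast; ring
  · rw [if_neg hx, if_neg hx]; simp

lemma ind_eq_indicator (z : ℝ) (f : ℝ → ℝ) :
    (fun y => if z ≤ y then f y else 0) = (Set.Ici z).indicator f := by
  ext y; simp [Set.indicator_apply, Set.mem_Ici]

lemma ind_integral {f : ℝ → ℝ} (hf : IntervalIntegrable f volume 0 1)
    {z : ℝ} (hz : z ∈ Set.Icc (0:ℝ) 1) :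
    ∫ y in (0:ℝ)..1, (if z ≤ y then f y else 0) = ∫ y in z..1, f y := by
  obtain ⟨hz0, hz1⟩ := hz
  have hind : IntervalIntegrable (fun y => if z ≤ y then f y else 0) volume 0 1 := by
    rw [ind_eq_indicator]
    rw [intervalIntegrable_iff] at hf ⊢
    exact hf.indicator measurableSet_Ici
  have ha : IntervalIntegrable (fun y => if z ≤ y then f y else 0) volume 0 z :=
    hind.mono_set (by
       rw [Set.uIcc_of_le hz0, Set.uIcc_of_le (le_trans hz0 hz1)]
       exact Set.Icc_subset_Icc le_rfl hz1)
  have hb : IntervalIntegrable (fun y => if z ≤ y then f y else 0) volume z 1 :=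
    hind.mono_set (by
       rw [Set.uIcc_of_le hz1, Set.uIcc_of_le (le_trans hz0 hz1)]
       exact Set.Icc_subset_Icc hz0 le_rfl)
  have hsplit := intervalIntegral.integral_add_adjacent_intervals ha hb
  have h1 : ∫ y in (0:ℝ)..z, (if z ≤ y then f y else 0) = 0 := by
    rw [intervalIntegral.integral_of_le hz0, ind_eq_indicator,
      MeasureTheory.integral_indicator measurableSet_Ici,
      MeasureTheory.Measure.restrict_restrict measurableSet_Ici]
    apply MeasureTheory.setIntegral_measure_zero
    refine measure_mono_null (fun y hy => ?_) (measure_singleton z)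
    have h1 : z ≤ y := hy.1
    have h2 : y ≤ z := hy.2.2
    simp only [Set.mem_singleton_iff]
    linarith
  have h2 : ∫ y in z..1, (if z ≤ y then f y else 0) = ∫ y in z..1, f y := by
    apply intervalIntegral.integral_congr
    intro y hy
    rw [Set.uIcc_of_le hz1] at hy
    simp [hy.1]
  rw [← hsplit, h1, h2, zero_add]

end KritzAux

namespace KritzAux

variable (x : ℕ → ℝ)

lemma KJ_eq (n : ℕ) : KJ x n = ∫ y in (0:ℝ)..1, (1 - y) * KG x n y := by
  classical
  set μ : Measure ℝ := volume.restrict (Set.Ioc (0:ℝ) 1) with hμ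
  haveI : IsFiniteMeasure μ := by
    constructor
    rw [hμ, Measure.restrict_apply MeasurableSet.univ, Set.univ_inter, Real.volume_Ioc]
    exact ENNReal.ofReal_lt_top
  set f : ℝ → ℝ → ℝ := fun t y => if y ≤ t then KG x n y else 0 with hf
  have hmeas : Measurable (Function.uncurry f) := by
    apply Measurable.ite
    · exact measurableSet_le measurable_snd measurable_fst
    · exact ((KF_measurable x n).sub (by fun_prop)).comp measurable_snd
    · exact measurable_const
  have hint : Integrable (Function.uncurry f) (μ.prod μ) := by
    refine Integrable.mono' (integrable_const ((2*n : ℝ))) hmeas.aestronglyMeasurable ?_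
    rw [hμ, Measure.prod_restrict]
    filter_upwards [ae_restrict_mem (measurableSet_Ioc.prod measurableSet_Ioc)] with p hp
    rcases hp with ⟨_, hp2⟩
    have hb := KG_abs_le x n p.2 ⟨le_of_lt hp2.1, hp2.2⟩
    rw [Function.uncurry_apply_pair, hf]
    simp only [Real.norm_eq_abs]
    split
    · exact hb
    · rw [abs_zero]; positivity
  have hswap := MeasureTheory.integral_integral_swap hint
  -- LHS equals KJ
  have hL : (∫ t, ∫ y, f t y ∂μ ∂μ) = KJ x n := by
    rw [hμ]
    have : ∀ t ∈ Set.Ioc (0:ℝ) 1, (∫ y, f t y ∂μ) = KD x n t := by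
      intro t ht
      rw [hμ]
      have hfi : (fun y => f t y) = (Set.Iic t).indicator (KG x n) := by
        ext y; simp [hf, Set.indicator_apply]
      rw [hfi, MeasureTheory.integral_indicator measurableSet_Iic,
        MeasureTheory.Measure.restrict_restrict measurableSet_Iic]
      have hset : Set.Iic t ∩ Set.Ioc 0 1 = Set.Ioc 0 t := by
        ext y
        simp only [Set.mem_inter_iff, Set.mem_Iic, Set.mem_Ioc]
        constructor
        · rintro ⟨h1, h2, h3⟩; exact ⟨h2, h1⟩
        · rintro ⟨h1, h2⟩; exact ⟨h2, h1, le_trans h2 ht.2⟩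
      rw [hset]
      unfold KD
      rw [intervalIntegral.integral_of_le (le_of_lt ht.1)]
    rw [MeasureTheory.setIntegral_congr_fun measurableSet_Ioc this]
    unfold KJ
    rw [intervalIntegral.integral_of_le (by norm_num : (0:ℝ) ≤ 1)]
  -- RHS
  have hR : (∫ y, ∫ t, f t y ∂μ ∂μ) = ∫ y in (0:ℝ)..1, (1 - y) * KG x n y := by
    rw [hμ]
    have : ∀ y ∈ Set.Ioc (0:ℝ) 1, (∫ t, f t y ∂μ) = (1 - y) * KG x n y := by
      intro y hy
      rw [hμ]
      have hfi : (fun t => f t y) = (Set.Ici y).indicator (fun _ => KG x n y) := by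
        ext t; simp [hf, Set.indicator_apply]
      rw [hfi, MeasureTheory.integral_indicator measurableSet_Ici,
        MeasureTheory.Measure.restrict_restrict measurableSet_Ici]
      have hset : Set.Ici y ∩ Set.Ioc 0 1 = Set.Icc y 1 := by
        ext t
        simp only [Set.mem_inter_iff, Set.mem_Ici, Set.mem_Ioc, Set.mem_Icc]
        constructor
        · rintro ⟨h1, _, h3⟩; exact ⟨h1, h3⟩
        · rintro ⟨h1, h2⟩; exact ⟨h1, lt_of_lt_of_le hy.1 h1, h2⟩
      rw [hset, MeasureTheory.setIntegral_const, Real.volume_real_Icc_of_le (by linarith [hy.2] : y ≤ 1), smul_eq_mul]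
    rw [MeasureTheory.setIntegral_congr_fun measurableSet_Ioc this]
    rw [intervalIntegral.integral_of_le (by norm_num : (0:ℝ) ≤ 1)]
  rw [← hL, hswap, hR]

end KritzAux

namespace KritzAux

variable (x : ℕ → ℝ)

lemma KG_measurable (n : ℕ) : Measurable (KG x n) :=
  (KF_measurable x n).sub (by fun_prop)

lemma bdd_intble {f : ℝ → ℝ} (hm : Measurable f) {C : ℝ}
    (hC : ∀ y ∈ Set.Icc (0:ℝ) 1, |f y| ≤ C) : IntervalIntegrable f volume 0 1 := by
  refine (intervalIntegrable_iff_integrableOn_Ioc_of_le (by norm_num)).2 ?_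
  refine Integrable.mono' (integrable_const C) hm.aestronglyMeasurable.restrict ?_
  filter_upwards [ae_restrict_mem measurableSet_Ioc] with y hy
  exact hC y ⟨le_of_lt hy.1, hy.2⟩

lemma ind_intble {f : ℝ → ℝ} (hf : IntervalIntegrable f volume 0 1) (z : ℝ) :
    IntervalIntegrable (fun y => if z ≤ y then f y else 0) volume 0 1 := by
  rw [ind_eq_indicator]
  rw [intervalIntegrable_iff] at hf ⊢
  exact hf.indicator measurableSet_Ici

lemma yKG_intble (n : ℕ) : IntervalIntegrable (fun y => y * KG x n y) volume 0 1 := by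
  refine bdd_intble (by
    have := KG_measurable x n
    fun_prop) (C := 2*n) ?_
  intro y hy
  rw [abs_mul]
  have h1 := KG_abs_le x n y hy
  have h2 : |y| ≤ 1 := by rw [abs_le]; constructor <;> linarith [hy.1, hy.2]
  nlinarith [abs_nonneg (KG x n y), abs_nonneg y]

lemma int_yKG (n : ℕ) : ∫ y in (0:ℝ)..1, y * KG x n y = KD x n 1 - KJ x n := by
  have h1 : KJ x n = ∫ y in (0:ℝ)..1, (KG x n y - y * KG x n y) := by
    rw [KJ_eq]
    apply intervalIntegral.integral_congr
    intro y _
    ring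
  rw [intervalIntegral.integral_sub (KG_intble x n 0 1) (yKG_intble x n)] at h1
  have h2 : ∫ y in (0:ℝ)..1, KG x n y = KD x n 1 := rfl
  rw [h2] at h1
  linarith

lemma GmY_sq_intble (n : ℕ) :
    IntervalIntegrable (fun y => (KG x n y - y)^2) volume 0 1 := by
  refine bdd_intble (by have := KG_measurable x n; fun_prop) (C := (2*n+1)^2) ?_
  intro y hy
  have h1 := KG_abs_le x n y hy
  have h2 : |y| ≤ 1 := by rw [abs_le]; constructor <;> linarith [hy.1, hy.2]
  have h3 : |KG x n y - y| ≤ 2*n + 1 := by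
    calc |KG x n y - y| ≤ |KG x n y| + |y| := abs_sub _ _
      _ ≤ 2*n + 1 := by linarith
  calc |(KG x n y - y)^2| = |KG x n y - y|^2 := by rw [abs_pow]
    _ ≤ (2*n+1)^2 := by nlinarith [abs_nonneg (KG x n y - y)]

lemma int_GmY_sq (n : ℕ) :
    ∫ y in (0:ℝ)..1, (KG x n y - y)^2
      = KL x n - 2*(KD x n 1 - KJ x n) + 1/3 := by
  have hexp : ∫ y in (0:ℝ)..1, (KG x n y - y)^2
      = ∫ y in (0:ℝ)..1, ((KG x n y)^2 - 2*(y * KG x n y) + y^2) := by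
    apply intervalIntegral.integral_congr
    intro y _; ring
  rw [hexp]
  rw [intervalIntegral.integral_add (((KG_sq_intble x n).sub
      ((yKG_intble x n).const_mul 2)))
    (by apply Continuous.intervalIntegrable; continuity)]
  rw [intervalIntegral.integral_sub (KG_sq_intble x n) ((yKG_intble x n).const_mul 2)]
  rw [intervalIntegral.integral_const_mul, int_yKG]
  have h3 : ∫ y in (0:ℝ)..1, y^2 = 1/3 := by
    rw [integral_pow]; norm_num
  rw [h3]
  unfold KL
  ring

end KritzAux

namespace KritzAux

variable (x : ℕ → ℝ)

lemma Ez_eq (n : ℕ) {z : ℝ} (hz : z ∈ Set.Icc (0:ℝ) 1) :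
    ∫ y in (0:ℝ)..1, (KG x n y + ((if z ≤ y then (1:ℝ) else 0) - y))^2
      = KL x n + 2*(KJ x n - KD x n z) + (1/3 - z + z^2) := by
  have h2g : IntervalIntegrable (fun y => 2 * KG x n y + (1 - 2*y)) volume 0 1 :=
    ((KG_intble x n 0 1).const_mul 2).add
      (by apply Continuous.intervalIntegrable; continuity)
  have hpt : ∀ y : ℝ, (KG x n y + ((if z ≤ y then (1:ℝ) else 0) - y))^2
      = (KG x n y - y)^2 + (if z ≤ y then 2 * KG x n y + (1 - 2*y) else 0) := by
    intro y
    by_cases h : z ≤ y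
    · rw [if_pos h, if_pos h]; ring
    · rw [if_neg h, if_neg h]; ring
  have hsplit : ∫ y in (0:ℝ)..1, (KG x n y + ((if z ≤ y then (1:ℝ) else 0) - y))^2
      = (∫ y in (0:ℝ)..1, (KG x n y - y)^2)
        + ∫ y in (0:ℝ)..1, (if z ≤ y then 2 * KG x n y + (1 - 2*y) else 0) := by
    rw [← intervalIntegral.integral_add (GmY_sq_intble x n) (ind_intble h2g z)]
    apply intervalIntegral.integral_congr
    intro y _
    exact hpt y
  rw [hsplit, int_GmY_sq, ind_integral h2g hz]
  have htail : ∫ y in z..1, (2 * KG x n y + (1 - 2*y))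
      = 2 * (KD x n 1 - KD x n z) + ((1-z) - 2*((1-z^2)/2)) := by
    rw [intervalIntegral.integral_add ((KG_intble x n z 1).const_mul 2)
      (by apply Continuous.intervalIntegrable; continuity)]
    rw [intervalIntegral.integral_const_mul, ← KD_sub]
    have := const_lin_integral 1 2 z 1
    simp only [one_pow] at this
    rw [this]
    ring
  rw [htail]
  ring

lemma step (n₀ : ℕ) (hK : IsKritzinger x n₀) {n : ℕ} (hn : n₀ ≤ n) {z : ℝ}
    (hz : z ∈ Set.Icc (0:ℝ) 1) :
    KL x (n+1) ≤ KL x n + 2*(KJ x n - KD x n z) + (1/3 - z + z^2) := by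
  have hmin := hK.2 n hn z hz
  have hLHS : KL x (n+1) = ∫ y in (0:ℝ)..1,
      ((seqCount x n y : ℝ) + (if x (n + 1) ≤ y then (1:ℝ) else 0)
        - ((n : ℝ) + 1) * y) ^ 2 := by
    unfold KL
    apply intervalIntegral.integral_congr
    intro y _
    show ((seqCount x (n+1) y : ℝ) - ((n+1 : ℕ) : ℝ) * y) ^ 2 = _
    rw [seqCount_succ]
    push_cast
    ring
  have hRHS : (∫ y in (0:ℝ)..1,
      ((seqCount x n y : ℝ) + (if z ≤ y then (1:ℝ) else 0)
        - ((n : ℝ) + 1) * y) ^ 2)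
      = KL x n + 2*(KJ x n - KD x n z) + (1/3 - z + z^2) := by
    rw [← Ez_eq x n hz]
    apply intervalIntegral.integral_congr
    intro y _
    unfold KG KF
    ring
  rw [hLHS]
  rw [hRHS] at hmin
  exact hmin

end KritzAux

namespace KritzAux

variable (x : ℕ → ℝ)

lemma exists_max (n : ℕ) : ∃ t ∈ Set.Icc (0:ℝ) 1,
    ∀ u ∈ Set.Icc (0:ℝ) 1, KD x n u ≤ KD x n t := by
  obtain ⟨t, ht, hmax⟩ := isCompact_Icc.exists_isMaxOn (Set.nonempty_Icc.2 (by norm_num))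
    (KD_continuousOn x n)
  exact ⟨t, ht, fun u hu => hmax hu⟩

lemma exists_min (n : ℕ) : ∃ t ∈ Set.Icc (0:ℝ) 1,
    ∀ u ∈ Set.Icc (0:ℝ) 1, KD x n t ≤ KD x n u := by
  obtain ⟨t, ht, hmin⟩ := isCompact_Icc.exists_isMinOn (Set.nonempty_Icc.2 (by norm_num))
    (KD_continuousOn x n)
  exact ⟨t, ht, fun u hu => hmin hu⟩

noncomputable def tmax (n : ℕ) : ℝ := (exists_max x n).choose

lemma tmax_mem (n : ℕ) : tmax x n ∈ Set.Icc (0:ℝ) 1 := (exists_max x n).choose_spec.1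

lemma tmax_is (n : ℕ) : ∀ u ∈ Set.Icc (0:ℝ) 1, KD x n u ≤ KD x n (tmax x n) :=
  (exists_max x n).choose_spec.2

noncomputable def eps (n : ℕ) : ℝ := KD x n (tmax x n) - KJ x n

lemma KD_intble (n : ℕ) : IntervalIntegrable (KD x n) volume 0 1 := by
  apply ContinuousOn.intervalIntegrable
  rw [Set.uIcc_of_le (by norm_num : (0:ℝ) ≤ 1)]
  exact KD_continuousOn x n

lemma eps_nonneg (n : ℕ) : 0 ≤ eps x n := by
  unfold eps
  have h : KJ x n ≤ KD x n (tmax x n) := by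
    unfold KJ
    calc ∫ t in (0:ℝ)..1, KD x n t ≤ ∫ _t in (0:ℝ)..1, KD x n (tmax x n) := by
          apply intervalIntegral.integral_mono_on (by norm_num) (KD_intble x n)
            (by apply Continuous.intervalIntegrable; continuity)
          exact tmax_is x n
      _ = KD x n (tmax x n) := by simp
  linarith

lemma KL_nonneg (n : ℕ) : 0 ≤ KL x n := by
  unfold KL
  apply intervalIntegral.integral_nonneg (by norm_num)
  intro y _
  positivity

lemma step' (n₀ : ℕ) (hK : IsKritzinger x n₀) {n : ℕ} (hn : n₀ ≤ n) :
    KL x (n+1) ≤ KL x n + 1/3 - 2 * eps x n := by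
  have h := step x n₀ hK hn (tmax_mem x n)
  have hz := tmax_mem x n
  have hzz : (1/3 - tmax x n + (tmax x n)^2 : ℝ) ≤ 1/3 := by
    nlinarith [hz.1, hz.2]
  unfold eps
  linarith

lemma tele (n₀ : ℕ) (hK : IsKritzinger x n₀) :
    ∀ m, n₀ ≤ m → KL x m + 2 * ∑ n ∈ Finset.Ico n₀ m, eps x n
      ≤ KL x n₀ + (m - n₀ : ℕ) * (1/3 : ℝ) := by
  intro m hm
  induction m, hm using Nat.le_induction with
  | base => simp
  | succ m hm ih =>
    have hstep := step' x n₀ hK hm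
    rw [Finset.sum_Ico_succ_top hm]
    have hcast : ((m + 1 - n₀ : ℕ) : ℝ) = ((m - n₀ : ℕ) : ℝ) + 1 := by
      push_cast [Nat.sub_add_comm hm]
      ring
    rw [hcast]
    linarith

end KritzAux

namespace KritzAux

variable (x : ℕ → ℝ)

lemma pigeon (n₀ : ℕ) (hK : IsKritzinger x n₀) {N : ℕ} (hN1 : 1 ≤ N)
    (hNn₀ : n₀ ≤ N) (hNL : KL x n₀ ≤ (N : ℝ) / 3) :
    ∃ n, N ≤ n ∧ n < 100*N ∧ eps x n ≤ 1/5 := by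
  by_contra hc
  push_neg at hc
  have h100 : n₀ ≤ 100*N := le_trans hNn₀ (by omega)
  have htele := tele x n₀ hK (100*N) h100
  have hsub : ∑ n ∈ Finset.Ico N (100*N), eps x n
      ≤ ∑ n ∈ Finset.Ico n₀ (100*N), eps x n :=
    Finset.sum_le_sum_of_subset_of_nonneg (Finset.Ico_subset_Ico hNn₀ le_rfl)
      (fun i _ _ => eps_nonneg x i)
  have hne : (Finset.Ico N (100*N)).Nonempty := by
    rw [Finset.nonempty_Ico]; omega
  have hlow : ((Finset.Ico N (100*N)).card : ℝ) * (1/5)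
      < ∑ n ∈ Finset.Ico N (100*N), eps x n := by
    have := Finset.sum_lt_sum_of_nonempty hne
      (f := fun _ => (1/5 : ℝ)) (g := eps x) (fun i hi => by
        rw [Finset.mem_Ico] at hi
        exact hc i hi.1 hi.2)
    simpa [Finset.sum_const, nsmul_eq_mul] using this
  have hcard : ((Finset.Ico N (100*N)).card : ℝ) = 99*N := by
    rw [Nat.card_Ico]
    have : 100*N - N = 99*N := by omega
    rw [this]; push_cast; ring
  have hmn : ((100*N - n₀ : ℕ) : ℝ) ≤ 100*(N:ℝ) := by
    have h1 : (100*N - n₀ : ℕ) ≤ 100*N := Nat.sub_le _ _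
    calc ((100*N - n₀ : ℕ) : ℝ) ≤ ((100*N : ℕ) : ℝ) := by exact_mod_cast h1
      _ = 100*(N:ℝ) := by push_cast; ring
  have hKL0 := KL_nonneg x (100*N)
  have hN1' : (1:ℝ) ≤ N := by exact_mod_cast hN1
  rw [hcard] at hlow
  nlinarith [htele, hsub, hlow, hmn, hKL0, hNL]

end KritzAux

namespace KritzAux

variable (x : ℕ → ℝ)

lemma eps_ge_int (n : ℕ) {a b : ℝ} (ha : 0 ≤ a) (hb : b ≤ 1) (hab : a ≤ b)
    (f : ℝ → ℝ) (hf : Continuous f)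
    (hptw : ∀ r ∈ Set.Icc a b, f r ≤ KD x n (tmax x n) - KD x n r) :
    ∫ r in a..b, f r ≤ eps x n := by
  set s := KD x n (tmax x n) with hs
  have heq : eps x n = ∫ t in (0:ℝ)..1, (s - KD x n t) := by
    unfold eps KJ
    rw [intervalIntegral.integral_sub (by apply Continuous.intervalIntegrable; continuity)
      (KD_intble x n)]
    simp [hs]
  have hab1 : a ≤ 1 := le_trans hab hb
  have hb0 : 0 ≤ b := le_trans ha hab
  have hint : ∀ c d : ℝ, c ∈ Set.Icc (0:ℝ) 1 → d ∈ Set.Icc (0:ℝ) 1 →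
      IntervalIntegrable (fun t => s - KD x n t) volume c d := by
    intro c d hc hd
    refine IntervalIntegrable.sub (by apply Continuous.intervalIntegrable; continuity) ?_
    apply (KD_intble x n).mono_set
    rw [show Set.Icc (0:ℝ) 1 = Set.uIcc 0 1 from (Set.uIcc_of_le (by norm_num)).symm] at hc hd
    exact Set.uIcc_subset_uIcc hc hd
  have hnn : ∀ t ∈ Set.Icc (0:ℝ) 1, 0 ≤ s - KD x n t := by
    intro t ht
    have := tmax_is x n t ht
    linarith
  have hsplit1 := intervalIntegral.integral_add_adjacent_intervals
    (hint 0 a ⟨le_rfl, by norm_num⟩ ⟨ha, hab1⟩) (hint a b ⟨ha, hab1⟩ ⟨hb0, hb⟩)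
  have hsplit2 := intervalIntegral.integral_add_adjacent_intervals
    ((hint 0 a ⟨le_rfl, by norm_num⟩ ⟨ha, hab1⟩).trans (hint a b ⟨ha, hab1⟩ ⟨hb0, hb⟩))
    (hint b 1 ⟨hb0, hb⟩ ⟨by norm_num, le_rfl⟩)
  have h0a : 0 ≤ ∫ t in (0:ℝ)..a, (s - KD x n t) := by
    apply intervalIntegral.integral_nonneg ha
    intro t ht
    exact hnn t ⟨ht.1, le_trans ht.2 hab1⟩
  have hb1 : 0 ≤ ∫ t in b..1, (s - KD x n t) := by
    apply intervalIntegral.integral_nonneg hb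
    intro t ht
    exact hnn t ⟨le_trans hb0 ht.1, ht.2⟩
  have hmid : ∫ r in a..b, f r ≤ ∫ t in a..b, (s - KD x n t) := by
    apply intervalIntegral.integral_mono_on hab (hf.intervalIntegrable a b)
      (hint a b ⟨ha, hab1⟩ ⟨hb0, hb⟩)
    exact hptw
  rw [heq, ← hsplit2, ← hsplit1]
  linarith

end KritzAux

namespace KritzAux

variable (x : ℕ → ℝ)

set_option maxHeartbeats 2000000 in
lemma final_bound (n : ℕ) (hn : 1 ≤ n) (heps : eps x n ≤ 1/5) :
    ∀ t ∈ Set.Icc (0:ℝ) 1, |KD x n t| ≤ 2 * (n:ℝ) ^ ((1:ℝ)/3) := by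
  have hnpos : (0:ℝ) < n := by exact_mod_cast hn
  have hn1 : (1:ℝ) ≤ n := by exact_mod_cast hn
  set s := KD x n (tmax x n) with hs
  obtain ⟨t₀, ht₀, hmin⟩ := exists_min x n
  set H := s - KD x n t₀ with hHdef
  have hs0 : 0 ≤ s := by
    have := tmax_is x n 0 ⟨le_rfl, by norm_num⟩
    rw [KD_zero] at this
    exact this
  have ht₀neg : KD x n t₀ ≤ 0 := by
    have := hmin 0 ⟨le_rfl, by norm_num⟩
    rw [KD_zero] at this
    exact this
  have hsH : s ≤ H := by rw [hHdef]; linarith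
  have habs : ∀ t ∈ Set.Icc (0:ℝ) 1, |KD x n t| ≤ H := by
    intro t ht
    rw [abs_le]
    constructor
    · have := hmin t ht; rw [hHdef] at *; linarith
    · have := tmax_is x n t ht; linarith
  have hrpow1 : (1:ℝ) ≤ (n:ℝ) ^ ((1:ℝ)/3) := by
    calc (1:ℝ) = (1:ℝ) ^ ((1:ℝ)/3) := (Real.one_rpow _).symm
      _ ≤ (n:ℝ) ^ ((1:ℝ)/3) := Real.rpow_le_rpow (by norm_num) hn1 (by norm_num)
  set M := 2 * (n:ℝ) ^ ((1:ℝ)/3) with hM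
  have hMpos : 0 < M := by rw [hM]; linarith
  suffices hHle : H ≤ M by
    intro t ht
    exact le_trans (habs t ht) hHle
  by_contra hcon
  push_neg at hcon
  have hHpos : 0 < H := lt_trans hMpos hcon
  set δ := min (1/2 : ℝ) (Real.sqrt (H/n)) with hδ
  have hδpos : 0 < δ :=
    lt_min (by norm_num) (Real.sqrt_pos.2 (div_pos hHpos hnpos))
  have hδhalf : δ ≤ 1/2 := min_le_left _ _
  have hδsq : (n:ℝ) * δ^2 ≤ H := by
    have h1 : δ ≤ Real.sqrt (H/n) := min_le_right _ _
    have h2 : δ^2 ≤ H/n := by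
      rw [← Real.sq_sqrt (le_of_lt (div_pos hHpos hnpos))]
      exact pow_le_pow_left₀ (le_of_lt hδpos) h1 2
    have h3 := mul_le_mul_of_nonneg_left h2 (le_of_lt hnpos)
    calc (n:ℝ) * δ^2 ≤ (n:ℝ) * (H/n) := h3
      _ = H := by field_simp
  have hkey : δ * H / 4 ≤ eps x n := by
    rcases le_total t₀ (1/2 : ℝ) with hcase | hcase
    · -- right interval [t₀, t₀ + δ]
      have hb1 : t₀ + δ ≤ 1 := by linarith
      have hptw : ∀ r ∈ Set.Icc t₀ (t₀ + δ),
          (t₀ + δ - r) * (H / (2*δ)) ≤ s - KD x n r := by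
        intro r hr
        have hch := chord x n hr.1 hr.2
        have hDb : KD x n (t₀ + δ) ≤ s :=
          tmax_is x n (t₀ + δ) ⟨by linarith [ht₀.1, le_of_lt hδpos], hb1⟩
        have hKDt₀ : KD x n t₀ = s - H := by rw [hHdef]; ring
        have hr1 : 0 ≤ r - t₀ := by linarith [hr.1]
        have hr2 : r - t₀ ≤ δ := by linarith [hr.2]
        have hr3 : 0 ≤ t₀ + δ - r := by linarith [hr.2]
        have h1 : (t₀ + δ - r) * (H - n*δ^2/2) ≤ δ * (s - KD x n r) := by
          nlinarith [mul_le_mul_of_nonneg_left hDb hr1,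
            mul_le_mul_of_nonneg_left hr2 (mul_nonneg (by positivity : (0:ℝ) ≤ (n:ℝ)/2) hr3)]
        have h2 : (t₀ + δ - r) * (H/2) ≤ (t₀ + δ - r) * (H - n*δ^2/2) := by
          apply mul_le_mul_of_nonneg_left _ hr3
          linarith
        rw [show H / (2*δ) = (H/2)/δ by ring, mul_div_assoc', div_le_iff₀ hδpos]
        nlinarith [h1, h2]
      have happ := eps_ge_int x n ht₀.1 hb1 (by linarith)
        (fun r => (t₀ + δ - r) * (H / (2*δ)))
        ((continuous_const.sub continuous_id).mul continuous_const) hptw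
      have hcalc : ∫ r in t₀..(t₀ + δ), (t₀ + δ - r) * (H / (2*δ)) = δ * H / 4 := by
        rw [intervalIntegral.integral_mul_const]
        have := const_lin_integral (t₀ + δ) 1 t₀ (t₀ + δ)
        simp only [one_mul] at this
        rw [this]
        field_simp
        ring
      rw [hcalc] at happ
      exact happ
    · -- left interval [t₀ - δ, t₀]
      have ha0 : 0 ≤ t₀ - δ := by linarith
      have hptw : ∀ r ∈ Set.Icc (t₀ - δ) t₀,
          (r - (t₀ - δ)) * (H / (2*δ)) ≤ s - KD x n r := by
        intro r hr
        have hch := chord x n hr.1 hr.2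
        have hDa : KD x n (t₀ - δ) ≤ s :=
          tmax_is x n (t₀ - δ) ⟨ha0, by linarith [ht₀.2, le_of_lt hδpos]⟩
        have hKDt₀ : KD x n t₀ = s - H := by rw [hHdef]; ring
        have hr1 : 0 ≤ t₀ - r := by linarith [hr.2]
        have hr2 : t₀ - r ≤ δ := by linarith [hr.1]
        have hr3 : 0 ≤ r - (t₀ - δ) := by linarith [hr.1]
        have h1 : (r - (t₀ - δ)) * (H - n*δ^2/2) ≤ δ * (s - KD x n r) := by
          nlinarith [mul_le_mul_of_nonneg_left hDa hr1,
            mul_le_mul_of_nonneg_left hr2 (mul_nonneg (by positivity : (0:ℝ) ≤ (n:ℝ)/2) hr3)]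
        have h2 : (r - (t₀ - δ)) * (H/2) ≤ (r - (t₀ - δ)) * (H - n*δ^2/2) := by
          apply mul_le_mul_of_nonneg_left _ hr3
          linarith
        rw [show H / (2*δ) = (H/2)/δ by ring, mul_div_assoc', div_le_iff₀ hδpos]
        nlinarith [h1, h2]
      have happ := eps_ge_int x n ha0 ht₀.2 (by linarith)
        (fun r => (r - (t₀ - δ)) * (H / (2*δ)))
        ((continuous_id.sub continuous_const).mul continuous_const) hptw
      have hcalc : ∫ r in (t₀ - δ)..t₀, (r - (t₀ - δ)) * (H / (2*δ)) = δ * H / 4 := by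
        rw [intervalIntegral.integral_mul_const]
        have h0 : ∫ r in (t₀ - δ)..t₀, (r - (t₀ - δ))
            = - ∫ r in (t₀ - δ)..t₀, ((t₀ - δ) - 1 * r) := by
          rw [← intervalIntegral.integral_neg]
          apply intervalIntegral.integral_congr
          intro r _
          ring
        rw [h0, const_lin_integral]
        field_simp
        ring
      rw [hcalc] at happ
      exact happ
  -- now derive the contradiction
  have hepsnn := eps_nonneg x n
  rcases min_cases (1/2:ℝ) (Real.sqrt (H/n)) with ⟨hδeq, _⟩ | ⟨hδeq, _⟩
  · -- δ = 1/2 : eps ≥ H/8 > M/8 ≥ 1/4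
    rw [hδ, hδeq] at hkey
    have : M / 8 < eps x n := by nlinarith
    rw [hM] at this
    nlinarith
  · -- δ = sqrt(H/n)
    rw [hδ, hδeq] at hkey
    have hsqrtsq : (Real.sqrt (H/n))^2 = H/n :=
      Real.sq_sqrt (le_of_lt (div_pos hHpos hnpos))
    have hsqpos : 0 ≤ Real.sqrt (H/n) * H / 4 := by positivity
    have hsq := pow_le_pow_left₀ hsqpos hkey 2
    have hM3 : M^3 = 8 * n := by
      rw [hM, mul_pow]
      have : ((n:ℝ) ^ ((1:ℝ)/3))^(3:ℕ) = (n:ℝ) := by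
        rw [← Real.rpow_natCast ((n:ℝ) ^ ((1:ℝ)/3)) 3, ← Real.rpow_mul (le_of_lt hnpos)]
        norm_num
      rw [this]
      norm_num
    have hH3 : M^3 < H^3 := pow_lt_pow_left₀ hcon (le_of_lt hMpos) (by norm_num)
    rw [hM3] at hH3
    have hexp : (Real.sqrt (H/n) * H / 4)^2 = H^3 / (16*n) := by
      rw [div_pow, mul_pow, hsqrtsq]
      field_simp
      ring
    rw [hexp] at hsq
    have h16 : H^3 ≤ (eps x n)^2 * (16*n) := by
      rw [← div_le_iff₀ (by positivity : (0:ℝ) < 16*n)]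
      exact hsq
    have he2 : (eps x n)^2 ≤ 1/25 := by nlinarith
    nlinarith [h16, hH3, hnpos, he2]

end KritzAux


theorem stmt_16 (x : ℕ → ℝ) (n₀ : ℕ) (hn₀ : 1 ≤ n₀)
    (hK : IsKritzinger x n₀) :
    ∃ N₀ : ℕ, ∀ N : ℕ, N₀ ≤ N → ∃ n : ℕ, N ≤ n ∧ n ≤ 100 * N ∧
      ∀ t ∈ Set.Icc (0 : ℝ) 1,
        |∫ y in (0:ℝ)..t, ((seqCount x n y : ℝ) - (n : ℝ) * y)|
          ≤ 2 * (n : ℝ) ^ ((1 : ℝ) / 3) := by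
  classical
  refine ⟨n₀ + 3 * (Nat.ceil (KritzAux.KL x n₀)) + 3, fun N hN => ?_⟩
  have hN1 : 1 ≤ N := by omega
  have hNn₀ : n₀ ≤ N := by omega
  have hNL : KritzAux.KL x n₀ ≤ (N : ℝ) / 3 := by
    have h1 : KritzAux.KL x n₀ ≤ (Nat.ceil (KritzAux.KL x n₀) : ℝ) := Nat.le_ceil _
    have h2 : (3 * (Nat.ceil (KritzAux.KL x n₀)) + 3 : ℕ) ≤ N := by omega
    have h3 : ((3 * (Nat.ceil (KritzAux.KL x n₀)) + 3 : ℕ) : ℝ) ≤ (N : ℝ) := by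
      exact_mod_cast h2
    push_cast at h3
    linarith
  obtain ⟨n, hn1, hn2, hn3⟩ := KritzAux.pigeon x n₀ hK hN1 hNn₀ hNL
  refine ⟨n, hn1, le_of_lt (lt_of_lt_of_le hn2 le_rfl), ?_⟩
  intro t ht
  have := KritzAux.final_bound x n (le_trans hN1 hn1) hn3 t ht
  exact this
end
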